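/- arXiv:1102.0852 — 8 statements merged into one kernel-verified Lean document; each statement's English description precedes it below -/
import Mathlib

section
/- With the hypotheses of the previous setting (f'' + K f = 0, m'' + G m = 0, same initial data, f > 0 on (0,∞), supp(G − K) ⊂ [a,b] ⊂ [1,∞)), define α(m) := sup_{t≥0} |m(t)/f(t) − 1|, assumed finite. Then for all t ≥ 0, |(m'f − m f')(t)| ≤ (α(m) + 1) · ‖G − K‖₂ · (∫_a^b f(s)⁴ ds)^{1/2}, where ‖G − K‖₂ := (∫_0^∞ |G − K|² ds)^{1/2}. -/
open MeasureTheory Set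

-- Memℒp (L²) for continuous functions on a compact interval
lemma memL2_of_continuous {u : ℝ → ℝ} (hu : Continuous u) (a b : ℝ) :
    MemLp u (ENNReal.ofReal 2) (volume.restrict (Icc a b)) := by
  haveI : IsFiniteMeasure (volume.restrict (Icc a b)) :=
    ⟨by rw [Measure.restrict_apply_univ]; exact measure_Icc_lt_top⟩
  obtain ⟨C, hC⟩ := (isCompact_Icc (a := a) (b := b)).exists_bound_of_continuousOn
    hu.continuousOn
  exact MemLp.of_bound hu.aestronglyMeasurable C
    ((ae_restrict_iff' measurableSet_Icc).mpr (ae_of_all _ fun x hx => hC x hx))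

-- Cauchy–Schwarz for set integrals on Icc
lemma CS_Icc {u v : ℝ → ℝ} (hu : Continuous u) (hv : Continuous v) (a b : ℝ)
    (hu0 : ∀ x, 0 ≤ u x) (hv0 : ∀ x, 0 ≤ v x) :
    ∫ s in Icc a b, u s * v s ≤
      Real.sqrt (∫ s in Icc a b, u s ^ 2) * Real.sqrt (∫ s in Icc a b, v s ^ 2) := by
  have hpq : Real.HolderConjugate 2 2 := Real.HolderConjugate.two_two
  have h := integral_mul_le_Lp_mul_Lq_of_nonneg (μ := volume.restrict (Icc a b)) hpq
    (ae_of_all _ hu0) (ae_of_all _ hv0) (memL2_of_continuous hu a b)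
    (memL2_of_continuous hv a b)
  have e1 : ∀ w : ℝ → ℝ, (∫ s in Icc a b, w s ^ (2:ℝ)) = ∫ s in Icc a b, w s ^ 2 := by
    intro w
    refine integral_congr_ae (ae_of_all _ fun x => ?_)
    norm_num [Real.rpow_natCast]
  rw [e1, e1] at h
  calc ∫ s in Icc a b, u s * v s
      ≤ (∫ s in Icc a b, u s ^ 2) ^ (1/(2:ℝ)) * (∫ s in Icc a b, v s ^ 2) ^ (1/(2:ℝ)) := h
    _ = _ := by rw [← Real.sqrt_eq_rpow, ← Real.sqrt_eq_rpow]

theorem stmt1 (f m K G : ℝ → ℝ) (a b : ℝ) (ha : 1 ≤ a) (hab : a < b) (α : ℝ)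
    (hKc : Continuous K) (hGc : Continuous G)
    (hf : ContDiff ℝ 2 f) (hm : ContDiff ℝ 2 m)
    (hfode : ∀ t ≥ (0:ℝ), deriv (deriv f) t + K t * f t = 0)
    (hmode : ∀ t ≥ (0:ℝ), deriv (deriv m) t + G t * m t = 0)
    (h0 : m 0 = f 0) (h0' : deriv m 0 = deriv f 0)
    (hfpos : ∀ t > (0:ℝ), 0 < f t)
    (hsupp : ∀ t, t < a ∨ b < t → G t = K t)
    (hα : IsLUB {x : ℝ | ∃ t ≥ (0:ℝ), x = |m t / f t - 1|} α) :
    ∀ t ≥ (0:ℝ), |deriv m t * f t - m t * deriv f t| ≤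
      (α + 1) * Real.sqrt (∫ s in Ici (0:ℝ), (G s - K s) ^ 2) *
        Real.sqrt (∫ s in Icc a b, (f s) ^ 4) := by
  intro t ht
  -- basic regularity
  have hm1 : ContDiff ℝ 1 (deriv m) := by
    have := (contDiff_succ_iff_deriv (n := 1)).mp (by exact_mod_cast hm)
    exact this.2.2
  have hf1 : ContDiff ℝ 1 (deriv f) := by
    have := (contDiff_succ_iff_deriv (n := 1)).mp (by exact_mod_cast hf)
    exact this.2.2
  have hdm : ∀ x : ℝ, HasDerivAt m (deriv m x) x := fun x =>
    ((hm.differentiable (by norm_num)) x).hasDerivAt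
  have hdf : ∀ x : ℝ, HasDerivAt f (deriv f x) x := fun x =>
    ((hf.differentiable (by norm_num)) x).hasDerivAt
  have hddm : ∀ x : ℝ, HasDerivAt (deriv m) (deriv (deriv m) x) x := fun x =>
    ((hm1.differentiable one_ne_zero) x).hasDerivAt
  have hddf : ∀ x : ℝ, HasDerivAt (deriv f) (deriv (deriv f) x) x := fun x =>
    ((hf1.differentiable one_ne_zero) x).hasDerivAt
  set W : ℝ → ℝ := fun x => deriv m x * f x - m x * deriv f x with hWdef
  set g : ℝ → ℝ := fun s => (K s - G s) * (m s * f s) with hgdef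
  have hgc : Continuous g := (hKc.sub hGc).mul (hm.continuous.mul hf.continuous)
  have hWd : ∀ x ≥ (0:ℝ), HasDerivAt W (g x) x := by
    intro x hx
    have h1 := (((hddm x).mul (hdf x)).sub ((hdm x).mul (hddf x)))
    have e : deriv (deriv m) x * f x + deriv m x * deriv f x -
        (deriv m x * deriv f x + m x * deriv (deriv f) x) = g x := by
      have e1 := hmode x hx
      have e2 := hfode x hx
      simp only [hgdef]
      linear_combination f x * e1 - m x * e2
    rwa [e] at h1
  have hW0 : W 0 = 0 := by simp only [hWdef, h0, h0']; ring
  have hFTC : W t = ∫ s in (0:ℝ)..t, g s := by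
    have := intervalIntegral.integral_eq_sub_of_hasDerivAt (f := W) (f' := g)
      (a := 0) (b := t)
      (fun x hx => hWd x (by rw [uIcc_of_le ht] at hx; exact hx.1))
      (hgc.intervalIntegrable 0 t)
    rw [this, hW0, sub_zero]
  show |W t| ≤ _
  rw [hFTC, intervalIntegral.integral_of_le ht]
  -- nonnegativity of α
  have hα0 : 0 ≤ α := le_trans (abs_nonneg _) (hα.1 ⟨0, le_rfl, rfl⟩)
  -- the bounding function
  set B : ℝ → ℝ := fun s => (α + 1) * (|G s - K s| * f s ^ 2) with hBdef
  have hBc : Continuous B :=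
    continuous_const.mul (((hGc.sub hKc).abs).mul (hf.continuous.pow 2))
  have hB0 : ∀ s, 0 ≤ B s := fun s => by positivity
  -- pointwise bound
  have hpt : ∀ s ∈ Ioc (0:ℝ) t, |g s| ≤ (Icc a b).indicator B s := by
    intro s hs
    by_cases hsab : s ∈ Icc a b
    · rw [indicator_of_mem hsab]
      have hfs : 0 < f s := hfpos s (lt_of_lt_of_le (by linarith) hsab.1)
      have hms : m s * f s = (m s / f s) * f s ^ 2 := by field_simp
      have hq : |m s / f s - 1| ≤ α := hα.1 ⟨s, le_of_lt hs.1, rfl⟩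
      have hq2 : |m s / f s| ≤ α + 1 := by
        calc |m s / f s| = |(m s / f s - 1) + 1| := by ring_nf
          _ ≤ |m s / f s - 1| + 1 := by
              simpa using abs_add_le (m s / f s - 1) 1
          _ ≤ α + 1 := by linarith
      calc |g s| = |G s - K s| * (|m s / f s| * f s ^ 2) := by
            simp only [hgdef]
            rw [hms, abs_mul, abs_mul, abs_of_nonneg (sq_nonneg (f s)),
              abs_sub_comm]
        _ ≤ |G s - K s| * ((α + 1) * f s ^ 2) := by
            gcongr
        _ = (α + 1) * (|G s - K s| * f s ^ 2) := by ring
    · have hout : s < a ∨ b < s := by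
        rcases lt_or_ge s a with h | h
        · exact Or.inl h
        · exact Or.inr (by by_contra hb; push_neg at hb; exact hsab ⟨h, hb⟩)
      rw [indicator_of_notMem hsab]
      simp [hgdef, hsupp s hout]
  -- integrability on Ioc 0 t
  have hint1 : IntegrableOn (fun s => |g s|) (Ioc 0 t) := hgc.abs.integrableOn_Ioc
  have hint2 : IntegrableOn ((Icc a b).indicator B) (Ioc 0 t) :=
    (hBc.integrableOn_Ioc).indicator measurableSet_Icc
  -- Cauchy–Schwarz piece
  have hCS : ∫ s in Icc a b, |G s - K s| * f s ^ 2 ≤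
      Real.sqrt (∫ s in Icc a b, (G s - K s) ^ 2) *
        Real.sqrt (∫ s in Icc a b, (f s) ^ 4) := by
    have h := CS_Icc (u := fun s => |G s - K s|) (v := fun s => f s ^ 2)
      ((hGc.sub hKc).abs) (hf.continuous.pow 2) a b
      (fun x => abs_nonneg _) (fun x => sq_nonneg _)
    have e1 : (∫ s in Icc a b, |G s - K s| ^ 2) = ∫ s in Icc a b, (G s - K s) ^ 2 := by
      refine integral_congr_ae (ae_of_all _ fun x => ?_)
      simp [sq_abs]
    have e2 : (∫ s in Icc a b, (f s ^ 2) ^ 2) = ∫ s in Icc a b, (f s) ^ 4 := by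
      refine integral_congr_ae (ae_of_all _ fun x => ?_)
      ring
    rwa [e1, e2] at h
  -- the integral of (G-K)^2 over Ici 0 equals that over Icc a b
  have hIci : (∫ s in Ici (0:ℝ), (G s - K s) ^ 2) = ∫ s in Icc a b, (G s - K s) ^ 2 := by
    have hpt2 : ∀ s : ℝ, (G s - K s) ^ 2 =
        (Icc a b).indicator (fun s => (G s - K s) ^ 2) s := by
      intro s
      by_cases hs : s ∈ Icc a b
      · rw [indicator_of_mem hs]
      · rw [indicator_of_notMem hs]
        have hout : s < a ∨ b < s := by
          rcases lt_or_ge s a with h | h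
          · exact Or.inl h
          · exact Or.inr (by by_contra hb; push_neg at hb; exact hs ⟨h, hb⟩)
        rw [hsupp s hout]; ring
    calc (∫ s in Ici (0:ℝ), (G s - K s) ^ 2)
        = ∫ s in Ici (0:ℝ), (Icc a b).indicator (fun s => (G s - K s) ^ 2) s := by
          exact integral_congr_ae (ae_of_all _ fun x => hpt2 x)
      _ = ∫ s in Ici (0:ℝ) ∩ Icc a b, (G s - K s) ^ 2 :=
          setIntegral_indicator measurableSet_Icc
      _ = ∫ s in Icc a b, (G s - K s) ^ 2 := by
          rw [inter_eq_self_of_subset_right]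
          intro x hx
          exact le_trans (by linarith) hx.1
  calc |∫ s in Ioc (0:ℝ) t, g s|
      ≤ ∫ s in Ioc (0:ℝ) t, |g s| := by
        simpa [Real.norm_eq_abs] using
          norm_integral_le_integral_norm (μ := volume.restrict (Ioc (0:ℝ) t)) g
    _ ≤ ∫ s in Ioc (0:ℝ) t, (Icc a b).indicator B s :=
        setIntegral_mono_on hint1 hint2 measurableSet_Ioc hpt
    _ = ∫ s in Ioc (0:ℝ) t ∩ Icc a b, B s := setIntegral_indicator measurableSet_Icc
    _ ≤ ∫ s in Icc a b, B s :=
        setIntegral_mono_set hBc.integrableOn_Icc (ae_of_all _ hB0)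
          (HasSubset.Subset.eventuallyLE inter_subset_right)
    _ = (α + 1) * ∫ s in Icc a b, |G s - K s| * f s ^ 2 := by
        simp only [hBdef]
        rw [MeasureTheory.integral_const_mul]
    _ ≤ (α + 1) * (Real.sqrt (∫ s in Icc a b, (G s - K s) ^ 2) *
          Real.sqrt (∫ s in Icc a b, (f s) ^ 4)) := by
        gcongr
    _ = (α + 1) * Real.sqrt (∫ s in Ici (0:ℝ), (G s - K s) ^ 2) *
          Real.sqrt (∫ s in Icc a b, (f s) ^ 4) := by
        rw [hIci]; ring
end

section
/- Under the same hypotheses, ∫_a^b |G(t)m(t) − K(t)f(t)| dt ≤ (α(m) + 1)·‖G − K‖₂·(∫_a^b f(t)² dt)^{1/2} + α(m)·∫_a^b |f''(t)| dt. -/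
open MeasureTheory Set

theorem stmt3 (f m K G : ℝ → ℝ) (a b : ℝ) (ha : 1 ≤ a) (hab : a < b) (α : ℝ)
    (hKc : Continuous K) (hGc : Continuous G)
    (hf : ContDiff ℝ 2 f) (hm : ContDiff ℝ 2 m)
    (hfode : ∀ t ≥ (0:ℝ), deriv (deriv f) t + K t * f t = 0)
    (hmode : ∀ t ≥ (0:ℝ), deriv (deriv m) t + G t * m t = 0)
    (h0 : m 0 = f 0) (h0' : deriv m 0 = deriv f 0)
    (hfpos : ∀ t > (0:ℝ), 0 < f t)
    (hsupp : ∀ t, t < a ∨ b < t → G t = K t)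
    (hα : IsLUB {x : ℝ | ∃ t ≥ (0:ℝ), x = |m t / f t - 1|} α) :
    ∫ t in Icc a b, |G t * m t - K t * f t| ≤
      (α + 1) * Real.sqrt (∫ t in Ici (0:ℝ), (G t - K t) ^ 2) *
        Real.sqrt (∫ t in Icc a b, (f t) ^ 2) +
      α * ∫ t in Icc a b, |deriv (deriv f) t| := by
  have hfc : Continuous f := hf.continuous
  have hmc : Continuous m := hm.continuous
  have hf1 : ContDiff ℝ 1 (deriv f) := by
    have h := ContDiff.iterate_deriv' (𝕜 := ℝ) 1 1 (f := f) (by exact_mod_cast hf)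
    simpa using h
  have hf''c : Continuous (deriv (deriv f)) := hf1.continuous_deriv le_rfl
  have hα0 : 0 ≤ α := le_trans (abs_nonneg _) (hα.1 ⟨0, le_refl 0, rfl⟩)
  -- pointwise bound on Icc a b
  have hpt : ∀ t ∈ Icc a b, |G t * m t - K t * f t| ≤
      (α + 1) * (|G t - K t| * f t) + α * |deriv (deriv f) t| := by
    intro t ht
    have ht0 : (0:ℝ) < t := lt_of_lt_of_le (by linarith) ht.1
    have hft : 0 < f t := hfpos t ht0
    have hσ : |m t / f t - 1| ≤ α := hα.1 ⟨t, ht0.le, rfl⟩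
    set s := m t / f t - 1 with hs
    have hmfs : m t = f t * (s + 1) := by
      rw [hs]; field_simp; ring
    have hKf : K t * f t = -(deriv (deriv f) t) := by
      have := hfode t ht0.le; linarith
    have key : G t * m t - K t * f t
        = (G t - K t) * f t * (s + 1) - deriv (deriv f) t * s := by
      have : G t * (f t * (s+1)) - K t * f t
          = (G t - K t) * f t * (s+1) + (K t * f t) * s := by ring
      rw [hmfs, this, hKf]; ring
    rw [key]
    calc |(G t - K t) * f t * (s + 1) - deriv (deriv f) t * s|
        ≤ |(G t - K t) * f t * (s + 1)| + |deriv (deriv f) t * s| := abs_sub _ _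
      _ = |G t - K t| * f t * |s + 1| + |deriv (deriv f) t| * |s| := by
          rw [abs_mul, abs_mul, abs_mul, abs_of_pos hft]
      _ ≤ |G t - K t| * f t * (α + 1) + |deriv (deriv f) t| * α := by
          have h1 : |s + 1| ≤ α + 1 := by
            have h2 := abs_add_le s 1
            rw [abs_one] at h2
            linarith
          exact add_le_add (mul_le_mul_of_nonneg_left h1 (by positivity))
            (mul_le_mul_of_nonneg_left hσ (abs_nonneg _))
      _ = (α + 1) * (|G t - K t| * f t) + α * |deriv (deriv f) t| := by ring
  -- integrability on Icc a b
  have hi1 : IntegrableOn (fun t => |G t * m t - K t * f t|) (Icc a b) :=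
    (((hGc.mul hmc).sub (hKc.mul hfc)).abs).integrableOn_Icc
  have hi2 : IntegrableOn (fun t => |G t - K t| * f t) (Icc a b) :=
    (((hGc.sub hKc).abs).mul hfc).integrableOn_Icc
  have hi3 : IntegrableOn (fun t => |deriv (deriv f) t|) (Icc a b) :=
    hf''c.abs.integrableOn_Icc
  have step1 : ∫ t in Icc a b, |G t * m t - K t * f t|
      ≤ ∫ t in Icc a b, ((α + 1) * (|G t - K t| * f t) + α * |deriv (deriv f) t|) :=
    setIntegral_mono_on hi1 ((hi2.const_mul _).add (hi3.const_mul _)) measurableSet_Icc hpt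
  have step2 : ∫ t in Icc a b, ((α + 1) * (|G t - K t| * f t) + α * |deriv (deriv f) t|)
      = (α + 1) * (∫ t in Icc a b, |G t - K t| * f t)
        + α * (∫ t in Icc a b, |deriv (deriv f) t|) := by
    rw [integral_add (hi2.const_mul _) (hi3.const_mul _), integral_const_mul,
      integral_const_mul]
  -- Cauchy-Schwarz
  have hconj : Real.HolderConjugate 2 2 := Real.HolderConjugate.two_two
  haveI : Fact ((volume : Measure ℝ) (Icc a b) < ⊤) := ⟨by
    rw [Real.volume_Icc]; exact ENNReal.ofReal_lt_top⟩
  have hmem : ∀ (g : ℝ → ℝ), Continuous g →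
      MemLp g (ENNReal.ofReal 2) (volume.restrict (Icc a b)) := by
    intro g hg
    obtain ⟨C, hC⟩ := (isCompact_Icc (a := a) (b := b)).exists_bound_of_continuousOn
      hg.continuousOn
    exact MemLp.of_bound hg.aestronglyMeasurable C
      ((ae_restrict_iff' measurableSet_Icc).2 (ae_of_all _ hC))
  have hCS : (∫ t in Icc a b, |G t - K t| * f t)
      ≤ Real.sqrt (∫ t in Icc a b, (G t - K t) ^ 2)
        * Real.sqrt (∫ t in Icc a b, (f t) ^ 2) := by
    have h := integral_mul_norm_le_Lp_mul_Lq (μ := volume.restrict (Icc a b))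
      (f := fun t => G t - K t) (g := f) hconj
      (hmem _ (hGc.sub hKc)) (hmem _ hfc)
    have hL : ∫ t in Icc a b, ‖G t - K t‖ * ‖f t‖
        = ∫ t in Icc a b, |G t - K t| * f t := by
      refine setIntegral_congr_fun measurableSet_Icc (fun t ht => ?_)
      have hft : 0 < f t := hfpos t (lt_of_lt_of_le (by linarith) ht.1)
      simp [Real.norm_eq_abs, abs_of_pos hft]
    have hR1 : ∫ t in Icc a b, ‖G t - K t‖ ^ (2:ℝ) = ∫ t in Icc a b, (G t - K t) ^ 2 := by
      refine setIntegral_congr_fun measurableSet_Icc (fun t _ => ?_)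
      rw [Real.norm_eq_abs, show (2:ℝ) = ((2:ℕ):ℝ) by norm_num, Real.rpow_natCast, sq_abs]
    have hR2 : ∫ t in Icc a b, ‖f t‖ ^ (2:ℝ) = ∫ t in Icc a b, (f t) ^ 2 := by
      refine setIntegral_congr_fun measurableSet_Icc (fun t _ => ?_)
      rw [Real.norm_eq_abs, show (2:ℝ) = ((2:ℕ):ℝ) by norm_num, Real.rpow_natCast, sq_abs]
    rw [hL, hR1, hR2] at h
    calc (∫ t in Icc a b, |G t - K t| * f t)
        ≤ (∫ t in Icc a b, (G t - K t) ^ 2) ^ ((1:ℝ)/2)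
          * (∫ t in Icc a b, (f t) ^ 2) ^ ((1:ℝ)/2) := h
      _ = _ := by rw [Real.sqrt_eq_rpow, Real.sqrt_eq_rpow]
  -- extend to Ici 0
  have hGK2 : IntegrableOn (fun t => (G t - K t) ^ 2) (Ici (0:ℝ)) := by
    have hcs : HasCompactSupport (fun t => (G t - K t) ^ 2) := by
      apply HasCompactSupport.intro (isCompact_Icc (a := a) (b := b))
      intro x hx
      have : x < a ∨ b < x := by
        by_contra h; push_neg at h; exact hx ⟨h.1, h.2⟩
      rw [hsupp x this]; ring
    exact (((hGc.sub hKc).pow 2).integrable_of_hasCompactSupport hcs).integrableOn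
  have hmono : (∫ t in Icc a b, (G t - K t) ^ 2) ≤ ∫ t in Ici (0:ℝ), (G t - K t) ^ 2 := by
    refine setIntegral_mono_set hGK2 (ae_of_all _ (fun t => sq_nonneg _))
      (ae_of_all _ (fun t ht => ?_))
    exact le_trans (by linarith [ht.1] : (0:ℝ) ≤ t) le_rfl
  calc (∫ t in Icc a b, |G t * m t - K t * f t|)
      ≤ (α + 1) * (∫ t in Icc a b, |G t - K t| * f t)
        + α * (∫ t in Icc a b, |deriv (deriv f) t|) := by rw [← step2]; exact step1
    _ ≤ (α + 1) * (Real.sqrt (∫ t in Icc a b, (G t - K t) ^ 2)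
          * Real.sqrt (∫ t in Icc a b, (f t) ^ 2))
        + α * (∫ t in Icc a b, |deriv (deriv f) t|) :=
        add_le_add_left (mul_le_mul_of_nonneg_left hCS
          (by linarith : (0:ℝ) ≤ α + 1)) _
    _ ≤ (α + 1) * (Real.sqrt (∫ t in Ici (0:ℝ), (G t - K t) ^ 2)
          * Real.sqrt (∫ t in Icc a b, (f t) ^ 2))
        + α * (∫ t in Icc a b, |deriv (deriv f) t|) :=
        add_le_add_left (mul_le_mul_of_nonneg_left
          (mul_le_mul_of_nonneg_right (Real.sqrt_le_sqrt hmono) (Real.sqrt_nonneg _))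
          (by linarith : (0:ℝ) ≤ α + 1)) _
    _ = _ := by ring
end

section
/- Under the same hypotheses, ∫_b^∞ |G(t)m(t) − K(t)f(t)| dt ≤ α(m)·∫_b^∞ |f''(t)| dt, and consequently ∫_0^∞ |Gm − Kf| dt ≤ α(m)·∫_a^∞ |f''| dt + (α(m)+1)·‖G − K‖₂·(∫_a^b f² dt)^{1/2}. -/
open MeasureTheory Set

private lemma stmt4_uniq (f m K G : ℝ → ℝ) (a : ℝ)
    (hf : ContDiff ℝ 2 f) (hm : ContDiff ℝ 2 m)
    (hfode : ∀ t ≥ (0:ℝ), deriv (deriv f) t + K t * f t = 0)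
    (hmode : ∀ t ≥ (0:ℝ), deriv (deriv m) t + G t * m t = 0)
    (h0 : m 0 = f 0) (h0' : deriv m 0 = deriv f 0)
    (hKc : Continuous K)
    (hsupp : ∀ t, t < a → G t = K t) :
    ∀ t ∈ Icc (0:ℝ) a, m t = f t := by
  have hdm : Differentiable ℝ m := hm.differentiable (by norm_num)
  have hdf : Differentiable ℝ f := hf.differentiable (by norm_num)
  have hdm' : Differentiable ℝ (deriv m) := by
    have : ContDiff ℝ (1+1) m := by norm_num [hm]
    exact ((contDiff_succ_iff_deriv.mp this).2.2).differentiable one_ne_zero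
  have hdf' : Differentiable ℝ (deriv f) := by
    have : ContDiff ℝ (1+1) f := by norm_num [hf]
    exact ((contDiff_succ_iff_deriv.mp this).2.2).differentiable one_ne_zero
  set v : ℝ → ℝ × ℝ := fun t => (m t - f t, deriv m t - deriv f t) with hv
  obtain ⟨C, hC⟩ := (isCompact_Icc (a := (0:ℝ)) (b := a)).exists_bound_of_continuousOn
    hKc.continuousOn
  set L : ℝ := max 1 C with hL
  have hvd : ∀ t ∈ Ico (0:ℝ) a,
      HasDerivAt v (deriv m t - deriv f t, -(K t * (m t - f t))) t := by
    intro t ht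
    have h1 : HasDerivAt (fun s => m s - f s) (deriv m t - deriv f t) t :=
      ((hdm t).hasDerivAt).sub ((hdf t).hasDerivAt)
    have h2 : HasDerivAt (fun s => deriv m s - deriv f s)
        (deriv (deriv m) t - deriv (deriv f) t) t :=
      ((hdm' t).hasDerivAt).sub ((hdf' t).hasDerivAt)
    have he : deriv (deriv m) t - deriv (deriv f) t = -(K t * (m t - f t)) := by
      have e1 := hmode t ht.1
      have e2 := hfode t ht.1
      rw [hsupp t ht.2] at e1
      linear_combination e1 - e2
    rw [he] at h2
    exact h1.prodMk h2
  have key : ∀ x ∈ Icc (0:ℝ) a, ‖v x‖ ≤ gronwallBound 0 L 0 (x - 0) := by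
    apply norm_le_gronwallBound_of_norm_deriv_right_le
      (f' := fun t => (deriv m t - deriv f t, -(K t * (m t - f t))))
    · exact (((hdm.continuous.sub hdf.continuous).prodMk
        (hdm'.continuous.sub hdf'.continuous)).continuousOn)
    · intro x hx; exact (hvd x hx).hasDerivWithinAt
    · simp [hv, h0, h0', Prod.norm_def]
    · intro x hx
      rw [Prod.norm_def, Prod.norm_def]
      have hx1 : ‖(v x).1‖ ≤ max ‖(v x).1‖ ‖(v x).2‖ := le_max_left _ _
      have hx2 : ‖(v x).2‖ ≤ max ‖(v x).1‖ ‖(v x).2‖ := le_max_right _ _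
      have hCx : ‖K x‖ ≤ C := hC x ⟨hx.1, hx.2.le⟩
      have h1L : (1:ℝ) ≤ L := le_max_left _ _
      have hCL : C ≤ L := le_max_right _ _
      have hn : (0:ℝ) ≤ max ‖(v x).1‖ ‖(v x).2‖ :=
        le_trans (norm_nonneg _) hx1
      apply max_le
      · simp only [norm_neg]
        calc ‖deriv m x - deriv f x‖ = ‖(v x).2‖ := rfl
          _ ≤ max ‖(v x).1‖ ‖(v x).2‖ := hx2
          _ ≤ L * max ‖(v x).1‖ ‖(v x).2‖ := le_mul_of_one_le_left hn h1L
          _ = L * max ‖(v x).1‖ ‖(v x).2‖ + 0 := by ring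
      · calc ‖-(K x * (m x - f x))‖ = ‖K x‖ * ‖(v x).1‖ := by
              rw [norm_neg, norm_mul]
          _ ≤ L * max ‖(v x).1‖ ‖(v x).2‖ := by
              apply mul_le_mul (hCx.trans hCL) hx1 (norm_nonneg _)
                (le_trans zero_le_one h1L)
          _ = L * max ‖(v x).1‖ ‖(v x).2‖ + 0 := by ring
  intro t ht
  have hk := key t ht
  rw [gronwallBound_ε0_δ0] at hk
  have h1 : ‖(v t).1‖ ≤ ‖v t‖ := norm_fst_le _
  have h2 : |m t - f t| ≤ 0 := le_trans h1 hk
  have h3 := abs_nonpos_iff.mp h2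
  linarith

private lemma stmt4_cs (u w : ℝ → ℝ) (a b : ℝ) (hu : Continuous u) (hw : Continuous w)
    (hu0 : ∀ t ∈ Icc a b, 0 ≤ u t) (hw0 : ∀ t ∈ Icc a b, 0 ≤ w t) :
    ∫ t in Icc a b, u t * w t ≤
      Real.sqrt (∫ t in Icc a b, (u t)^2) * Real.sqrt (∫ t in Icc a b, (w t)^2) := by
  have hpq : Real.HolderConjugate 2 2 := by rw [Real.holderConjugate_iff]; norm_num
  have h2 : ENNReal.ofReal (2:ℝ) = 2 := by norm_num
  have hmu : MemLp u 2 (volume.restrict (Icc a b)) := by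
    rw [memLp_two_iff_integrable_sq hu.aestronglyMeasurable.restrict]
    exact (hu.pow 2).integrableOn_Icc
  have hmw : MemLp w 2 (volume.restrict (Icc a b)) := by
    rw [memLp_two_iff_integrable_sq hw.aestronglyMeasurable.restrict]
    exact (hw.pow 2).integrableOn_Icc
  have := integral_mul_le_Lp_mul_Lq_of_nonneg hpq
    ((ae_restrict_iff' measurableSet_Icc).mpr (ae_of_all _ hu0))
    ((ae_restrict_iff' measurableSet_Icc).mpr (ae_of_all _ hw0))
    (h2 ▸ hmu) (h2 ▸ hmw)
  rw [Real.sqrt_eq_rpow, Real.sqrt_eq_rpow]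
  have e1 : ∀ x : ℝ, x ^ (2:ℝ) = x ^ (2:ℕ) := fun x => by
    rw [show ((2:ℝ) = ((2:ℕ):ℝ)) by norm_num, Real.rpow_natCast]
  simp_rw [e1] at this
  exact this

theorem stmt4 (f m K G : ℝ → ℝ) (a b : ℝ) (ha : 1 ≤ a) (hab : a < b) (α : ℝ)
    (hKc : Continuous K) (hGc : Continuous G)
    (hf : ContDiff ℝ 2 f) (hm : ContDiff ℝ 2 m)
    (hfode : ∀ t ≥ (0:ℝ), deriv (deriv f) t + K t * f t = 0)
    (hmode : ∀ t ≥ (0:ℝ), deriv (deriv m) t + G t * m t = 0)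
    (h0 : m 0 = f 0) (h0' : deriv m 0 = deriv f 0)
    (hfpos : ∀ t > (0:ℝ), 0 < f t)
    (hsupp : ∀ t, t < a ∨ b < t → G t = K t)
    (hf'' : IntegrableOn (fun t => |deriv (deriv f) t|) (Ici (0:ℝ)))
    (hα : IsLUB {x : ℝ | ∃ t ≥ (0:ℝ), x = |m t / f t - 1|} α) :
    (∫ t in Ici b, |G t * m t - K t * f t| ≤ α * ∫ t in Ici b, |deriv (deriv f) t|) ∧
    (∫ t in Ici (0:ℝ), |G t * m t - K t * f t| ≤
      α * (∫ t in Ici a, |deriv (deriv f) t|) +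
      (α + 1) * Real.sqrt (∫ t in Ici (0:ℝ), (G t - K t) ^ 2) *
        Real.sqrt (∫ t in Icc a b, (f t) ^ 2)) := by
  have h0a : (0:ℝ) < a := lt_of_lt_of_le one_pos ha
  have h0b : (0:ℝ) < b := h0a.trans hab
  have hfc : Continuous f := hf.continuous
  have hmc : Continuous m := hm.continuous
  have hub : ∀ t, 0 ≤ t → |m t / f t - 1| ≤ α := fun t ht => hα.1 ⟨t, ht, rfl⟩
  have hα0 : 0 ≤ α := le_trans (abs_nonneg _) (hub 0 le_rfl)
  have hclosed : IsClosed {t : ℝ | G t = K t} := isClosed_eq hGc hKc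
  have hGKa : ∀ t, t ≤ a → G t = K t := by
    intro t ht
    have hsub : Iio a ⊆ {t | G t = K t} := fun s hs => hsupp s (Or.inl hs)
    have hcl := closure_minimal hsub hclosed
    rw [closure_Iio] at hcl
    exact hcl ht
  have hGKb : ∀ t, b ≤ t → G t = K t := by
    intro t ht
    have hsub : Ioi b ⊆ {t | G t = K t} := fun s hs => hsupp s (Or.inr hs)
    have hcl := closure_minimal hsub hclosed
    rw [closure_Ioi] at hcl
    exact hcl ht
  have hpt : ∀ t, 0 < t → |K t * m t - K t * f t| ≤ α * |deriv (deriv f) t| := by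
    intro t ht
    have hft : f t ≠ 0 := (hfpos t ht).ne'
    have hKf : K t * f t = -(deriv (deriv f) t) := by linarith [hfode t ht.le]
    have hmfe : m t - f t = f t * (m t / f t - 1) := by field_simp
    calc |K t * m t - K t * f t| = |K t * f t| * |m t / f t - 1| := by
          rw [← abs_mul, ← mul_sub, hmfe, ← mul_assoc]
      _ ≤ |K t * f t| * α := mul_le_mul_of_nonneg_left (hub t ht.le) (abs_nonneg _)
      _ = α * |deriv (deriv f) t| := by rw [hKf, abs_neg, mul_comm]
  have hbd1 : ∀ t ∈ Ici b, |G t * m t - K t * f t| ≤ α * |deriv (deriv f) t| := by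
    intro t ht
    rw [hGKb t ht]
    exact hpt t (lt_of_lt_of_le h0b ht)
  have hintB : IntegrableOn (fun t => α * |deriv (deriv f) t|) (Ici b) :=
    (hf''.mono_set (Ici_subset_Ici.mpr h0b.le)).const_mul α
  have hcontF : Continuous (fun t => |G t * m t - K t * f t|) :=
    ((hGc.mul hmc).sub (hKc.mul hfc)).abs
  have hintF1 : IntegrableOn (fun t => |G t * m t - K t * f t|) (Ici b) := by
    apply Integrable.mono' hintB hcontF.aestronglyMeasurable.restrict
    refine (ae_restrict_iff' measurableSet_Ici).mpr (ae_of_all _ fun t ht => ?_)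
    rw [Real.norm_eq_abs, abs_abs]
    exact hbd1 t ht
  have part1 : ∫ t in Ici b, |G t * m t - K t * f t| ≤
      α * ∫ t in Ici b, |deriv (deriv f) t| := by
    rw [← MeasureTheory.integral_const_mul]
    exact setIntegral_mono_on hintF1 hintB measurableSet_Ici hbd1
  refine ⟨part1, ?_⟩
  have hmf0 : ∀ t ∈ Icc (0:ℝ) a, m t = f t :=
    stmt4_uniq f m K G a hf hm hfode hmode h0 h0' hKc (fun t ht => hsupp t (Or.inl ht))
  have hzero : EqOn (fun t => |G t * m t - K t * f t|) 0 (Ico 0 a) := by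
    intro t ht
    simp only [Pi.zero_apply]
    rw [hGKa t ht.2.le, hmf0 t ⟨ht.1, ht.2.le⟩]
    simp
  have hi_Icob : IntegrableOn (fun t => |G t * m t - K t * f t|) (Ico a b) :=
    hcontF.integrableOn_Icc.mono_set Ico_subset_Icc_self
  have hi_Ici0 : IntegrableOn (fun t => |G t * m t - K t * f t|) (Ici 0) := by
    rw [← Icc_union_Ici_eq_Ici h0b.le]
    exact hcontF.integrableOn_Icc.union hintF1
  have hd1 : Disjoint (Ico (0:ℝ) a) (Ici a) :=
    (Iio_disjoint_Ici le_rfl).mono_left Ico_subset_Iio_self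
  have hd2 : Disjoint (Ico a b) (Ici b) :=
    (Iio_disjoint_Ici le_rfl).mono_left Ico_subset_Iio_self
  have e0 : ∫ t in Ici (0:ℝ), |G t * m t - K t * f t| =
      (∫ t in Ico (0:ℝ) a, |G t * m t - K t * f t|) +
      ∫ t in Ici a, |G t * m t - K t * f t| := by
    rw [← setIntegral_union hd1 measurableSet_Ici (hi_Ici0.mono_set fun t ht => ht.1)
      (hi_Ici0.mono_set (Ici_subset_Ici.mpr h0a.le)), Ico_union_Ici_eq_Ici h0a.le]
  have e1 : ∫ t in Ico (0:ℝ) a, |G t * m t - K t * f t| = 0 := by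
    rw [setIntegral_congr_fun measurableSet_Ico hzero]
    simp
  have e2 : ∫ t in Ici a, |G t * m t - K t * f t| =
      (∫ t in Ico a b, |G t * m t - K t * f t|) +
      ∫ t in Ici b, |G t * m t - K t * f t| := by
    rw [← setIntegral_union hd2 measurableSet_Ici hi_Icob hintF1,
      Ico_union_Ici_eq_Ici hab.le]
  have hf''ico : IntegrableOn (fun t => |deriv (deriv f) t|) (Ico a b) :=
    hf''.mono_set fun t ht => le_trans h0a.le ht.1
  have e3 : ∫ t in Ici a, |deriv (deriv f) t| =
      (∫ t in Ico a b, |deriv (deriv f) t|) + ∫ t in Ici b, |deriv (deriv f) t| := by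
    rw [← setIntegral_union hd2 measurableSet_Ici hf''ico
      (hf''.mono_set (Ici_subset_Ici.mpr h0b.le)), Ico_union_Ici_eq_Ici hab.le]
  -- pointwise bound on [a,b)
  have hmb : ∀ t ∈ Ico a b, |G t * m t - K t * f t| ≤
      (α+1) * (|G t - K t| * f t) + α * |deriv (deriv f) t| := by
    intro t ht
    have ht0 : 0 < t := lt_of_lt_of_le h0a ht.1
    have hft : f t ≠ 0 := (hfpos t ht0).ne'
    have h1 : |m t| ≤ (α+1) * f t := by
      have hme : m t = (m t / f t) * f t := by field_simp
      rw [hme, abs_mul, abs_of_pos (hfpos t ht0)]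
      apply mul_le_mul_of_nonneg_right _ (hfpos t ht0).le
      calc |m t / f t| = |(m t / f t - 1) + 1| := by ring_nf
        _ ≤ |m t / f t - 1| + |(1:ℝ)| := abs_add_le _ _
        _ ≤ α + 1 := by rw [abs_one]; exact add_le_add_left (hub t ht0.le) 1
    calc |G t * m t - K t * f t|
        = |(G t - K t) * m t + (K t * m t - K t * f t)| := by congr 1; ring
      _ ≤ |(G t - K t) * m t| + |K t * m t - K t * f t| := abs_add_le _ _
      _ ≤ |G t - K t| * ((α+1) * f t) + α * |deriv (deriv f) t| := by
          apply add_le_add _ (hpt t ht0)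
          rw [abs_mul]
          exact mul_le_mul_of_nonneg_left h1 (abs_nonneg _)
      _ = (α+1) * (|G t - K t| * f t) + α * |deriv (deriv f) t| := by ring
  have hiGKf : IntegrableOn (fun t => |G t - K t| * f t) (Icc a b) :=
    (((hGc.sub hKc).abs).mul hfc).integrableOn_Icc
  have e4 : ∫ t in Ico a b, |G t * m t - K t * f t| ≤
      (α+1) * (∫ t in Ico a b, |G t - K t| * f t) +
      α * ∫ t in Ico a b, |deriv (deriv f) t| := by
    have hstep := setIntegral_mono_on hi_Icob
      (((hiGKf.mono_set Ico_subset_Icc_self).const_mul _).add (hf''ico.const_mul _))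
      measurableSet_Ico hmb
    simp only [Pi.add_apply] at hstep
    rw [integral_add ((hiGKf.mono_set Ico_subset_Icc_self).const_mul _)
      (hf''ico.const_mul _), MeasureTheory.integral_const_mul,
      MeasureTheory.integral_const_mul] at hstep
    exact hstep
  have e5 : ∫ t in Ico a b, |G t - K t| * f t ≤ ∫ t in Icc a b, |G t - K t| * f t := by
    apply setIntegral_mono_set hiGKf
    · refine (ae_restrict_iff' measurableSet_Icc).mpr (ae_of_all _ fun t ht => ?_)
      exact mul_nonneg (abs_nonneg _) (hfpos t (lt_of_lt_of_le h0a ht.1)).le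
    · exact HasSubset.Subset.eventuallyLE Ico_subset_Icc_self
  have hCS := stmt4_cs (fun t => |G t - K t|) f a b ((hGc.sub hKc).abs) hfc
    (fun t _ => abs_nonneg _) (fun t ht => (hfpos t (lt_of_lt_of_le h0a ht.1)).le)
  simp_rw [sq_abs] at hCS
  have hind : (fun t : ℝ => (G t - K t)^2) = (Icc a b).indicator (fun t => (G t - K t)^2) := by
    funext t
    by_cases h : t ∈ Icc a b
    · rw [indicator_of_mem h]
    · rw [indicator_of_notMem h]
      have hor : t < a ∨ b < t := by
        by_contra hc
        push_neg at hc
        exact h ⟨hc.1, hc.2⟩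
      rw [hsupp t hor]
      ring
  have hGKint : IntegrableOn (fun t => (G t - K t)^2) (Ici 0) := by
    rw [hind]
    exact (((hGc.sub hKc).pow 2).integrableOn_Icc.integrable_indicator measurableSet_Icc).integrableOn
  have e6 : ∫ t in Icc a b, (G t - K t)^2 ≤ ∫ t in Ici (0:ℝ), (G t - K t)^2 := by
    apply setIntegral_mono_set hGKint (ae_of_all _ fun t => sq_nonneg _)
    exact HasSubset.Subset.eventuallyLE (fun t ht => le_trans h0a.le ht.1)
  have e7 : Real.sqrt (∫ t in Icc a b, (G t - K t)^2) ≤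
      Real.sqrt (∫ t in Ici (0:ℝ), (G t - K t)^2) := Real.sqrt_le_sqrt e6
  have hP : (α+1) * (∫ t in Ico a b, |G t - K t| * f t) ≤
      (α+1) * (Real.sqrt (∫ t in Ici (0:ℝ), (G t - K t)^2) *
        Real.sqrt (∫ t in Icc a b, (f t)^2)) := by
    apply mul_le_mul_of_nonneg_left _ (by linarith : (0:ℝ) ≤ α + 1)
    calc ∫ t in Ico a b, |G t - K t| * f t
        ≤ ∫ t in Icc a b, |G t - K t| * f t := e5
      _ ≤ Real.sqrt (∫ t in Icc a b, (G t - K t)^2) *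
          Real.sqrt (∫ t in Icc a b, (f t)^2) := hCS
      _ ≤ Real.sqrt (∫ t in Ici (0:ℝ), (G t - K t)^2) *
          Real.sqrt (∫ t in Icc a b, (f t)^2) :=
        mul_le_mul_of_nonneg_right e7 (Real.sqrt_nonneg _)
  rw [e0, e1, e2]
  rw [e3]
  nlinarith [e4, part1, hP]
end

section
/- (Continuity of solutions in the coefficient, main stability proposition) Let K : [0,∞) → ℝ be continuous and f the solution of f'' + K f = 0 with f(0) = 0, f'(0) = 1. Assume f > 0 on (0,∞), ∫_1^∞ f^(−2) dt < ∞, and ∫_0^∞ |f''| dt < ∞. Then for every ε > 0 and every bounded interval (a,b) ⊂ [1,∞) there exists δ > 0 such that: for every continuous G : [0,∞) → ℝ with supp(G − K) ⊂ [a,b] and ‖G − K‖₂ < δ, the solution m of m'' + G m = 0 with m(0) = 0, m'(0) = 1 satisfies ∫_0^∞ |G m − K f| dt < ε and ∫_1^∞ |m^(−2) − f^(−2)| dt < ε. -/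
open MeasureTheory Set intervalIntegral

lemma gron {E h r : ℝ → ℝ} {b : ℝ} (hb : 0 ≤ b)
    (hE : Differentiable ℝ E) (hh : Continuous h) (hr : Continuous r)
    (hh0 : ∀ t, 0 ≤ h t) (hr0 : ∀ t, 0 ≤ r t) (hE0 : E 0 = 0)
    (hderiv : ∀ t ∈ Icc (0:ℝ) b, deriv E t ≤ h t * E t + r t) :
    ∀ t ∈ Icc (0:ℝ) b, E t ≤ Real.exp (∫ s in (0:ℝ)..b, h s) * ∫ s in (0:ℝ)..b, r s := by
  set H : ℝ → ℝ := fun u => ∫ s in (0:ℝ)..u, h s with hH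
  set R : ℝ → ℝ := fun u => ∫ s in (0:ℝ)..u, r s with hR
  have hHd : ∀ t, HasDerivAt H (h t) t := fun t => (hh.integral_hasStrictDerivAt 0 t).hasDerivAt
  have hRd : ∀ t, HasDerivAt R (r t) t := fun t => (hr.integral_hasStrictDerivAt 0 t).hasDerivAt
  have hHnn : ∀ t, 0 ≤ t → 0 ≤ H t := fun t ht =>
    intervalIntegral.integral_nonneg ht (fun s _ => hh0 s)
  set Q : ℝ → ℝ := fun t => E t * Real.exp (-(H t)) - R t with hQ
  have hQd : ∀ t, HasDerivAt Q (deriv E t * Real.exp (-(H t)) + E t * (Real.exp (-(H t)) * (-(h t))) - r t) t := by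
    intro t
    exact (((hE t).hasDerivAt.mul ((((hHd t).neg).exp))).sub (hRd t))
  have hanti : AntitoneOn Q (Icc 0 b) := by
    apply antitoneOn_of_deriv_nonpos (convex_Icc 0 b)
    · exact fun t _ => ((hQd t).continuousAt).continuousWithinAt
    · exact fun t _ => ((hQd t).differentiableAt).differentiableWithinAt
    · intro t ht
      rw [interior_Icc] at ht
      rw [(hQd t).deriv]
      have h1 : deriv E t ≤ h t * E t + r t := hderiv t ⟨le_of_lt ht.1, le_of_lt ht.2⟩
      have h2 : Real.exp (-(H t)) ≤ 1 := by
        rw [Real.exp_le_one_iff]; simpa using hHnn t (le_of_lt ht.1)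
      have h3 : 0 < Real.exp (-(H t)) := Real.exp_pos _
      nlinarith [hr0 t]
  intro t ht
  have hQt : Q t ≤ Q 0 := hanti (left_mem_Icc.mpr hb) ht ht.1
  have hQ0 : Q 0 = 0 := by simp [hQ, hE0, hH, hR]
  have h3 : 0 < Real.exp (-(H t)) := Real.exp_pos _
  have hEt : E t * Real.exp (-(H t)) ≤ R t := by rw [hQ0] at hQt; simpa [hQ] using hQt
  have hRmono : R t ≤ R b := by
    have heq : R b = R t + ∫ s in t..b, r s := by
      rw [hR]
      exact (intervalIntegral.integral_add_adjacent_intervals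
        (hr.intervalIntegrable 0 t) (hr.intervalIntegrable t b)).symm
    rw [heq]
    have : 0 ≤ ∫ s in t..b, r s := intervalIntegral.integral_nonneg ht.2 (fun s _ => hr0 s)
    linarith
  have hHmono : H t ≤ H b := by
    have heq : H b = H t + ∫ s in t..b, h s := by
      rw [hH]
      exact (intervalIntegral.integral_add_adjacent_intervals
        (hh.intervalIntegrable 0 t) (hh.intervalIntegrable t b)).symm
    rw [heq]
    have : 0 ≤ ∫ s in t..b, h s := intervalIntegral.integral_nonneg ht.2 (fun s _ => hh0 s)
    linarith
  have hRb0 : 0 ≤ R b :=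
    le_trans (intervalIntegral.integral_nonneg ht.1 (fun s _ => hr0 s)) hRmono
  calc E t = E t * Real.exp (-(H t)) * Real.exp (H t) := by
        rw [mul_assoc, ← Real.exp_add]; simp
    _ ≤ R t * Real.exp (H t) := mul_le_mul_of_nonneg_right hEt (le_of_lt (Real.exp_pos _))
    _ ≤ R b * Real.exp (H b) :=
        mul_le_mul hRmono (Real.exp_le_exp.mpr hHmono) (le_of_lt (Real.exp_pos _)) hRb0
    _ = Real.exp (H b) * R b := mul_comm _ _

lemma constOn {w : ℝ → ℝ} {b : ℝ}
    (hc : ∀ t ∈ Ici b, ContinuousAt w t)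
    (hd : ∀ t ∈ Ioi b, HasDerivAt w 0 t) :
    ∀ t ∈ Ici b, w t = w b := by
  intro t ht
  rcases eq_or_lt_of_le (mem_Ici.mp ht) with h | h
  · rw [← h]
  have hcont : ContinuousOn w (Icc b t) := fun x hx => (hc x hx.1).continuousWithinAt
  have hdiff : DifferentiableOn ℝ w (interior (Icc b t)) := by
    rw [interior_Icc]
    exact fun x hx => ((hd x hx.1).differentiableAt).differentiableWithinAt
  have h0 : ∀ x ∈ interior (Icc b t), deriv w x = 0 := by
    rw [interior_Icc]; exact fun x hx => (hd x hx.1).deriv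
  have h1 : AntitoneOn w (Icc b t) :=
    antitoneOn_of_deriv_nonpos (convex_Icc b t) hcont hdiff (fun x hx => le_of_eq (h0 x hx))
  have h2 : MonotoneOn w (Icc b t) :=
    monotoneOn_of_deriv_nonneg (convex_Icc b t) hcont hdiff (fun x hx => ge_of_eq (h0 x hx))
  have hb : b ∈ Icc b t := ⟨le_refl _, le_of_lt h⟩
  have htm : t ∈ Icc b t := ⟨le_of_lt h, le_refl _⟩
  exact le_antisymm (h1 hb htm (le_of_lt h)) (h2 hb htm (le_of_lt h))

lemma aux_inv {p q B : ℝ} (hp : 0 < p) (hq : 0 < q)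
    (h : |q ^ 2 - p ^ 2| ≤ B * (p ^ 2 * q ^ 2)) :
    |(p ^ 2)⁻¹ - (q ^ 2)⁻¹| ≤ B := by
  have hpq : (0:ℝ) < p ^ 2 * q ^ 2 := by positivity
  have heq : (p ^ 2)⁻¹ - (q ^ 2)⁻¹ = (q ^ 2 - p ^ 2) / (p ^ 2 * q ^ 2) := by
    field_simp
  rw [heq, abs_div, abs_of_pos hpq, div_le_iff₀ hpq]
  exact h

lemma quad_bound (A B g d F : ℝ) :
    2 * B * (-(g * A) - d * F) + 2 * A * B ≤ (2 + |g|) * (B ^ 2 + A ^ 2) + d ^ 2 * F ^ 2 := by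
  nlinarith [sq_nonneg (A + B), sq_nonneg (A - B), sq_nonneg (B + d * F),
    mul_nonneg (by linarith [neg_abs_le g] : (0:ℝ) ≤ g + |g|) (sq_nonneg (A + B)),
    mul_nonneg (by linarith [le_abs_self g] : (0:ℝ) ≤ |g| - g) (sq_nonneg (A - B))]

lemma abs_le_of_sq_le {x C : ℝ} (hC : 0 ≤ C) (h : x ^ 2 ≤ C ^ 2) : |x| ≤ C := by
  nlinarith [sq_abs x, abs_nonneg x]

lemma absle_amgm (x d : ℝ) : |x| * (2 * d) ≤ x ^ 2 + d * d := by
  nlinarith [sq_nonneg (|x| - d), sq_abs x]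

lemma exp_sq_aux (e M : ℝ) (he : 1 ≤ e) (hM : 1 ≤ M) : e * M ^ 2 ≤ (e * (M + 1)) ^ 2 := by
  have h1 : e ≤ e * e := by nlinarith
  have h2 : M ^ 2 ≤ (M + 1) ^ 2 := by nlinarith
  calc e * M ^ 2 ≤ (e * e) * M ^ 2 := mul_le_mul_of_nonneg_right h1 (sq_nonneg M)
    _ ≤ (e * e) * (M + 1) ^ 2 := mul_le_mul_of_nonneg_left h2 (by nlinarith)
    _ = (e * (M + 1)) ^ 2 := by ring

set_option maxHeartbeats 1600000 in
theorem stmt7 (K f : ℝ → ℝ)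
    (hKc : Continuous K) (hf : ContDiff ℝ 2 f)
    (hfode : ∀ t ≥ (0:ℝ), deriv (deriv f) t + K t * f t = 0)
    (hf0 : f 0 = 0) (hf0' : deriv f 0 = 1)
    (hfpos : ∀ t > (0:ℝ), 0 < f t)
    (hfint : IntegrableOn (fun t => ((f t) ^ 2)⁻¹) (Ici (1:ℝ)))
    (hf'' : IntegrableOn (fun t => |deriv (deriv f) t|) (Ici (0:ℝ))) :
    ∀ ε > (0:ℝ), ∀ a b : ℝ, 1 ≤ a → a < b →
      ∃ δ > (0:ℝ), ∀ G m : ℝ → ℝ, Continuous G →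
        (∀ t, t ∉ Icc a b → G t = K t) →
        Real.sqrt (∫ t in Ici (0:ℝ), (G t - K t) ^ 2) < δ →
        ContDiff ℝ 2 m →
        (∀ t ≥ (0:ℝ), deriv (deriv m) t + G t * m t = 0) →
        m 0 = 0 → deriv m 0 = 1 →
        (∫ t in Ici (0:ℝ), |G t * m t - K t * f t| < ε) ∧
        (∫ t in Ici (1:ℝ), |((m t) ^ 2)⁻¹ - ((f t) ^ 2)⁻¹| < ε) := by
  intro ε hε a b ha hab
  -- basic facts about f
  have hfd : Differentiable ℝ f := hf.differentiable (by norm_num)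
  have hf'cd : ContDiff ℝ 1 (deriv f) := ((contDiff_succ_iff_deriv (n := 1)).mp
    (by exact_mod_cast hf)).2.2
  have hf'd : Differentiable ℝ (deriv f) := hf'cd.differentiable one_ne_zero
  have hfc : Continuous f := hfd.continuous
  have hb1 : (1:ℝ) ≤ b := le_of_lt (lt_of_le_of_lt ha hab)
  have hb0 : (0:ℝ) ≤ b := by linarith
  have hbpos : (0:ℝ) < b := by linarith
  -- constants
  obtain ⟨Mf0, hMf0⟩ := (isCompact_Icc (a := (0:ℝ)) (b := b)).exists_bound_of_continuousOn
    hfc.continuousOn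
  set Mf : ℝ := max Mf0 1 with hMf_def
  have hMf : ∀ t ∈ Icc (0:ℝ) b, |f t| ≤ Mf := fun t ht =>
    le_trans (by simpa [Real.norm_eq_abs] using hMf0 t ht) (le_max_left _ _)
  have hMf1 : (1:ℝ) ≤ Mf := le_max_right _ _
  obtain ⟨MK0, hMK0⟩ := (isCompact_Icc (a := (0:ℝ)) (b := b)).exists_bound_of_continuousOn
    hKc.continuousOn
  set MK : ℝ := max MK0 1 with hMK_def
  have hMK : ∀ t ∈ Icc (0:ℝ) b, |K t| ≤ MK := fun t ht =>
    le_trans (by simpa [Real.norm_eq_abs] using hMK0 t ht) (le_max_left _ _)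
  have hMK1 : (1:ℝ) ≤ MK := le_max_right _ _
  -- minimum of f on [1,b]
  obtain ⟨x0, hx0mem, hx0min⟩ := (isCompact_Icc (a := (1:ℝ)) (b := b)).exists_isMinOn
    (nonempty_Icc.mpr hb1) hfc.continuousOn
  set c : ℝ := f x0 with hc_def
  have hcpos : 0 < c := hfpos x0 (by linarith [hx0mem.1])
  have hcmin : ∀ t ∈ Icc (1:ℝ) b, c ≤ f t := fun t ht => hx0min ht
  have hfb : 0 < f b := hfpos b hbpos
  set fb : ℝ := f b with hfb_def
  set f'b : ℝ := |deriv f b| with hf'b_def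
  have hf'b0 : 0 ≤ f'b := abs_nonneg _
  set IK : ℝ := ∫ s in (0:ℝ)..b, |K s| with hIK_def
  have hIK0 : 0 ≤ IK := intervalIntegral.integral_nonneg hb0 (fun s _ => abs_nonneg _)
  set I : ℝ := ∫ t in Ici (0:ℝ), |deriv (deriv f) t| with hI_def
  have hI0 : 0 ≤ I := setIntegral_nonneg measurableSet_Ici (fun t _ => abs_nonneg _)
  set J : ℝ := ∫ t in Ici (1:ℝ), ((f t) ^ 2)⁻¹ with hJ_def
  have hJ0 : 0 ≤ J := setIntegral_nonneg measurableSet_Ici (fun t _ => by positivity)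
  set CH : ℝ := 2 * b + IK + (1 + b) / 2 with hCH_def
  have hCH0 : 0 ≤ CH := by rw [hCH_def]; linarith
  set Cu : ℝ := Real.exp CH * (Mf + 1) with hCu_def
  have hexp1 : (1:ℝ) ≤ Real.exp CH := Real.one_le_exp hCH0
  have hCu1 : (1:ℝ) ≤ Cu := by
    rw [hCu_def]; nlinarith
  have hCu0 : 0 < Cu := by linarith
  set Cq : ℝ := (1 / fb + (Mf + f'b) * J) * Cu with hCq_def
  have hCq0 : 0 < Cq := by
    apply mul_pos _ hCu0
    have : 0 < 1 / fb := by positivity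
    nlinarith [mul_nonneg (by linarith : (0:ℝ) ≤ Mf + f'b) hJ0]
  set Cc : ℝ := (2 * Mf + 1) * (((c / 2) ^ 2 * c ^ 2)⁻¹) with hCc_def
  have hCc0 : 0 ≤ Cc := by
    rw [hCc_def]
    have h1 : (0:ℝ) ≤ (((c / 2) ^ 2 * c ^ 2))⁻¹ := by positivity
    nlinarith
  set A1 : ℝ := (Mf + 1) * (1 + b) / 2 + MK * b * Cu + Cq * I with hA1_def
  have hA10 : 0 ≤ A1 := by
    rw [hA1_def]
    have t1 : (0:ℝ) ≤ (Mf + 1) * (1 + b) := mul_nonneg (by linarith) (by linarith)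
    have t2 : (0:ℝ) ≤ MK * b * Cu := mul_nonneg (mul_nonneg (by linarith) hb0) (by linarith)
    have t3 : (0:ℝ) ≤ Cq * I := mul_nonneg (by linarith) hI0
    linarith
  set A2 : ℝ := (b - 1) * Cc * Cu + 10 * Cq * J with hA2_def
  have hA20 : 0 ≤ A2 := by
    rw [hA2_def]
    have t1 : (0:ℝ) ≤ (b - 1) * Cc * Cu := mul_nonneg (mul_nonneg (by linarith) hCc0) (by linarith)
    have t2 : (0:ℝ) ≤ 10 * Cq * J := mul_nonneg (by linarith) hJ0
    linarith
  set δ : ℝ := min (min 1 (ε / (A1 + A2 + 1))) (min (c / (2 * Cu)) (min (1 / (2 * Cu)) (1 / (2 * Cq)))) with hδ_def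
  have hδpos : 0 < δ := by
    rw [hδ_def]
    apply lt_min
    · exact lt_min one_pos (div_pos hε (by linarith))
    · exact lt_min (div_pos hcpos (by linarith))
        (lt_min (div_pos one_pos (by linarith)) (div_pos one_pos (by linarith)))
  have hδ1 : δ ≤ 1 := by
    rw [hδ_def]; exact le_trans (min_le_left _ _) (min_le_left _ _)
  have hδε : (A1 + A2) * δ < ε := by
    have hS1 : (0:ℝ) < A1 + A2 + 1 := by linarith
    have h1 : δ ≤ ε / (A1 + A2 + 1) := by
      rw [hδ_def]; exact le_trans (min_le_left _ _) (min_le_right _ _)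
    have h2 : (A1 + A2) * δ ≤ (A1 + A2) * (ε / (A1 + A2 + 1)) :=
      mul_le_mul_of_nonneg_left h1 (by linarith)
    have h3 : (A1 + A2) * (ε / (A1 + A2 + 1)) < ε := by
      rw [show (A1 + A2) * (ε / (A1 + A2 + 1)) = ε * (A1 + A2) / (A1 + A2 + 1) by ring,
        div_lt_iff₀ hS1]
      exact mul_lt_mul_of_pos_left (by linarith) hε
    exact lt_of_le_of_lt h2 h3
  have hδc : Cu * δ ≤ c / 2 := by
    have h1 : δ ≤ c / (2 * Cu) := by
      rw [hδ_def]; exact le_trans (min_le_right _ _) (min_le_left _ _)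
    calc Cu * δ ≤ Cu * (c / (2 * Cu)) := mul_le_mul_of_nonneg_left h1 (le_of_lt hCu0)
      _ = c / 2 := by field_simp
  have hδu : Cu * δ ≤ 1 / 2 := by
    have h1 : δ ≤ 1 / (2 * Cu) := by
      rw [hδ_def]
      exact le_trans (min_le_right _ _) (le_trans (min_le_right _ _) (min_le_left _ _))
    calc Cu * δ ≤ Cu * (1 / (2 * Cu)) := mul_le_mul_of_nonneg_left h1 (le_of_lt hCu0)
      _ = 1 / 2 := by field_simp
  have hδq : Cq * δ ≤ 1 / 2 := by
    have h1 : δ ≤ 1 / (2 * Cq) := by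
      rw [hδ_def]
      exact le_trans (min_le_right _ _) (le_trans (min_le_right _ _) (min_le_right _ _))
    calc Cq * δ ≤ Cq * (1 / (2 * Cq)) := mul_le_mul_of_nonneg_left h1 (le_of_lt hCq0)
      _ = 1 / 2 := by field_simp
  clear_value Mf MK IK CH Cu Cq Cc A1 A2 δ
  refine ⟨δ, hδpos, ?_⟩
  intro G m hGc hGK hGδ hm hmode hm0 hm0'
  -- the L² bound
  have hd2c : Continuous fun t => (G t - K t) ^ 2 := (hGc.sub hKc).pow 2
  have hd2supp : HasCompactSupport fun t => (G t - K t) ^ 2 := by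
    apply HasCompactSupport.intro (isCompact_Icc (a := a) (b := b))
    intro t ht
    rw [hGK t ht, sub_self]
    norm_num
  have hd2int : Integrable fun t => (G t - K t) ^ 2 :=
    hd2c.integrable_of_hasCompactSupport hd2supp
  have hD2 : (∫ t in Ici (0:ℝ), (G t - K t) ^ 2) < δ ^ 2 := by
    rw [← Real.sqrt_lt' hδpos]
    exact hGδ
  have hD2b : (∫ s in (0:ℝ)..b, (G s - K s) ^ 2) ≤ δ ^ 2 := by
    rw [intervalIntegral.integral_of_le hb0]
    refine le_trans ?_ (le_of_lt hD2)
    apply setIntegral_mono_set hd2int.integrableOn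
      (Filter.Eventually.of_forall (fun t => sq_nonneg _))
    exact HasSubset.Subset.eventuallyLE (fun t ht => le_of_lt ht.1)
  -- facts about m
  have hmd : Differentiable ℝ m := hm.differentiable (by norm_num)
  have hm'cd : ContDiff ℝ 1 (deriv m) := ((contDiff_succ_iff_deriv (n := 1)).mp
    (by exact_mod_cast hm)).2.2
  have hm'd : Differentiable ℝ (deriv m) := hm'cd.differentiable one_ne_zero
  have hmc : Continuous m := hmd.continuous
  -- the difference u = m - f
  set u : ℝ → ℝ := fun t => m t - f t with hu_def
  have hud : Differentiable ℝ u := hmd.sub hfd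
  have huhd : ∀ t, HasDerivAt u (deriv u t) t := fun t => (hud t).hasDerivAt
  have hu'eq : deriv u = fun t => deriv m t - deriv f t := by
    funext t; exact deriv_sub (hmd t) (hfd t)
  have hu'd : Differentiable ℝ (deriv u) := by
    rw [hu'eq]; exact hm'd.sub hf'd
  have hu'hd : ∀ t, HasDerivAt (deriv u) (deriv (deriv u) t) t := fun t => (hu'd t).hasDerivAt
  have hu''eq : ∀ t, deriv (deriv u) t = deriv (deriv m) t - deriv (deriv f) t := by
    intro t; rw [hu'eq]; exact deriv_sub (hm'd t) (hf'd t)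
  have huc : Continuous u := hud.continuous
  have hu'c : Continuous (deriv u) := hu'd.continuous
  have hu0 : u 0 = 0 := by rw [hu_def]; simp [hm0, hf0]
  have hu'0 : deriv u 0 = 0 := by rw [hu'eq]; simp [hm0', hf0']
  have hu''ode : ∀ t ≥ (0:ℝ), deriv (deriv u) t = -(G t * u t) - (G t - K t) * f t := by
    intro t ht
    rw [hu''eq t, hu_def]
    simp only
    linear_combination (hmode t ht) - (hfode t ht)
  -- energy function
  set E : ℝ → ℝ := fun t => (deriv u t) ^ 2 + (u t) ^ 2 with hE_def
  have hEhd : ∀ t, HasDerivAt E (2 * deriv u t * deriv (deriv u) t + 2 * u t * deriv u t) t := by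
    intro t
    have h1 : HasDerivAt (fun s => (deriv u s) ^ 2) (2 * deriv u t * deriv (deriv u) t) t := by
      have h : HasDerivAt (fun s => (deriv u s) ^ 2) _ t := (hu'hd t).pow 2
      norm_num at h
      convert h using 1 <;> ring
    have h2 : HasDerivAt (fun s => (u s) ^ 2) (2 * u t * deriv u t) t := by
      have h : HasDerivAt (fun s => (u s) ^ 2) _ t := (huhd t).pow 2
      norm_num at h
      convert h using 1 <;> ring
    exact h1.add h2
  have hEdiff : Differentiable ℝ E := fun t => (hEhd t).differentiableAt
  have hE0 : E 0 = 0 := by rw [hE_def]; simp [hu0, hu'0]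
  have hderivE : ∀ t ∈ Icc (0:ℝ) b,
      deriv E t ≤ (2 + |G t|) * E t + (G t - K t) ^ 2 * (f t) ^ 2 := by
    intro t ht
    rw [(hEhd t).deriv, hu''ode t ht.1]
    simp only [hE_def]
    exact quad_bound (u t) (deriv u t) (G t) (G t - K t) (f t)
  have hEbound := gron (h := fun t => 2 + |G t|) (r := fun t => (G t - K t) ^ 2 * (f t) ^ 2) hb0 hEdiff (continuous_const.add hGc.abs)
    (((hGc.sub hKc).pow 2).mul (hfc.pow 2)) (fun t => by positivity) (fun t => by positivity)
    hE0 hderivE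
  -- bound on ∫ |G - K|
  have hIabs : (∫ s in (0:ℝ)..b, |G s - K s|) ≤ δ * (1 + b) / 2 := by
    have hpt : ∀ s ∈ Icc (0:ℝ) b, |G s - K s| ≤ (G s - K s) ^ 2 / (2 * δ) + δ / 2 := by
      intro s _
      have key : |G s - K s| * (2 * δ) ≤ (G s - K s) ^ 2 + δ * δ := absle_amgm _ _
      calc |G s - K s| = (|G s - K s| * (2 * δ)) / (2 * δ) := by
            field_simp
        _ ≤ ((G s - K s) ^ 2 + δ * δ) / (2 * δ) := by
            apply div_le_div_of_nonneg_right key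
            linarith
        _ = (G s - K s) ^ 2 / (2 * δ) + δ / 2 := by field_simp
    have hint1 : IntervalIntegrable (fun s => |G s - K s|) volume 0 b :=
      ((hGc.sub hKc).abs).intervalIntegrable 0 b
    have hint2 : IntervalIntegrable (fun s => (G s - K s) ^ 2 / (2 * δ) + δ / 2) volume 0 b :=
      ((((hGc.sub hKc).pow 2).div_const _).add continuous_const).intervalIntegrable 0 b
    have h4 := intervalIntegral.integral_mono_on hb0 hint1 hint2 hpt
    have h5 : (∫ s in (0:ℝ)..b, ((G s - K s) ^ 2 / (2 * δ) + δ / 2))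
        = (∫ s in (0:ℝ)..b, (G s - K s) ^ 2) / (2 * δ) + δ / 2 * b := by
      rw [intervalIntegral.integral_add
        ((show Continuous fun s => (G s - K s) ^ 2 / (2 * δ) from (((hGc.sub hKc).pow 2).div_const (2 * δ))).intervalIntegrable 0 b) intervalIntegrable_const,
        intervalIntegral.integral_div, intervalIntegral.integral_const, smul_eq_mul]
      ring
    have h6 : (∫ s in (0:ℝ)..b, (G s - K s) ^ 2) / (2 * δ) ≤ δ ^ 2 / (2 * δ) := by
      apply div_le_div_of_nonneg_right hD2b
      linarith
    have h7 : δ ^ 2 / (2 * δ) = δ / 2 := by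
      field_simp
    rw [h5] at h4
    rw [h7] at h6
    calc (∫ s in (0:ℝ)..b, |G s - K s|) ≤ δ / 2 + δ / 2 * b := by linarith
      _ = δ * (1 + b) / 2 := by ring
  -- bound on the exponent
  have hHint : (∫ s in (0:ℝ)..b, (2 + |G s|)) ≤ CH := by
    have hpt : ∀ s ∈ Icc (0:ℝ) b, 2 + |G s| ≤ 2 + |K s| + |G s - K s| := by
      intro s _
      have h : |G s| ≤ |K s| + |G s - K s| := by
        calc |G s| = |K s + (G s - K s)| := by ring_nf
          _ ≤ |K s| + |G s - K s| := abs_add_le _ _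
      linarith
    have hi1 : IntervalIntegrable (fun s => 2 + |G s|) volume 0 b :=
      (continuous_const.add hGc.abs).intervalIntegrable 0 b
    have hi2 : IntervalIntegrable (fun s => 2 + |K s| + |G s - K s|) volume 0 b :=
      ((continuous_const.add hKc.abs).add (hGc.sub hKc).abs).intervalIntegrable 0 b
    have h4 := intervalIntegral.integral_mono_on hb0 hi1 hi2 hpt
    have h5 : (∫ s in (0:ℝ)..b, (2 + |K s| + |G s - K s|))
        = 2 * b + IK + ∫ s in (0:ℝ)..b, |G s - K s| := by
      rw [intervalIntegral.integral_add
        ((show Continuous fun s => 2 + |K s| from continuous_const.add hKc.abs).intervalIntegrable 0 b)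
        ((show Continuous fun s => |G s - K s| from (hGc.sub hKc).abs).intervalIntegrable 0 b),
        intervalIntegral.integral_add intervalIntegrable_const
        ((hKc.abs).intervalIntegrable 0 b),
        intervalIntegral.integral_const, smul_eq_mul, hIK_def]
      ring
    have h6 : δ * (1 + b) / 2 ≤ (1 + b) / 2 := by
      have h7 : δ * (1 + b) ≤ 1 * (1 + b) := mul_le_mul_of_nonneg_right hδ1 (by linarith)
      linarith
    rw [h5] at h4
    rw [hCH_def]
    linarith
  -- bound on the inhomogeneity
  have hRint : (∫ s in (0:ℝ)..b, (G s - K s) ^ 2 * (f s) ^ 2) ≤ Mf ^ 2 * δ ^ 2 := by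
    have hpt : ∀ s ∈ Icc (0:ℝ) b, (G s - K s) ^ 2 * (f s) ^ 2 ≤ (G s - K s) ^ 2 * Mf ^ 2 := by
      intro s hs
      have h1 : |f s| ≤ Mf := hMf s hs
      have h2 : (f s) ^ 2 ≤ Mf ^ 2 := by
        have h3 := abs_le.mp h1
        exact sq_le_sq' h3.1 h3.2
      exact mul_le_mul_of_nonneg_left h2 (sq_nonneg _)
    have hi1 : IntervalIntegrable (fun s => (G s - K s) ^ 2 * (f s) ^ 2) volume 0 b :=
      (((hGc.sub hKc).pow 2).mul (hfc.pow 2)).intervalIntegrable 0 b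
    have hi2 : IntervalIntegrable (fun s => (G s - K s) ^ 2 * Mf ^ 2) volume 0 b :=
      (((hGc.sub hKc).pow 2).mul continuous_const).intervalIntegrable 0 b
    have h4 := intervalIntegral.integral_mono_on hb0 hi1 hi2 hpt
    have h5 : (∫ s in (0:ℝ)..b, (G s - K s) ^ 2 * Mf ^ 2)
        = (∫ s in (0:ℝ)..b, (G s - K s) ^ 2) * Mf ^ 2 :=
      intervalIntegral.integral_mul_const _ _
    rw [h5] at h4
    calc (∫ s in (0:ℝ)..b, (G s - K s) ^ 2 * (f s) ^ 2)
        ≤ (∫ s in (0:ℝ)..b, (G s - K s) ^ 2) * Mf ^ 2 := h4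
      _ ≤ δ ^ 2 * Mf ^ 2 := by
          apply mul_le_mul_of_nonneg_right hD2b (sq_nonneg _)
      _ = Mf ^ 2 * δ ^ 2 := by ring
  -- final energy bound
  have hEfinal : ∀ t ∈ Icc (0:ℝ) b, E t ≤ (Cu * δ) ^ 2 := by
    intro t ht
    have h1 := hEbound t ht
    have h2 : Real.exp (∫ s in (0:ℝ)..b, (2 + |G s|)) ≤ Real.exp CH := Real.exp_le_exp.mpr hHint
    have h3 : 0 ≤ ∫ s in (0:ℝ)..b, (G s - K s) ^ 2 * (f s) ^ 2 :=
      intervalIntegral.integral_nonneg hb0 (fun s _ => by positivity)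
    have h4 : E t ≤ Real.exp CH * (Mf ^ 2 * δ ^ 2) := by
      calc E t ≤ Real.exp (∫ s in (0:ℝ)..b, (2 + |G s|))
            * ∫ s in (0:ℝ)..b, (G s - K s) ^ 2 * (f s) ^ 2 := h1
        _ ≤ Real.exp CH * (Mf ^ 2 * δ ^ 2) :=
            mul_le_mul h2 hRint h3 (le_of_lt (Real.exp_pos _))
    have h5 : Real.exp CH * Mf ^ 2 ≤ (Real.exp CH * (Mf + 1)) ^ 2 :=
      exp_sq_aux _ _ hexp1 hMf1
    calc E t ≤ Real.exp CH * (Mf ^ 2 * δ ^ 2) := h4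
      _ = (Real.exp CH * Mf ^ 2) * δ ^ 2 := by ring
      _ ≤ (Real.exp CH * (Mf + 1)) ^ 2 * δ ^ 2 :=
          mul_le_mul_of_nonneg_right h5 (sq_nonneg _)
      _ = (Cu * δ) ^ 2 := by rw [hCu_def]; ring
  have hCuδ0 : 0 ≤ Cu * δ := mul_nonneg (le_of_lt hCu0) (le_of_lt hδpos)
  have hub : ∀ t ∈ Icc (0:ℝ) b, |u t| ≤ Cu * δ := by
    intro t ht
    have h1 := hEfinal t ht
    simp only [hE_def] at h1
    exact abs_le_of_sq_le hCuδ0 (by linarith [sq_nonneg (deriv u t)])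
  have hu'b : ∀ t ∈ Icc (0:ℝ) b, |deriv u t| ≤ Cu * δ := by
    intro t ht
    have h1 := hEfinal t ht
    simp only [hE_def] at h1
    exact abs_le_of_sq_le hCuδ0 (by linarith [sq_nonneg (u t)])
  -- Wronskian
  set w : ℝ → ℝ := fun t => deriv u t * f t - u t * deriv f t with hw_def
  have hwhd : ∀ t, HasDerivAt w (deriv (deriv u) t * f t - u t * deriv (deriv f) t) t := by
    intro t
    have h1 : HasDerivAt (fun s => deriv u s * f s)
        (deriv (deriv u) t * f t + deriv u t * deriv f t) t := (hu'hd t).mul ((hfd t).hasDerivAt)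
    have h2 : HasDerivAt (fun s => u s * deriv f s)
        (deriv u t * deriv f t + u t * deriv (deriv f) t) t := (huhd t).mul ((hf'd t).hasDerivAt)
    have h3 : HasDerivAt (fun s => deriv u s * f s - u s * deriv f s) _ t := h1.sub h2
    convert h3 using 1
    ring
  have hGKt : ∀ t ∈ Ioi b, G t = K t := fun t ht => hGK t (by
    intro hmem; exact absurd hmem.2 (not_le.mpr ht))
  have hw0 : ∀ t ∈ Ioi b, HasDerivAt w 0 t := by
    intro t ht
    have ht0 : (0:ℝ) ≤ t := by
      have h := mem_Ioi.mp ht; linarith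
    have h := hwhd t
    have hfeq : deriv (deriv f) t = -(K t * f t) := by linarith [hfode t ht0]
    have hueq : deriv (deriv u) t = -(K t * u t) := by
      have h2 := hu''ode t ht0
      rw [hGKt t ht] at h2
      rw [h2]; ring
    rw [show deriv (deriv u) t * f t - u t * deriv (deriv f) t = 0 from by
      rw [hfeq, hueq]; ring] at h
    exact h
  have hwconst : ∀ t ∈ Ici b, w t = w b := constOn (fun t _ => (hwhd t).continuousAt) hw0
  have hbIcc : b ∈ Icc (0:ℝ) b := right_mem_Icc.mpr hb0
  have hwb : |w b| ≤ Cu * δ * (Mf + f'b) := by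
    rw [hw_def]
    simp only
    calc |deriv u b * f b - u b * deriv f b|
        ≤ |deriv u b * f b| + |u b * deriv f b| := abs_sub _ _
      _ = |deriv u b| * |f b| + |u b| * |deriv f b| := by rw [abs_mul, abs_mul]
      _ ≤ (Cu * δ) * Mf + (Cu * δ) * f'b := by
          apply add_le_add
          · exact mul_le_mul (hu'b b hbIcc) (hMf b hbIcc) (abs_nonneg _) hCuδ0
          · exact mul_le_mul (hub b hbIcc) hf'b_def.ge (abs_nonneg _) hCuδ0
      _ = Cu * δ * (Mf + f'b) := by ring
  -- tail positivity of f
  have hftail : ∀ t, b ≤ t → 0 < f t := fun t ht => hfpos t (by linarith)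
  have hfbne : ∀ t, b ≤ t → f t ≠ 0 := fun t ht => ne_of_gt (hftail t ht)
  -- integral of f⁻²
  set N : ℝ → ℝ := fun t => ∫ s in b..t, ((f s) ^ 2)⁻¹ with hN_def
  have hfinv_c : ∀ x, b ≤ x → ContinuousAt (fun s => ((f s) ^ 2)⁻¹) x := by
    intro x hx
    exact ((hfc.pow 2).continuousAt).inv₀ (pow_ne_zero _ (hfbne x hx))
  have hNint : ∀ t, b ≤ t → IntervalIntegrable (fun s => ((f s) ^ 2)⁻¹) volume b t := by
    intro t ht
    apply ContinuousOn.intervalIntegrable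
    intro x hx
    rw [uIcc_of_le ht] at hx
    exact (hfinv_c x hx.1).continuousWithinAt
  have hNhd : ∀ t ∈ Ici b, HasDerivAt N (((f t) ^ 2)⁻¹) t := by
    intro t ht
    exact intervalIntegral.integral_hasDerivAt_right (hNint t ht)
      (((hfc.measurable.pow_const 2).inv.stronglyMeasurable).stronglyMeasurableAtFilter)
      (hfinv_c t ht)
  set q : ℝ → ℝ := fun t => u t / f t - w b * N t with hq_def
  have hqhd : ∀ t ∈ Ici b, HasDerivAt q 0 t := by
    intro t ht
    have h1 : HasDerivAt (fun s => u s / f s)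
        ((deriv u t * f t - u t * deriv f t) / (f t) ^ 2) t :=
      (huhd t).div ((hfd t).hasDerivAt) (hfbne t ht)
    have h2 : HasDerivAt (fun s => w b * N s) (w b * ((f t) ^ 2)⁻¹) t :=
      (hNhd t ht).const_mul (w b)
    have h3 := h1.sub h2
    have h4 : deriv u t * f t - u t * deriv f t = w b := by
      rw [← hwconst t ht, hw_def]
    rw [show (deriv u t * f t - u t * deriv f t) / (f t) ^ 2 - w b * ((f t) ^ 2)⁻¹ = 0 from by
      rw [h4]; field_simp; simp] at h3
    exact h3
  have hqconst : ∀ t ∈ Ici b, q t = q b :=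
    constOn (fun t ht => (hqhd t ht).continuousAt) (fun t ht => hqhd t (mem_Ici.mpr (le_of_lt (mem_Ioi.mp ht))))
  have hNb : N b = 0 := by rw [hN_def]; simp
  have hNle : ∀ t, b ≤ t → N t ≤ J ∧ 0 ≤ N t := by
    intro t ht
    constructor
    · rw [hN_def]
      simp only
      rw [intervalIntegral.integral_of_le ht, hJ_def]
      apply setIntegral_mono_set hfint (Filter.Eventually.of_forall (fun s => by positivity))
      apply HasSubset.Subset.eventuallyLE
      intro s hs
      have h := hs.1
      simp only [mem_Ici]
      linarith
    · rw [hN_def]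
      exact intervalIntegral.integral_nonneg ht (fun s _ => by positivity)
  -- ratio bound
  have hqb : ∀ t, b ≤ t → |u t / f t| ≤ Cq * δ := by
    intro t ht
    have h1 : u t / f t - w b * N t = u b / f b - w b * N b := by
      have h := hqconst t ht
      simp only [hq_def] at h
      exact h
    rw [hNb, mul_zero, sub_zero] at h1
    have h2 : u t / f t = u b / f b + w b * N t := by linarith
    rw [h2]
    have h3 : |u b / f b| ≤ (Cu * δ) / fb := by
      rw [abs_div, abs_of_pos (show (0:ℝ) < f b from hftail b le_rfl)]
      rw [← hfb_def]
      apply div_le_div_of_nonneg_right (hub b hbIcc)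
      linarith
    have h4 : |w b * N t| ≤ (Cu * δ * (Mf + f'b)) * J := by
      rw [abs_mul]
      apply mul_le_mul hwb
        (by rw [abs_of_nonneg (hNle t ht).2]; exact (hNle t ht).1) (abs_nonneg _)
        (mul_nonneg hCuδ0 (by linarith))
    calc |u b / f b + w b * N t| ≤ |u b / f b| + |w b * N t| := abs_add_le _ _
      _ ≤ (Cu * δ) / fb + (Cu * δ * (Mf + f'b)) * J := add_le_add h3 h4
      _ = Cq * δ := by rw [hCq_def]; field_simp
  have hutail : ∀ t, b ≤ t → |u t| ≤ Cq * δ * f t := by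
    intro t ht
    calc |u t| = |u t / f t * f t| := by rw [div_mul_cancel₀ _ (hfbne t ht)]
      _ = |u t / f t| * |f t| := abs_mul _ _
      _ ≤ (Cq * δ) * f t := by
          rw [abs_of_pos (hftail t ht)]
          exact mul_le_mul_of_nonneg_right (hqb t ht) (le_of_lt (hftail t ht))
  have hCqδ0 : 0 ≤ Cq * δ := mul_nonneg (le_of_lt hCq0) (le_of_lt hδpos)
  have humf : ∀ t, u t = m t - f t := fun t => by rw [hu_def]
  have hmtail_lb : ∀ t, b ≤ t → f t / 2 ≤ m t := by
    intro t ht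
    have h1 := (abs_le.mp (hutail t ht)).1
    have h2 : Cq * δ * f t ≤ (1/2) * f t := mul_le_mul_of_nonneg_right hδq
      (le_of_lt (hftail t ht))
    have h3 := humf t
    linarith
  have hmtail_ub : ∀ t, b ≤ t → m t ≤ (3/2) * f t := by
    intro t ht
    have h1 := (abs_le.mp (hutail t ht)).2
    have h2 : Cq * δ * f t ≤ (1/2) * f t := mul_le_mul_of_nonneg_right hδq
      (le_of_lt (hftail t ht))
    have h3 := humf t
    linarith
  have hmtail_pos : ∀ t, b ≤ t → 0 < m t := by
    intro t ht
    have := hftail t ht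
    linarith [hmtail_lb t ht]
  -- sets
  have hsub0 : Ioi b ⊆ Ici (0:ℝ) := fun x hx => by
    have h := mem_Ioi.mp hx; simp only [mem_Ici]; linarith
  have hsub1 : Ioi b ⊆ Ici (1:ℝ) := fun x hx => by
    have h := mem_Ioi.mp hx; simp only [mem_Ici]; linarith
  have hdisj0 : Disjoint (Icc (0:ℝ) b) (Ioi b) := by
    apply disjoint_left.mpr
    intro x hx hx2
    exact absurd (mem_Ioi.mp hx2) (not_lt.mpr hx.2)
  have hdisj1 : Disjoint (Icc (1:ℝ) b) (Ioi b) := by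
    apply disjoint_left.mpr
    intro x hx hx2
    exact absurd (mem_Ioi.mp hx2) (not_lt.mpr hx.2)
  constructor
  · -- first conclusion
    have hφc : Continuous fun t => |G t * m t - K t * f t| :=
      ((hGc.mul hmc).sub (hKc.mul hfc)).abs
    have hint_Icc : IntegrableOn (fun t => |G t * m t - K t * f t|) (Icc 0 b) :=
      hφc.integrableOn_Icc
    have hptail : ∀ t ∈ Ioi b, |G t * m t - K t * f t| ≤ Cq * δ * |deriv (deriv f) t| := by
      intro t ht
      have htb : b ≤ t := le_of_lt (mem_Ioi.mp ht)
      have ht0 : (0:ℝ) ≤ t := by linarith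
      have h2 : G t * m t - K t * f t = K t * u t := by
        rw [hGKt t ht, humf t]; ring
      have h3 : deriv (deriv f) t = -(K t * f t) := by linarith [hfode t ht0]
      have h4 : |deriv (deriv f) t| = |K t| * f t := by
        rw [h3, abs_neg, abs_mul, abs_of_pos (hftail t htb)]
      rw [h2, abs_mul]
      calc |K t| * |u t| ≤ |K t| * (Cq * δ * f t) :=
            mul_le_mul_of_nonneg_left (hutail t htb) (abs_nonneg _)
        _ = Cq * δ * (|K t| * f t) := by ring
        _ = Cq * δ * |deriv (deriv f) t| := by rw [h4]
    have hg_int : IntegrableOn (fun t => Cq * δ * |deriv (deriv f) t|) (Ioi b) :=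
      (hf''.mono_set hsub0).const_mul _
    have hint_Ioi : IntegrableOn (fun t => |G t * m t - K t * f t|) (Ioi b) := by
      apply Integrable.mono hg_int (hφc.aestronglyMeasurable.restrict)
      rw [ae_restrict_iff' measurableSet_Ioi]
      apply Filter.Eventually.of_forall
      intro t ht
      rw [Real.norm_eq_abs, Real.norm_eq_abs, abs_abs]
      exact le_trans (hptail t ht) (le_abs_self _)
    have hsplit : Ici (0:ℝ) = Icc 0 b ∪ Ioi b := (Icc_union_Ioi_eq_Ici hb0).symm
    rw [hsplit, setIntegral_union hdisj0 measurableSet_Ioi hint_Icc hint_Ioi]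
    have hIa : (∫ t in Icc (0:ℝ) b, |G t * m t - K t * f t|)
        ≤ (Mf + 1) * (δ * (1 + b) / 2) + MK * (Cu * δ) * b := by
      have hpt : ∀ t ∈ Icc (0:ℝ) b,
          |G t * m t - K t * f t| ≤ (Mf + 1) * |G t - K t| + MK * (Cu * δ) := by
        intro t ht
        have h1 : G t * m t - K t * f t = (G t - K t) * m t + K t * u t := by
          rw [humf t]; ring
        rw [h1]
        have h2 : |m t| ≤ Mf + 1 := by
          have h3 := hub t ht
          have h4 := hMf t ht
          have h5 : |m t| ≤ |f t| + |u t| := by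
            calc |m t| = |f t + u t| := by rw [humf t]; ring_nf
              _ ≤ |f t| + |u t| := abs_add_le _ _
          linarith [hδu]
        calc |(G t - K t) * m t + K t * u t|
            ≤ |(G t - K t) * m t| + |K t * u t| := abs_add_le _ _
          _ = |G t - K t| * |m t| + |K t| * |u t| := by rw [abs_mul, abs_mul]
          _ ≤ |G t - K t| * (Mf + 1) + MK * (Cu * δ) :=
              add_le_add (mul_le_mul_of_nonneg_left h2 (abs_nonneg _))
                (mul_le_mul (hMK t ht) (hub t ht) (abs_nonneg _) (by linarith [hMK1]))
          _ = (Mf + 1) * |G t - K t| + MK * (Cu * δ) := by ring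
      have hg2 : IntegrableOn (fun t => (Mf + 1) * |G t - K t| + MK * (Cu * δ)) (Icc 0 b) :=
        ((continuous_const.mul ((hGc.sub hKc).abs)).add continuous_const).integrableOn_Icc
      have h7 := setIntegral_mono_on hint_Icc hg2 measurableSet_Icc hpt
      have h8 : (∫ t in Icc (0:ℝ) b, ((Mf + 1) * |G t - K t| + MK * (Cu * δ)))
          = (Mf + 1) * (∫ t in Icc (0:ℝ) b, |G t - K t|) + MK * (Cu * δ) * b := by
        rw [integral_add ((show Continuous fun t => (Mf + 1) * |G t - K t| from continuous_const.mul ((hGc.sub hKc).abs)).integrableOn_Icc)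
          (integrableOn_const (by rw [Real.volume_Icc]; exact ENNReal.ofReal_ne_top)),
          MeasureTheory.integral_const_mul, setIntegral_const, Real.volume_real_Icc_of_le hb0, smul_eq_mul]
        ring
      have h9 : (∫ t in Icc (0:ℝ) b, |G t - K t|) ≤ δ * (1 + b) / 2 := by
        rw [integral_Icc_eq_integral_Ioc, ← intervalIntegral.integral_of_le hb0]
        exact hIabs
      rw [h8] at h7
      have h10 : (Mf + 1) * (∫ t in Icc (0:ℝ) b, |G t - K t|) ≤ (Mf + 1) * (δ * (1 + b) / 2) :=
        mul_le_mul_of_nonneg_left h9 (by linarith)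
      linarith
    have hIb : (∫ t in Ioi b, |G t * m t - K t * f t|) ≤ Cq * δ * I := by
      have h7 := setIntegral_mono_on hint_Ioi hg_int measurableSet_Ioi hptail
      have h8 : (∫ t in Ioi b, Cq * δ * |deriv (deriv f) t|)
          = Cq * δ * ∫ t in Ioi b, |deriv (deriv f) t| := integral_const_mul _ _
      have h9 : (∫ t in Ioi b, |deriv (deriv f) t|) ≤ I := by
        rw [hI_def]
        exact setIntegral_mono_set hf''
          (Filter.Eventually.of_forall (fun t => abs_nonneg _))
          (HasSubset.Subset.eventuallyLE hsub0)
      rw [h8] at h7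
      exact le_trans h7 (mul_le_mul_of_nonneg_left h9 hCqδ0)
    have hA1eq : A1 * δ = (Mf + 1) * (δ * (1 + b) / 2) + MK * (Cu * δ) * b + Cq * δ * I := by
      rw [hA1_def]; ring
    have hA2δ : 0 ≤ A2 * δ := mul_nonneg hA20 (le_of_lt hδpos)
    have hexpand : (A1 + A2) * δ = A1 * δ + A2 * δ := by ring
    linarith
  · -- second conclusion
    have hmeas : Measurable fun t => |((m t) ^ 2)⁻¹ - ((f t) ^ 2)⁻¹| :=
      (((hmc.measurable.pow_const 2).inv.sub ((hfc.measurable.pow_const 2).inv)).abs)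
    set B2 : ℝ := Cc * (Cu * δ) with hB2_def
    have hB20 : 0 ≤ B2 := mul_nonneg hCc0 hCuδ0
    have hpt2 : ∀ t ∈ Icc (1:ℝ) b, |((m t) ^ 2)⁻¹ - ((f t) ^ 2)⁻¹| ≤ B2 := by
      intro t ht
      have htb : t ∈ Icc (0:ℝ) b := ⟨by linarith [ht.1], ht.2⟩
      have hft : c ≤ f t := hcmin t ht
      have hfpos' : 0 < f t := lt_of_lt_of_le hcpos hft
      have hu1 : |u t| ≤ Cu * δ := hub t htb
      have hmlb : c / 2 ≤ m t := by
        have h1 := (abs_le.mp hu1).1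
        have h3 := humf t
        linarith [hδc]
      have hmpos : 0 < m t := by linarith [hcpos]
      apply aux_inv hmpos hfpos'
      have h5 : |f t ^ 2 - m t ^ 2| = |f t - m t| * |f t + m t| := by
        rw [← abs_mul]; ring_nf
      have h6 : |f t - m t| ≤ Cu * δ := by
        rw [abs_sub_comm, show m t - f t = u t from (humf t).symm]; exact hu1
      have h7 : |f t + m t| ≤ 2 * Mf + 1 := by
        have h8 := hMf t htb
        have h10 := abs_le.mp h8
        have h9 : m t ≤ Mf + 1 := by
          have h11 := (abs_le.mp hu1).2
          have h12 := humf t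
          linarith [hδu]
        rw [abs_of_pos (by linarith : (0:ℝ) < f t + m t)]
        linarith
      have h11 : (c / 2) ^ 2 * c ^ 2 ≤ m t ^ 2 * f t ^ 2 := by
        have e1 : (c / 2) ^ 2 ≤ m t ^ 2 := pow_le_pow_left₀ (by positivity) hmlb 2
        have e2 : c ^ 2 ≤ f t ^ 2 := pow_le_pow_left₀ (le_of_lt hcpos) hft 2
        exact mul_le_mul e1 e2 (by positivity) (sq_nonneg _)
      have h12 : |f t ^ 2 - m t ^ 2| ≤ (Cu * δ) * (2 * Mf + 1) := by
        rw [h5]; exact mul_le_mul h6 h7 (abs_nonneg _) hCuδ0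
      have h13 : B2 * ((c / 2) ^ 2 * c ^ 2) = (Cu * δ) * (2 * Mf + 1) := by
        rw [hB2_def, hCc_def]
        field_simp
      calc |f t ^ 2 - m t ^ 2| ≤ (Cu * δ) * (2 * Mf + 1) := h12
        _ = B2 * ((c / 2) ^ 2 * c ^ 2) := h13.symm
        _ ≤ B2 * (m t ^ 2 * f t ^ 2) := mul_le_mul_of_nonneg_left h11 hB20
    have hconst2 : IntegrableOn (fun _ : ℝ => B2) (Icc 1 b) :=
      integrableOn_const (by rw [Real.volume_Icc]; exact ENNReal.ofReal_ne_top)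
    have hint2_Icc : IntegrableOn (fun t => |((m t) ^ 2)⁻¹ - ((f t) ^ 2)⁻¹|) (Icc 1 b) := by
      apply Integrable.mono hconst2 (hmeas.aestronglyMeasurable.restrict)
      rw [ae_restrict_iff' measurableSet_Icc]
      apply Filter.Eventually.of_forall
      intro t ht
      rw [Real.norm_eq_abs, Real.norm_eq_abs, abs_abs, abs_of_nonneg hB20]
      exact hpt2 t ht
    have hpt3 : ∀ t ∈ Ioi b,
        |((m t) ^ 2)⁻¹ - ((f t) ^ 2)⁻¹| ≤ 10 * (Cq * δ) * ((f t) ^ 2)⁻¹ := by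
      intro t ht
      have htb : b ≤ t := le_of_lt (mem_Ioi.mp ht)
      have hfpos' := hftail t htb
      have hmpos := hmtail_pos t htb
      apply aux_inv hmpos hfpos'
      have h5 : |f t ^ 2 - m t ^ 2| = |f t - m t| * |f t + m t| := by
        rw [← abs_mul]; ring_nf
      have h6 : |f t - m t| ≤ Cq * δ * f t := by
        rw [abs_sub_comm, show m t - f t = u t from (humf t).symm]; exact hutail t htb
      have h7 : |f t + m t| ≤ (5 / 2) * f t := by
        rw [abs_of_pos (by linarith [hmtail_pos t htb] : (0:ℝ) < f t + m t)]
        linarith [hmtail_ub t htb]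
      have h8 : |f t ^ 2 - m t ^ 2| ≤ (5 / 2) * (Cq * δ) * f t ^ 2 := by
        rw [h5]
        calc |f t - m t| * |f t + m t| ≤ (Cq * δ * f t) * ((5 / 2) * f t) :=
              mul_le_mul h6 h7 (abs_nonneg _) (by positivity)
          _ = (5 / 2) * (Cq * δ) * f t ^ 2 := by ring
      have h9 : (10 * (Cq * δ) * ((f t) ^ 2)⁻¹) * (m t ^ 2 * f t ^ 2)
          = 10 * (Cq * δ) * m t ^ 2 := by
        field_simp
      rw [h9]
      have h10 : f t / 2 ≤ m t := hmtail_lb t htb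
      have h11 : (f t / 2) ^ 2 ≤ m t ^ 2 := pow_le_pow_left₀ (by positivity) h10 2
      have h12 : (f t / 2) ^ 2 = f t ^ 2 / 4 := by ring
      rw [h12] at h11
      have h13 := mul_le_mul_of_nonneg_left h11 (show (0:ℝ) ≤ 10 * (Cq * δ) by positivity)
      have h14 : 10 * (Cq * δ) * (f t ^ 2 / 4) = (5 / 2) * (Cq * δ) * f t ^ 2 := by ring
      rw [h14] at h13
      linarith
    have hg3 : IntegrableOn (fun t => 10 * (Cq * δ) * ((f t) ^ 2)⁻¹) (Ioi b) :=
      (hfint.mono_set hsub1).const_mul _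
    have hint2_Ioi : IntegrableOn (fun t => |((m t) ^ 2)⁻¹ - ((f t) ^ 2)⁻¹|) (Ioi b) := by
      apply Integrable.mono hg3 (hmeas.aestronglyMeasurable.restrict)
      rw [ae_restrict_iff' measurableSet_Ioi]
      apply Filter.Eventually.of_forall
      intro t ht
      rw [Real.norm_eq_abs, Real.norm_eq_abs, abs_abs]
      exact le_trans (hpt3 t ht) (le_abs_self _)
    have hsplit : Ici (1:ℝ) = Icc 1 b ∪ Ioi b := (Icc_union_Ioi_eq_Ici hb1).symm
    rw [hsplit, setIntegral_union hdisj1 measurableSet_Ioi hint2_Icc hint2_Ioi]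
    have hIa : (∫ t in Icc (1:ℝ) b, |((m t) ^ 2)⁻¹ - ((f t) ^ 2)⁻¹|) ≤ B2 * (b - 1) := by
      have h7 := setIntegral_mono_on hint2_Icc hconst2 measurableSet_Icc hpt2
      rw [setIntegral_const, Real.volume_real_Icc_of_le hb1, smul_eq_mul] at h7
      linarith [h7]
    have hIb : (∫ t in Ioi b, |((m t) ^ 2)⁻¹ - ((f t) ^ 2)⁻¹|) ≤ 10 * (Cq * δ) * J := by
      have h7 := setIntegral_mono_on hint2_Ioi hg3 measurableSet_Ioi hpt3
      have h8 : (∫ t in Ioi b, 10 * (Cq * δ) * ((f t) ^ 2)⁻¹)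
          = 10 * (Cq * δ) * ∫ t in Ioi b, ((f t) ^ 2)⁻¹ := integral_const_mul _ _
      have h9 : (∫ t in Ioi b, ((f t) ^ 2)⁻¹) ≤ J := by
        rw [hJ_def]
        exact setIntegral_mono_set hfint
          (Filter.Eventually.of_forall (fun t => by positivity))
          (HasSubset.Subset.eventuallyLE hsub1)
      rw [h8] at h7
      exact le_trans h7 (mul_le_mul_of_nonneg_left h9 (by positivity))
    have hA2eq : A2 * δ = B2 * (b - 1) + 10 * (Cq * δ) * J := by
      rw [hA2_def, hB2_def, hCc_def]; ring
    have hA1δ : 0 ≤ A1 * δ := mul_nonneg hA10 (le_of_lt hδpos)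
    have hexpand : (A1 + A2) * δ = A1 * δ + A2 * δ := by ring
    linarith
end

section
/- (Stability without the f'' integrability assumption) Let K : [0,∞) → ℝ be continuous and f the solution of f'' + K f = 0 with f(0) = 0, f'(0) = 1, satisfying f > 0 on (0,∞) and ∫_1^∞ f^(−2) dt < ∞. Then for every ε > 0 and bounded interval (a,b) ⊂ [1,∞) there exists δ > 0 such that any continuous G with supp(G − K) ⊂ [a,b] and ‖G − K‖₂ < δ yields a solution m of m'' + G m = 0, m(0) = 0, m'(0) = 1, with ∫_1^∞ |m^(−2) − f^(−2)| dt < ε. -/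
open MeasureTheory Set intervalIntegral

lemma my_gronwall (φ lam : ℝ → ℝ) (b c : ℝ) (hφ : Continuous φ) (hlam : Continuous lam)
    (hφ0 : ∀ t, 0 ≤ φ t) (hlam0 : ∀ t, 0 ≤ lam t) (hc : 0 ≤ c)
    (h : ∀ t ∈ Icc (0:ℝ) b, φ t ≤ c + ∫ s in (0:ℝ)..t, lam s * φ s) :
    ∀ t ∈ Icc (0:ℝ) b, φ t ≤ c * Real.exp (∫ s in (0:ℝ)..t, lam s) := by
  set F : ℝ → ℝ := fun t => ∫ s in (0:ℝ)..t, lam s * φ s with hF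
  set Λ : ℝ → ℝ := fun t => ∫ s in (0:ℝ)..t, lam s with hΛ
  have hlamφ : Continuous (fun s => lam s * φ s) := hlam.mul hφ
  have hFd : ∀ t : ℝ, HasDerivAt F (lam t * φ t) t := fun t =>
    integral_hasDerivAt_right (hlamφ.intervalIntegrable _ _)
      (hlamφ.stronglyMeasurableAtFilter _ _) hlamφ.continuousAt
  have hΛd : ∀ t : ℝ, HasDerivAt Λ (lam t) t := fun t =>
    integral_hasDerivAt_right (hlam.intervalIntegrable _ _)
      (hlam.stronglyMeasurableAtFilter _ _) hlam.continuousAt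
  set P : ℝ → ℝ := fun t => (c + F t) * Real.exp (-Λ t) with hP
  have hPd : ∀ t : ℝ, HasDerivAt P
      ((lam t * φ t) * Real.exp (-Λ t) + (c + F t) * (Real.exp (-Λ t) * -(lam t))) t := by
    intro t
    exact ((hFd t).const_add c).mul ((hΛd t).neg.exp)
  have hanti : AntitoneOn P (Icc (0:ℝ) b) := by
    apply antitoneOn_of_deriv_nonpos (convex_Icc _ _)
    · exact Continuous.continuousOn (by fun_prop)
    · intro t _
      exact ((hPd t).differentiableAt).differentiableWithinAt
    · intro t ht
      rw [interior_Icc] at ht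
      rw [(hPd t).deriv]
      have h1 := h t (Ioo_subset_Icc_self ht)
      have h2 : (0:ℝ) ≤ Real.exp (-Λ t) := (Real.exp_pos _).le
      nlinarith [hlam0 t, mul_nonneg (hlam0 t) h2]
  intro t ht
  have hP0 : P 0 = c := by simp [hP, hF, hΛ]
  have h3 : P t ≤ c := by
    have h0b : (0:ℝ) ∈ Icc (0:ℝ) b := ⟨le_refl _, ht.1.trans ht.2⟩
    have := hanti h0b ht ht.1
    rwa [hP0] at this
  have h4 : c + F t ≤ c * Real.exp (Λ t) := by
    have h5 : (c + F t) * Real.exp (-Λ t) ≤ c := h3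
    have h6 : (0:ℝ) < Real.exp (-Λ t) := Real.exp_pos _
    rw [Real.exp_neg] at h5 h6
    calc c + F t = ((c + F t) * (Real.exp (Λ t))⁻¹) * Real.exp (Λ t) := by
          field_simp
      _ ≤ c * Real.exp (Λ t) := by
          apply mul_le_mul_of_nonneg_right h5 (Real.exp_pos _).le
  exact (h t ht).trans h4

lemma cd2 (g : ℝ → ℝ) (hg : ContDiff ℝ 2 g) :
    Differentiable ℝ g ∧ Differentiable ℝ (deriv g) ∧ Continuous (deriv g) ∧
      Continuous (deriv (deriv g)) := by
  have h2 : ContDiff ℝ ((1:ℕ∞)+1) g := by exact_mod_cast hg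
  have h1 : ContDiff ℝ (1:ℕ∞) (deriv g) := (contDiff_succ_iff_deriv.mp h2).2.2
  have h1' : ContDiff ℝ ((0:ℕ∞)+1) (deriv g) := by exact_mod_cast h1
  have h0 : ContDiff ℝ (0:ℕ∞) (deriv (deriv g)) := (contDiff_succ_iff_deriv.mp h1').2.2
  exact ⟨hg.differentiable (by norm_num), (contDiff_succ_iff_deriv.mp h1').1,
    h1.continuous, h0.continuous⟩

lemma ftc2 (g : ℝ → ℝ) (hg1 : Differentiable ℝ g) (hg1c : Continuous (deriv g)) (t : ℝ) :
    g t = g 0 + ∫ s in (0:ℝ)..t, deriv g s := by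
  have := integral_deriv_eq_sub (f := g) (a := 0) (b := t)
    (fun x _ => hg1 x) (hg1c.intervalIntegrable _ _)
  linarith

lemma apriori (G m : ℝ → ℝ) (b : ℝ) (hb : 0 ≤ b) (hGc : Continuous G)
    (hm1 : Differentiable ℝ m) (hm2 : Differentiable ℝ (deriv m))
    (hm1c : Continuous (deriv m)) (hm2c : Continuous (deriv (deriv m)))
    (hmode : ∀ t ≥ (0:ℝ), deriv (deriv m) t + G t * m t = 0)
    (hm0 : m 0 = 0) (hm0' : deriv m 0 = 1) :
    ∀ t ∈ Icc (0:ℝ) b, |m t| + |deriv m t| ≤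
      Real.exp (∫ s in (0:ℝ)..b, (1 + |G s|)) := by
  set ψ : ℝ → ℝ := fun t => |m t| + |deriv m t| with hψdef
  set lam : ℝ → ℝ := fun s => 1 + |G s| with hlamdef
  have hψc : Continuous ψ := (hm1.continuous.abs).add (hm1c.abs)
  have hlamc : Continuous lam := continuous_const.add hGc.abs
  have hψ0 : ∀ t, 0 ≤ ψ t := fun t => add_nonneg (abs_nonneg _) (abs_nonneg _)
  have hlam0 : ∀ t, 0 ≤ lam t := fun t => by positivity
  have key : ∀ t ∈ Icc (0:ℝ) b, ψ t ≤ 1 + ∫ s in (0:ℝ)..t, lam s * ψ s := by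
    intro t ht
    have hmt : m t = ∫ s in (0:ℝ)..t, deriv m s := by
      have := integral_deriv_eq_sub (f := m) (a := 0) (b := t)
        (fun x _ => hm1 x) (hm1c.intervalIntegrable _ _)
      rw [this, hm0]; ring
    have hmt' : deriv m t = 1 + ∫ s in (0:ℝ)..t, deriv (deriv m) s := by
      have := integral_deriv_eq_sub (f := deriv m) (a := 0) (b := t)
        (fun x _ => hm2 x) (hm2c.intervalIntegrable _ _)
      rw [this, hm0']; ring
    have h1 : |m t| ≤ ∫ s in (0:ℝ)..t, |deriv m s| := by
      rw [hmt]; exact intervalIntegral.abs_integral_le_integral_abs ht.1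
    have h2 : |deriv m t| ≤ 1 + ∫ s in (0:ℝ)..t, |deriv (deriv m) s| := by
      rw [hmt']
      calc |1 + ∫ s in (0:ℝ)..t, deriv (deriv m) s|
          ≤ 1 + |∫ s in (0:ℝ)..t, deriv (deriv m) s| := by
            exact (abs_add_le _ _).trans (by simp)
        _ ≤ 1 + ∫ s in (0:ℝ)..t, |deriv (deriv m) s| := by
            gcongr; exact intervalIntegral.abs_integral_le_integral_abs ht.1
    have h3 : (∫ s in (0:ℝ)..t, |deriv m s|) + (∫ s in (0:ℝ)..t, |deriv (deriv m) s|)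
        ≤ ∫ s in (0:ℝ)..t, lam s * ψ s := by
      rw [← intervalIntegral.integral_add (hm1c.abs.intervalIntegrable _ _)
        (hm2c.abs.intervalIntegrable _ _)]
      apply intervalIntegral.integral_mono_on ht.1
        ((hm1c.abs.add hm2c.abs).intervalIntegrable _ _)
        ((hlamc.mul hψc).intervalIntegrable _ _)
      intro s hs
      have hode := hmode s hs.1
      have : deriv (deriv m) s = -(G s * m s) := by linarith
      show |deriv m s| + |deriv (deriv m) s| ≤ lam s * ψ s
      rw [this, abs_neg, abs_mul]
      have h4 : |deriv m s| ≤ ψ s := le_add_of_nonneg_left (abs_nonneg _)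
      have h5 : |m s| ≤ ψ s := le_add_of_nonneg_right (abs_nonneg _)
      have h6 : (0:ℝ) ≤ |G s| := abs_nonneg _
      have h7 : 0 ≤ ψ s := hψ0 s
      simp only [hlamdef]
      nlinarith
    calc ψ t ≤ 1 + ((∫ s in (0:ℝ)..t, |deriv m s|) + (∫ s in (0:ℝ)..t, |deriv (deriv m) s|)) := by
          simp only [hψdef]; linarith
      _ ≤ 1 + ∫ s in (0:ℝ)..t, lam s * ψ s := by linarith
  intro t ht
  have := my_gronwall ψ lam b 1 hψc hlamc hψ0 hlam0 zero_le_one key t ht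
  calc ψ t ≤ 1 * Real.exp (∫ s in (0:ℝ)..t, lam s) := this
    _ ≤ Real.exp (∫ s in (0:ℝ)..b, lam s) := by
        rw [one_mul]
        apply Real.exp_le_exp.2
        apply intervalIntegral.integral_mono_interval (le_refl (0:ℝ)) ht.1 ht.2
        · filter_upwards with s using hlam0 s
        · exact hlamc.intervalIntegrable _ _
lemma diff_bound (K G f m : ℝ → ℝ) (b L M c : ℝ) (hb : 0 ≤ b)
    (hKc : Continuous K) (hGc : Continuous G)
    (hf1 : Differentiable ℝ f) (hf2 : Differentiable ℝ (deriv f))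
    (hf1c : Continuous (deriv f)) (hf2c : Continuous (deriv (deriv f)))
    (hm1 : Differentiable ℝ m) (hm2 : Differentiable ℝ (deriv m))
    (hm1c : Continuous (deriv m)) (hm2c : Continuous (deriv (deriv m)))
    (hfode : ∀ t ≥ (0:ℝ), deriv (deriv f) t + K t * f t = 0)
    (hmode : ∀ t ≥ (0:ℝ), deriv (deriv m) t + G t * m t = 0)
    (hf0 : f 0 = 0) (hm0 : m 0 = 0) (hf0' : deriv f 0 = 1) (hm0' : deriv m 0 = 1)
    (hL : ∀ s ∈ Icc (0:ℝ) b, |K s| ≤ L)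
    (hM : ∀ s ∈ Icc (0:ℝ) b, |m s| ≤ M) (hM0 : 0 ≤ M)
    (hc : (∫ s in (0:ℝ)..b, |G s - K s|) * M ≤ c) (hc0 : 0 ≤ c) :
    ∀ t ∈ Icc (0:ℝ) b, |m t - f t| + |deriv m t - deriv f t| ≤
      c * Real.exp ((L + 1) * b) := by
  have hL0 : 0 ≤ L + 1 := by
    have := hL 0 ⟨le_refl _, hb⟩
    have := abs_nonneg (K 0); linarith
  set φ : ℝ → ℝ := fun t => |m t - f t| + |deriv m t - deriv f t| with hφdef
  have hφc : Continuous φ := ((hm1.continuous.sub hf1.continuous).abs).add ((hm1c.sub hf1c).abs)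
  have hφ0 : ∀ t, 0 ≤ φ t := fun t => add_nonneg (abs_nonneg _) (abs_nonneg _)
  have key : ∀ t ∈ Icc (0:ℝ) b, φ t ≤ c + ∫ s in (0:ℝ)..t, (L + 1) * φ s := by
    intro t ht
    have hut : m t - f t = ∫ s in (0:ℝ)..t, (deriv m s - deriv f s) := by
      have := integral_deriv_eq_sub (f := fun x => m x - f x) (a := 0) (b := t)
        (fun x _ => (hm1 x).sub (hf1 x)) (by
          have : deriv (fun x => m x - f x) = fun x => deriv m x - deriv f x := by
            funext x; exact deriv_sub (hm1 x) (hf1 x)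
          rw [this]; exact (hm1c.sub hf1c).intervalIntegrable _ _)
      have hd : deriv (fun x => m x - f x) = fun x => deriv m x - deriv f x := by
        funext x; exact deriv_sub (hm1 x) (hf1 x)
      rw [hd] at this
      simp only [hm0, hf0, sub_zero, sub_self] at this
      linarith [this]
    have hvt : deriv m t - deriv f t =
        ∫ s in (0:ℝ)..t, (deriv (deriv m) s - deriv (deriv f) s) := by
      have hd : deriv (fun x => deriv m x - deriv f x) =
          fun x => deriv (deriv m) x - deriv (deriv f) x := by
        funext x; exact deriv_sub (hm2 x) (hf2 x)
      have := integral_deriv_eq_sub (f := fun x => deriv m x - deriv f x) (a := 0) (b := t)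
        (fun x _ => (hm2 x).sub (hf2 x)) (by rw [hd]; exact (hm2c.sub hf2c).intervalIntegrable _ _)
      rw [hd] at this
      simp only [hm0', hf0'] at this
      linarith [this]
    have h1 : |m t - f t| ≤ ∫ s in (0:ℝ)..t, |deriv m s - deriv f s| := by
      rw [hut]; exact intervalIntegral.abs_integral_le_integral_abs ht.1
    have h2 : |deriv m t - deriv f t| ≤
        ∫ s in (0:ℝ)..t, (L * |m s - f s| + |G s - K s| * M) := by
      rw [hvt]
      refine (intervalIntegral.abs_integral_le_integral_abs ht.1).trans ?_
      apply intervalIntegral.integral_mono_on ht.1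
        ((hm2c.sub hf2c).abs.intervalIntegrable _ _)
        ((((continuous_const.mul (hm1.continuous.sub hf1.continuous).abs)).add
          (((hGc.sub hKc).abs.mul continuous_const))).intervalIntegrable _ _)
      intro s hs
      have hsIcc : s ∈ Icc (0:ℝ) b := ⟨hs.1, hs.2.trans ht.2⟩
      have e1 : deriv (deriv m) s = -(G s * m s) := by have := hmode s hs.1; linarith
      have e2 : deriv (deriv f) s = -(K s * f s) := by have := hfode s hs.1; linarith
      have e3 : deriv (deriv m) s - deriv (deriv f) s
          = -(K s * (m s - f s)) - (G s - K s) * m s := by rw [e1, e2]; ring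
      show |deriv (deriv m) s - deriv (deriv f) s| ≤ L * |m s - f s| + |G s - K s| * M
      rw [e3]
      calc |(-(K s * (m s - f s)) - (G s - K s) * m s)|
          ≤ |K s * (m s - f s)| + |(G s - K s) * m s| := by
            exact (abs_sub _ _).trans (by rw [abs_neg])
        _ ≤ L * |m s - f s| + |G s - K s| * M := by
            rw [abs_mul, abs_mul]
            have i1 := mul_le_mul_of_nonneg_right (hL s hsIcc) (abs_nonneg (m s - f s))
            have i2 := mul_le_mul_of_nonneg_left (hM s hsIcc) (abs_nonneg (G s - K s))
            linarith
    have h3 : (∫ s in (0:ℝ)..t, |deriv m s - deriv f s|) +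
        (∫ s in (0:ℝ)..t, (L * |m s - f s| + |G s - K s| * M)) ≤
        (∫ s in (0:ℝ)..t, (L + 1) * φ s) + ∫ s in (0:ℝ)..t, |G s - K s| * M := by
      rw [← intervalIntegral.integral_add (f := fun s => |deriv m s - deriv f s|)
          (g := fun s => L * |m s - f s| + |G s - K s| * M) ((hm1c.sub hf1c).abs.intervalIntegrable _ _ :
          IntervalIntegrable (fun s => |deriv m s - deriv f s|) volume 0 t)
        (((continuous_const.mul (hm1.continuous.sub hf1.continuous).abs).add
          ((hGc.sub hKc).abs.mul continuous_const)).intervalIntegrable _ _ :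
          IntervalIntegrable (fun s => L * |m s - f s| + |G s - K s| * M) volume 0 t),
        ← intervalIntegral.integral_add (f := fun s => (L + 1) * φ s)
          (g := fun s => |G s - K s| * M) ((continuous_const.mul hφc).intervalIntegrable _ _ :
          IntervalIntegrable (fun s => (L + 1) * φ s) volume 0 t)
          (((hGc.sub hKc).abs.mul continuous_const).intervalIntegrable _ _ :
          IntervalIntegrable (fun s => |G s - K s| * M) volume 0 t)]
      apply intervalIntegral.integral_mono_on ht.1
        (((hm1c.sub hf1c).abs.add ((continuous_const.mul (hm1.continuous.sub hf1.continuous).abs).add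
          ((hGc.sub hKc).abs.mul continuous_const))).intervalIntegrable _ _)
        (((continuous_const.mul hφc).add
          (((hGc.sub hKc).abs.mul continuous_const))).intervalIntegrable _ _)
      intro s _
      show |deriv m s - deriv f s| + (L * |m s - f s| + |G s - K s| * M) ≤
        (L + 1) * φ s + |G s - K s| * M
      have h4 : |deriv m s - deriv f s| ≤ φ s := le_add_of_nonneg_left (abs_nonneg _)
      have h5 : |m s - f s| ≤ φ s := le_add_of_nonneg_right (abs_nonneg _)
      have h6 := hφ0 s
      have hLnn : 0 ≤ L := (abs_nonneg _).trans (hL 0 ⟨le_refl _, hb⟩)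
      nlinarith [mul_le_mul_of_nonneg_left h5 hLnn]
    have h7 : (∫ s in (0:ℝ)..t, |G s - K s| * M) ≤ c := by
      refine le_trans ?_ hc
      rw [← intervalIntegral.integral_mul_const]
      apply intervalIntegral.integral_mono_interval (le_refl (0:ℝ)) ht.1 ht.2
      · filter_upwards with s using mul_nonneg (abs_nonneg _) hM0
      · exact ((hGc.sub hKc).abs.mul continuous_const).intervalIntegrable _ _
    calc φ t ≤ (∫ s in (0:ℝ)..t, |deriv m s - deriv f s|) +
        (∫ s in (0:ℝ)..t, (L * |m s - f s| + |G s - K s| * M)) := by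
          simp only [hφdef]; linarith
      _ ≤ (∫ s in (0:ℝ)..t, (L + 1) * φ s) + c := by linarith
      _ = c + ∫ s in (0:ℝ)..t, (L + 1) * φ s := by ring
  intro t ht
  have := my_gronwall φ (fun _ => L + 1) b c hφc continuous_const hφ0 (fun _ => hL0) hc0 key t ht
  refine this.trans ?_
  have h8 : (∫ s in (0:ℝ)..t, ((fun _ => L + 1) s)) ≤ (L + 1) * b := by
    simp only [intervalIntegral.integral_const, smul_eq_mul]
    nlinarith [ht.2, ht.1, hL0]
  exact mul_le_mul_of_nonneg_left (Real.exp_le_exp.2 h8) hc0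
lemma wronskian_rep (K G f m : ℝ → ℝ) (b : ℝ) (hb : 0 < b)
    (hf1 : Differentiable ℝ f) (hf2 : Differentiable ℝ (deriv f))
    (hf1c : Continuous (deriv f))
    (hm1 : Differentiable ℝ m) (hm2 : Differentiable ℝ (deriv m))
    (hm1c : Continuous (deriv m))
    (hfode : ∀ t ≥ (0:ℝ), deriv (deriv f) t + K t * f t = 0)
    (hmode : ∀ t ≥ (0:ℝ), deriv (deriv m) t + G t * m t = 0)
    (hGb : ∀ t ≥ b, G t = K t)
    (hfpos : ∀ t > (0:ℝ), 0 < f t) :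
    ∀ t ≥ b, m t = f t * (m b / f b +
      (deriv m b * f b - m b * deriv f b) * ∫ s in b..t, ((f s) ^ 2)⁻¹) := by
  set Wf : ℝ → ℝ := fun t => deriv m t * f t - m t * deriv f t with hWdef
  have hWd : ∀ x ≥ b, HasDerivAt Wf 0 x := by
    intro x hx
    have hx0 : (0:ℝ) ≤ x := (hb.le).trans hx
    have h1 : HasDerivAt Wf (deriv (deriv m) x * f x + deriv m x * deriv f x -
        (deriv m x * deriv f x + m x * deriv (deriv f) x)) x :=
      ((hm2 x).hasDerivAt.mul (hf1 x).hasDerivAt).sub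
        ((hm1 x).hasDerivAt.mul (hf2 x).hasDerivAt)
    have e1 : deriv (deriv m) x = -(G x * m x) := by have := hmode x hx0; linarith
    have e2 : deriv (deriv f) x = -(K x * f x) := by have := hfode x hx0; linarith
    convert h1 using 1
    rw [e1, e2, hGb x hx]; ring
  have hWcont : Continuous Wf := (hm1c.mul hf1.continuous).sub (hm1.continuous.mul hf1c)
  have hWconst : ∀ t ≥ b, Wf t = Wf b := by
    intro t ht
    exact constant_of_has_deriv_right_zero (f := Wf) (a := b) (b := t)
      hWcont.continuousOn
      (fun x hx => (hWd x hx.1).hasDerivWithinAt) t ⟨ht, le_refl _⟩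
  intro t ht
  have hfb : 0 < f b := hfpos b hb
  have hq : ∀ x ∈ uIcc b t, HasDerivAt (fun y => m y / f y)
      (Wf b * ((f x) ^ 2)⁻¹) x := by
    intro x hx
    rw [uIcc_of_le ht] at hx
    have hfx : 0 < f x := hfpos x (hb.trans_le hx.1)
    have h2 : HasDerivAt (fun y => m y / f y)
        ((deriv m x * f x - m x * deriv f x) / (f x) ^ 2) x :=
      ((hm1 x).hasDerivAt.div (hf1 x).hasDerivAt hfx.ne')
    have : (deriv m x * f x - m x * deriv f x) / (f x) ^ 2
        = Wf b * ((f x) ^ 2)⁻¹ := by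
      rw [← hWconst x hx.1, hWdef, div_eq_mul_inv]
    rwa [this] at h2
  have hint : IntervalIntegrable (fun x => Wf b * ((f x) ^ 2)⁻¹) MeasureTheory.volume b t := by
    apply ContinuousOn.intervalIntegrable
    apply ContinuousOn.mul continuousOn_const
    apply ContinuousOn.inv₀ ((hf1.continuous.pow 2).continuousOn)
    intro x hx
    rw [uIcc_of_le ht] at hx
    exact pow_ne_zero 2 (hfpos x (hb.trans_le hx.1)).ne'
  have hftc := intervalIntegral.integral_eq_sub_of_hasDerivAt hq hint
  rw [intervalIntegral.integral_const_mul] at hftc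
  have hft : 0 < f t := hfpos t (hb.trans_le ht)
  have : m t / f t = m b / f b + Wf b * ∫ s in b..t, ((f s) ^ 2)⁻¹ := by
    linarith [hftc]
  calc m t = f t * (m t / f t) := by field_simp
    _ = f t * (m b / f b + (deriv m b * f b - m b * deriv f b) * ∫ s in b..t, ((f s) ^ 2)⁻¹) := by
        rw [this, hWdef]
set_option maxHeartbeats 1000000 in
theorem stmt8 (K f : ℝ → ℝ)
    (hKc : Continuous K) (hf : ContDiff ℝ 2 f)
    (hfode : ∀ t ≥ (0:ℝ), deriv (deriv f) t + K t * f t = 0)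
    (hf0 : f 0 = 0) (hf0' : deriv f 0 = 1)
    (hfpos : ∀ t > (0:ℝ), 0 < f t)
    (hfint : IntegrableOn (fun t => ((f t) ^ 2)⁻¹) (Ici (1:ℝ))) :
    ∀ ε > (0:ℝ), ∀ a b : ℝ, 1 ≤ a → a < b →
      ∃ δ > (0:ℝ), ∀ G m : ℝ → ℝ, Continuous G →
        (∀ t, t ∉ Icc a b → G t = K t) →
        Real.sqrt (∫ t in Ici (0:ℝ), (G t - K t) ^ 2) < δ →
        ContDiff ℝ 2 m →
        (∀ t ≥ (0:ℝ), deriv (deriv m) t + G t * m t = 0) →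
        m 0 = 0 → deriv m 0 = 1 →
        ∫ t in Ici (1:ℝ), |((m t) ^ 2)⁻¹ - ((f t) ^ 2)⁻¹| < ε := by
  intro ε hε a b ha hab
  obtain ⟨hf1, hf2, hf1c, hf2c⟩ := cd2 f hf
  have hb1 : (1:ℝ) < b := lt_of_le_of_lt ha hab
  have hb0 : (0:ℝ) < b := lt_trans one_pos hb1
  -- bound for K on [0,b]
  obtain ⟨L, hL⟩ := isCompact_Icc.exists_bound_of_continuousOn
    (hKc.continuousOn (s := Icc (0:ℝ) b))
  simp only [Real.norm_eq_abs] at hL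
  -- min and max of f on [1,b]
  obtain ⟨x₀, hx₀, hmin⟩ := isCompact_Icc.exists_isMinOn (s := Icc (1:ℝ) b)
    ⟨1, ⟨le_refl _, hb1.le⟩⟩ (hf1.continuous.continuousOn)
  set μ := f x₀ with hμdef
  have hμpos : 0 < μ := hfpos x₀ (lt_of_lt_of_le one_pos hx₀.1)
  have hμ : ∀ s ∈ Icc (1:ℝ) b, μ ≤ f s := fun s hs => hmin hs
  obtain ⟨MF, hMF⟩ := isCompact_Icc.exists_bound_of_continuousOn
    (hf1.continuous.continuousOn (s := Icc (1:ℝ) b))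
  simp only [Real.norm_eq_abs] at hMF
  have hMFb : ∀ s ∈ Icc (1:ℝ) b, f s ≤ MF := fun s hs => (le_abs_self _).trans (hMF s hs)
  have hμMF : μ ≤ MF := hMFb x₀ hx₀
  -- constants
  set IK := ∫ s in (0:ℝ)..b, |K s| with hIKdef
  set κ := (b + 1) / 2 with hκdef
  have hκ0 : 0 < κ := by positivity
  set M₀ := Real.exp (b + IK + κ) with hM₀def
  have hM₀0 : 0 < M₀ := Real.exp_pos _
  set C₁ := M₀ * κ * Real.exp ((L + 1) * b) with hC₁def
  have hC₁0 : 0 < C₁ := by positivity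
  set Htot := ∫ t in Ici (1:ℝ), ((f t) ^ 2)⁻¹ with hHdef
  have hH0 : 0 ≤ Htot := setIntegral_nonneg measurableSet_Ici (fun t _ => by positivity)
  set C₂ := C₁ / μ + C₁ * (f b + |deriv f b|) * Htot with hC₂def
  have hfbμ : μ ≤ f b := hμ b ⟨hb1.le, le_refl _⟩
  have hfb : 0 < f b := lt_of_lt_of_le hμpos hfbμ
  have hC₂0 : 0 < C₂ := by
    have h1 : 0 < C₁ / μ := by positivity
    have h2 : 0 ≤ C₁ * (f b + |deriv f b|) * Htot := by positivity
    rw [hC₂def]; linarith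
  set C₃ := 4 * C₁ * (2 * MF + μ) / (μ ^ 4) with hC₃def
  have hMF0 : 0 < MF := lt_of_lt_of_le hμpos hμMF
  have hC₃0 : 0 < C₃ := by positivity
  set S := C₃ * (b - 1) + 10 * C₂ * Htot with hSdef
  have hS0 : 0 ≤ S := by
    have i1 : 0 ≤ C₃ * (b - 1) := mul_nonneg hC₃0.le (by linarith)
    have i2 : 0 ≤ 10 * C₂ * Htot := by positivity
    simp only [hSdef]; linarith
  refine ⟨min (min 1 (μ / (2 * C₁))) (min (1 / (2 * C₂)) (ε / (S + 1))), ?_, ?_⟩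
  · have i1 : 0 < ε / (S + 1) := by positivity
    have i2 : 0 < μ / (2 * C₁) := by positivity
    have i3 : 0 < 1 / (2 * C₂) := by positivity
    simp only [lt_min_iff]
    exact ⟨⟨one_pos, i2⟩, i3, i1⟩
  set δ := min (min 1 (μ / (2 * C₁))) (min (1 / (2 * C₂)) (ε / (S + 1))) with hδdef
  have hδ1 : δ ≤ 1 := le_trans (min_le_left _ _) (min_le_left _ _)
  have hδ2 : δ ≤ μ / (2 * C₁) := le_trans (min_le_left _ _) (min_le_right _ _)
  have hδ3 : δ ≤ 1 / (2 * C₂) := le_trans (min_le_right _ _) (min_le_left _ _)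
  have hδ4 : δ ≤ ε / (S + 1) := le_trans (min_le_right _ _) (min_le_right _ _)
  intro G m hGc hsupp hδ' hm hmode hm0 hm0'
  obtain ⟨hm1, hm2, hm1c, hm2c⟩ := cd2 m hm
  have hδ0 : 0 < δ := by
    have i1 : 0 < ε / (S + 1) := by positivity
    have i2 : 0 < μ / (2 * C₁) := by positivity
    have i3 : 0 < 1 / (2 * C₂) := by positivity
    simp only [hδdef, lt_min_iff]
    exact ⟨⟨one_pos, i2⟩, i3, i1⟩
  set D := ∫ t in Ici (0:ℝ), (G t - K t) ^ 2 with hDdef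
  have hD0 : 0 ≤ D := setIntegral_nonneg measurableSet_Ici (fun t _ => sq_nonneg _)
  have hDδ : D < δ ^ 2 := by
    have h2 : 0 ≤ Real.sqrt D := Real.sqrt_nonneg _
    calc D = Real.sqrt D ^ 2 := (Real.sq_sqrt hD0).symm
      _ < δ ^ 2 := by rw [sq, sq]; exact mul_self_lt_mul_self h2 hδ'
  have hcs : HasCompactSupport (fun x => (G x - K x) ^ 2) :=
    HasCompactSupport.intro (isCompact_Icc (a := a) (b := b))
      (fun x hx => by simp [hsupp x hx])
  have hu2int : Integrable (fun x => (G x - K x) ^ 2) :=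
    ((hGc.sub hKc).pow 2).integrable_of_hasCompactSupport hcs
  set ι := ∫ s in (0:ℝ)..b, |G s - K s| with hιdef
  have hι0 : 0 ≤ ι := by
    rw [hιdef]
    exact intervalIntegral.integral_nonneg hb0.le (fun s _ => abs_nonneg _)
  have hιδ : ι ≤ κ * δ := by
    rw [hιdef, intervalIntegral.integral_of_le hb0.le]
    have hptw : ∀ x : ℝ, |G x - K x| ≤ δ / 2 + (G x - K x) ^ 2 / (2 * δ) := by
      intro x
      have h2δ : (0:ℝ) < 2 * δ := by linarith
      have h3 : (|G x - K x| - δ / 2) * (2 * δ) ≤ (G x - K x) ^ 2 := by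
        have e : (|G x - K x| - δ) ^ 2 =
            (G x - K x) ^ 2 - (|G x - K x| - δ / 2) * (2 * δ) := by
          rw [← sq_abs (G x - K x)]; ring
        have := sq_nonneg (|G x - K x| - δ)
        linarith
      have h4 := (le_div_iff₀ h2δ).2 h3
      linarith
    have hint1 : IntegrableOn (fun x => |G x - K x|) (Ioc (0:ℝ) b) :=
      ((hGc.sub hKc).abs).integrableOn_Ioc
    have hint3 : IntegrableOn (fun x => (G x - K x) ^ 2 / (2 * δ)) (Ioc (0:ℝ) b) :=
      (((hGc.sub hKc).pow 2).div_const _).integrableOn_Ioc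
    have hint2 : IntegrableOn (fun x => δ / 2 + (G x - K x) ^ 2 / (2 * δ)) (Ioc (0:ℝ) b) :=
      (integrableOn_const measure_Ioc_lt_top.ne).add hint3
    have hIoc : (∫ x in Ioc (0:ℝ) b, (G x - K x) ^ 2) ≤ D := by
      rw [hDdef]
      exact setIntegral_mono_set hu2int.integrableOn
        (Filter.Eventually.of_forall (fun x => sq_nonneg _))
        (HasSubset.Subset.eventuallyLE (fun x hx => le_of_lt hx.1))
    calc ∫ x in Ioc (0:ℝ) b, |G x - K x|
        ≤ ∫ x in Ioc (0:ℝ) b, (δ / 2 + (G x - K x) ^ 2 / (2 * δ)) :=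
          setIntegral_mono_on hint1 hint2 measurableSet_Ioc (fun x _ => hptw x)
      _ = δ / 2 * b + (∫ x in Ioc (0:ℝ) b, (G x - K x) ^ 2) / (2 * δ) := by
          rw [MeasureTheory.integral_add (μ := volume.restrict (Ioc (0:ℝ) b)) (f := fun _ => δ / 2)
              (g := fun x => (G x - K x) ^ 2 / (2 * δ)) (integrableOn_const measure_Ioc_lt_top.ne :
              IntegrableOn (fun _ => δ / 2) (Ioc (0:ℝ) b)).integrable hint3.integrable,
            setIntegral_const, MeasureTheory.integral_div, Real.volume_real_Ioc_of_le hb0.le, smul_eq_mul, sub_zero]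
          ring
      _ ≤ δ / 2 * b + δ ^ 2 / (2 * δ) := by
          gcongr
          exact hIoc.trans hDδ.le
      _ = κ * δ := by
          rw [hκdef]; field_simp
  -- a priori bound for m on [0,b]
  have hMbd : ∀ s ∈ Icc (0:ℝ) b, |m s| ≤ M₀ := by
    intro s hs
    have h1 := apriori G m b hb0.le hGc hm1 hm2 hm1c hm2c hmode hm0 hm0' s hs
    have h2 : (∫ x in (0:ℝ)..b, (1 + |G x|)) ≤ b + IK + κ := by
      rw [intervalIntegral.integral_add intervalIntegrable_const
        (hGc.abs.intervalIntegrable _ _), intervalIntegral.integral_const, smul_eq_mul]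
      have h3 : (∫ x in (0:ℝ)..b, |G x|) ≤ IK + ι := by
        rw [hIKdef, hιdef, ← intervalIntegral.integral_add (f := fun s => |K s|)
          (g := fun s => |G s - K s|)
          (hKc.abs.intervalIntegrable _ _ : IntervalIntegrable (fun s => |K s|) volume 0 b)
          ((hGc.sub hKc).abs.intervalIntegrable _ _ :
            IntervalIntegrable (fun s => |G s - K s|) volume 0 b)]
        apply intervalIntegral.integral_mono_on hb0.le (hGc.abs.intervalIntegrable _ _)
          ((hKc.abs.add (hGc.sub hKc).abs).intervalIntegrable _ _)
        intro x _
        calc |G x| = |K x + (G x - K x)| := by ring_nf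
          _ ≤ |K x| + |G x - K x| := abs_add_le _ _
      have h4 : ι ≤ κ := hιδ.trans (by
        calc κ * δ ≤ κ * 1 := mul_le_mul_of_nonneg_left hδ1 hκ0.le
          _ = κ := mul_one κ)
      linarith
    have h5 : |m s| ≤ Real.exp (∫ x in (0:ℝ)..b, (1 + |G x|)) :=
      le_trans (le_add_of_nonneg_right (abs_nonneg _)) h1
    exact h5.trans (by rw [hM₀def]; exact Real.exp_le_exp.2 h2)
  -- closeness on [0,b]
  have hφb : ∀ t ∈ Icc (0:ℝ) b, |m t - f t| + |deriv m t - deriv f t| ≤ C₁ * δ := by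
    intro t ht
    have := diff_bound K G f m b L M₀ (M₀ * (κ * δ)) hb0.le hKc hGc hf1 hf2 hf1c hf2c
      hm1 hm2 hm1c hm2c hfode hmode hf0 hm0 hf0' hm0' hL hMbd hM₀0.le
      (by rw [← hιdef]
          calc ι * M₀ ≤ κ * δ * M₀ := mul_le_mul_of_nonneg_right hιδ hM₀0.le
            _ = M₀ * (κ * δ) := by ring) (by positivity) t ht
    calc |m t - f t| + |deriv m t - deriv f t|
        ≤ M₀ * (κ * δ) * Real.exp ((L + 1) * b) := this
      _ = C₁ * δ := by rw [hC₁def]; ring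
  -- G = K on [b,∞)
  have hGb : ∀ t ≥ b, G t = K t := by
    have heq : Set.EqOn G K (Ioi b) := fun x hx =>
      hsupp x (fun h => absurd h.2 (not_le.2 hx))
    have hcl := heq.closure hGc hKc
    intro t ht
    rcases eq_or_lt_of_le ht with h | h
    · exact hcl (by rw [closure_Ioi]; exact ht)
    · exact hsupp t (fun hmem => absurd hmem.2 (not_le.2 h))
  have hrep := wronskian_rep K G f m b hb0 hf1 hf2 hf1c hm1 hm2 hm1c hfode hmode hGb hfpos
  have hmb := hφb b ⟨hb0.le, le_refl b⟩
  have hmfb : |m b - f b| ≤ C₁ * δ :=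
    le_trans (le_add_of_nonneg_right (abs_nonneg _)) hmb
  have hmfb' : |deriv m b - deriv f b| ≤ C₁ * δ :=
    le_trans (le_add_of_nonneg_left (abs_nonneg _)) hmb
  set W := deriv m b * f b - m b * deriv f b with hWdef
  have hWbd : |W| ≤ C₁ * δ * (f b + |deriv f b|) := by
    have e : W = (deriv m b - deriv f b) * f b - (m b - f b) * deriv f b := by
      rw [hWdef]; ring
    have i1 : |deriv m b - deriv f b| * f b ≤ C₁ * δ * f b :=
      mul_le_mul_of_nonneg_right hmfb' hfb.le
    have i2 : |m b - f b| * |deriv f b| ≤ C₁ * δ * |deriv f b| :=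
      mul_le_mul_of_nonneg_right hmfb (abs_nonneg _)
    calc |W| ≤ |(deriv m b - deriv f b) * f b| + |(m b - f b) * deriv f b| := by
          rw [e]; exact abs_sub _ _
      _ = |deriv m b - deriv f b| * f b + |m b - f b| * |deriv f b| := by
          rw [abs_mul, abs_mul, abs_of_pos hfb]
      _ ≤ C₁ * δ * f b + C₁ * δ * |deriv f b| := by linarith
      _ = C₁ * δ * (f b + |deriv f b|) := by ring
  have hqb : |m b / f b - 1| ≤ C₁ * δ / μ := by
    have e : m b / f b - 1 = (m b - f b) / f b := by field_simp
    rw [e, abs_div, abs_of_pos hfb]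
    exact div_le_div₀ (by positivity) hmfb hμpos hfbμ
  set q : ℝ → ℝ := fun t => m b / f b + W * (∫ s in b..t, ((f s) ^ 2)⁻¹) with hqdef
  have hmq : ∀ t ≥ b, m t = f t * q t := fun t ht => hrep t ht
  have hhb : ∀ t ≥ b, 0 ≤ (∫ s in b..t, ((f s) ^ 2)⁻¹) ∧
      (∫ s in b..t, ((f s) ^ 2)⁻¹) ≤ Htot := by
    intro t ht
    refine ⟨intervalIntegral.integral_nonneg ht (fun s _ => by positivity), ?_⟩
    rw [intervalIntegral.integral_of_le ht, hHdef]
    exact setIntegral_mono_set hfint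
      (Filter.Eventually.of_forall (fun x => by positivity))
      (HasSubset.Subset.eventuallyLE (fun x hx => hb1.le.trans (le_of_lt hx.1)))
  have hqbd : ∀ t ≥ b, |q t - 1| ≤ C₂ * δ := by
    intro t ht
    obtain ⟨h0, hH⟩ := hhb t ht
    have i3 : |W| * (∫ s in b..t, ((f s) ^ 2)⁻¹) ≤ (C₁ * δ * (f b + |deriv f b|)) * Htot :=
      mul_le_mul hWbd hH h0 (by positivity)
    calc |q t - 1| = |(m b / f b - 1) + W * (∫ s in b..t, ((f s) ^ 2)⁻¹)| := by
          have e4 : q t - 1 = (m b / f b - 1) + W * (∫ s in b..t, ((f s) ^ 2)⁻¹) := by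
            simp only [hqdef]; ring
          rw [e4]
      _ ≤ |m b / f b - 1| + |W * (∫ s in b..t, ((f s) ^ 2)⁻¹)| := abs_add_le _ _
      _ = |m b / f b - 1| + |W| * (∫ s in b..t, ((f s) ^ 2)⁻¹) := by
          rw [abs_mul, abs_of_nonneg h0]
      _ ≤ C₁ * δ / μ + (C₁ * δ * (f b + |deriv f b|)) * Htot := by linarith
      _ = C₂ * δ := by rw [hC₂def]; field_simp
  have hq12 : ∀ t ≥ b, 1/2 ≤ q t ∧ q t ≤ 3/2 := by
    intro t ht
    have h2 : C₂ * δ ≤ 1/2 := by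
      calc C₂ * δ ≤ C₂ * (1/(2*C₂)) := mul_le_mul_of_nonneg_left hδ3 hC₂0.le
        _ = 1/2 := by field_simp
    have h3 := abs_le.1 ((hqbd t ht).trans h2)
    exact ⟨by linarith [h3.1], by linarith [h3.2]⟩
  -- pointwise bound on [b, ∞)
  have hbound2 : ∀ t ≥ b, |((m t) ^ 2)⁻¹ - ((f t) ^ 2)⁻¹| ≤
      10 * C₂ * δ * ((f t) ^ 2)⁻¹ := by
    intro t ht
    have hft : 0 < f t := hfpos t (lt_of_lt_of_le hb0 ht)
    obtain ⟨hql, hqu⟩ := hq12 t ht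
    have hq0 : 0 < q t := lt_of_lt_of_le (by norm_num) hql
    have e : ((m t) ^ 2)⁻¹ - ((f t) ^ 2)⁻¹ =
        ((f t) ^ 2)⁻¹ * ((1 - q t ^ 2) / q t ^ 2) := by
      rw [hmq t ht]; field_simp
    rw [e, abs_mul, abs_of_pos (by positivity : (0:ℝ) < ((f t) ^ 2)⁻¹)]
    have h1 : |1 - q t ^ 2| ≤ (C₂ * δ) * (5/2) := by
      have e2 : 1 - q t ^ 2 = (1 - q t) * (1 + q t) := by ring
      have h3 : |1 - q t| ≤ C₂ * δ := by rw [abs_sub_comm]; exact hqbd t ht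
      have h4 : |1 + q t| ≤ 5/2 := by rw [abs_of_pos (by linarith)]; linarith
      rw [e2, abs_mul]
      exact mul_le_mul h3 h4 (abs_nonneg _) (by positivity)
    have h6 : (1/4:ℝ) ≤ q t ^ 2 := by
      rw [sq]
      calc (1/4:ℝ) = (1/2) * (1/2) := by norm_num
        _ ≤ q t * q t := mul_le_mul hql hql (by norm_num) hq0.le
    have h7 : 10 * C₂ * δ * (1/4) ≤ 10 * C₂ * δ * (q t ^ 2) :=
      mul_le_mul_of_nonneg_left h6 (by positivity)
    have h8 : |(1 - q t ^ 2) / q t ^ 2| ≤ 10 * C₂ * δ := by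
      rw [abs_div, abs_of_pos (by positivity : (0:ℝ) < q t ^ 2),
        div_le_iff₀ (by positivity : (0:ℝ) < q t ^ 2)]
      calc |1 - q t ^ 2| ≤ (C₂ * δ) * (5/2) := h1
        _ = 10 * C₂ * δ * (1/4) := by ring
        _ ≤ 10 * C₂ * δ * q t ^ 2 := h7
    calc ((f t) ^ 2)⁻¹ * |(1 - q t ^ 2) / q t ^ 2|
        ≤ ((f t) ^ 2)⁻¹ * (10 * C₂ * δ) := mul_le_mul_of_nonneg_left h8 (by positivity)
      _ = 10 * C₂ * δ * ((f t) ^ 2)⁻¹ := by ring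
  -- pointwise bound on [1, b]
  have hC₁δμ : C₁ * δ ≤ μ / 2 := by
    calc C₁ * δ ≤ C₁ * (μ / (2 * C₁)) := mul_le_mul_of_nonneg_left hδ2 hC₁0.le
      _ = μ / 2 := by field_simp
  have hbound1 : ∀ t ∈ Icc (1:ℝ) b, |((m t) ^ 2)⁻¹ - ((f t) ^ 2)⁻¹| ≤ C₃ * δ := by
    intro t ht
    have htIcc0 : t ∈ Icc (0:ℝ) b := ⟨le_trans zero_le_one ht.1, ht.2⟩
    have hmf : |m t - f t| ≤ C₁ * δ :=
      le_trans (le_add_of_nonneg_right (abs_nonneg _)) (hφb t htIcc0)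
    have hfl := hμ t ht
    have hfu := hMFb t ht
    have habs := abs_le.1 hmf
    have hml : μ / 2 ≤ m t := by linarith [habs.1]
    have hmu : m t ≤ MF + μ / 2 := by linarith [habs.2]
    have hft : 0 < f t := lt_of_lt_of_le hμpos hfl
    have hmt : 0 < m t := lt_of_lt_of_le (by linarith) hml
    have e : ((m t) ^ 2)⁻¹ - ((f t) ^ 2)⁻¹ =
        (f t ^ 2 - m t ^ 2) / (m t ^ 2 * f t ^ 2) := by
      field_simp
    rw [e, abs_div, abs_of_pos (by positivity : (0:ℝ) < m t ^ 2 * f t ^ 2),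
      div_le_iff₀ (by positivity : (0:ℝ) < m t ^ 2 * f t ^ 2)]
    have h1 : |f t ^ 2 - m t ^ 2| ≤ (C₁ * δ) * (2 * MF + μ) := by
      have e2 : f t ^ 2 - m t ^ 2 = (f t - m t) * (f t + m t) := by ring
      rw [e2, abs_mul, abs_sub_comm]
      refine mul_le_mul hmf ?_ (abs_nonneg _) (by positivity)
      rw [abs_of_pos (by linarith)]
      linarith
    have i1 : (μ/2) ^ 2 ≤ m t ^ 2 := pow_le_pow_left₀ (by positivity) hml 2
    have i2 : μ ^ 2 ≤ f t ^ 2 := pow_le_pow_left₀ hμpos.le hfl 2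
    have h2 : μ ^ 4 / 4 ≤ m t ^ 2 * f t ^ 2 := by
      calc μ ^ 4 / 4 = (μ/2) ^ 2 * μ ^ 2 := by ring
        _ ≤ m t ^ 2 * f t ^ 2 := mul_le_mul i1 i2 (by positivity) (by positivity)
    have h3 : C₃ * δ * (μ ^ 4 / 4) ≤ C₃ * δ * (m t ^ 2 * f t ^ 2) :=
      mul_le_mul_of_nonneg_left h2 (by positivity)
    have h4 : C₃ * δ * (μ ^ 4 / 4) = (C₁ * δ) * (2 * MF + μ) := by
      rw [hC₃def]; field_simp
    linarith
  -- integrability and final estimate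
  have hImeas : AEStronglyMeasurable
      (fun t => |((m t) ^ 2)⁻¹ - ((f t) ^ 2)⁻¹|) (volume : Measure ℝ) :=
    ((((hm1.continuous.pow 2).measurable.inv).sub
      ((hf1.continuous.pow 2).measurable.inv)).abs).aestronglyMeasurable
  have hint1 : IntegrableOn (fun t => |((m t) ^ 2)⁻¹ - ((f t) ^ 2)⁻¹|) (Ico 1 b) := by
    refine Measure.integrableOn_of_bounded (M := C₃ * δ) measure_Ico_lt_top.ne hImeas ?_
    rw [ae_restrict_iff' measurableSet_Ico]
    filter_upwards with x hx
    rw [Real.norm_eq_abs, abs_abs]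
    exact hbound1 x ⟨hx.1, hx.2.le⟩
  have hdom : IntegrableOn (fun t => 10 * C₂ * δ * ((f t) ^ 2)⁻¹) (Ici b) :=
    (hfint.mono_set (Ici_subset_Ici.2 hb1.le)).const_mul _
  have hint2 : IntegrableOn (fun t => |((m t) ^ 2)⁻¹ - ((f t) ^ 2)⁻¹|) (Ici b) := by
    refine MeasureTheory.Integrable.mono hdom hImeas.restrict ?_
    rw [ae_restrict_iff' measurableSet_Ici]
    filter_upwards with x hx
    rw [Real.norm_eq_abs, Real.norm_eq_abs, abs_abs,
      abs_of_nonneg (by positivity : (0:ℝ) ≤ 10 * C₂ * δ * ((f x) ^ 2)⁻¹)]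
    exact hbound2 x hx
  have hdisj : Disjoint (Ico (1:ℝ) b) (Ici b) :=
    Set.disjoint_left.2 (fun x hx hx' => absurd hx.2 (not_lt.2 hx'))
  have hsplit : (∫ t in Ici (1:ℝ), |((m t) ^ 2)⁻¹ - ((f t) ^ 2)⁻¹|) =
      (∫ t in Ico (1:ℝ) b, |((m t) ^ 2)⁻¹ - ((f t) ^ 2)⁻¹|) +
      (∫ t in Ici b, |((m t) ^ 2)⁻¹ - ((f t) ^ 2)⁻¹|) := by
    rw [← setIntegral_union hdisj measurableSet_Ici hint1 hint2,
      Ico_union_Ici_eq_Ici hb1.le]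
  have hI1 : (∫ t in Ico (1:ℝ) b, |((m t) ^ 2)⁻¹ - ((f t) ^ 2)⁻¹|) ≤ C₃ * δ * (b - 1) := by
    calc (∫ t in Ico (1:ℝ) b, |((m t) ^ 2)⁻¹ - ((f t) ^ 2)⁻¹|)
        ≤ ∫ _t in Ico (1:ℝ) b, C₃ * δ :=
          setIntegral_mono_on hint1 (integrableOn_const measure_Ico_lt_top.ne)
            measurableSet_Ico (fun x hx => hbound1 x ⟨hx.1, hx.2.le⟩)
      _ = C₃ * δ * (b - 1) := by
          rw [setIntegral_const, Real.volume_real_Ico_of_le hb1.le, smul_eq_mul]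
          ring
  have hI2 : (∫ t in Ici b, |((m t) ^ 2)⁻¹ - ((f t) ^ 2)⁻¹|) ≤ 10 * C₂ * δ * Htot := by
    calc (∫ t in Ici b, |((m t) ^ 2)⁻¹ - ((f t) ^ 2)⁻¹|)
        ≤ ∫ t in Ici b, 10 * C₂ * δ * ((f t) ^ 2)⁻¹ :=
          setIntegral_mono_on hint2 hdom measurableSet_Ici (fun x hx => hbound2 x hx)
      _ = 10 * C₂ * δ * ∫ t in Ici b, ((f t) ^ 2)⁻¹ := by
          rw [MeasureTheory.integral_const_mul]
      _ ≤ 10 * C₂ * δ * Htot := by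
          refine mul_le_mul_of_nonneg_left ?_ (by positivity)
          rw [hHdef]
          exact setIntegral_mono_set hfint
            (Filter.Eventually.of_forall (fun x => by positivity))
            (HasSubset.Subset.eventuallyLE (Ici_subset_Ici.2 hb1.le))
  have hfinal : S * δ < ε := by
    have hS1 : (0:ℝ) < S + 1 := by linarith
    have h9 : S * (ε / (S + 1)) < ε := by
      rw [← mul_div_assoc, div_lt_iff₀ hS1]
      have e : ε * (S + 1) - S * ε = ε := by ring
      linarith
    calc S * δ ≤ S * (ε / (S + 1)) := mul_le_mul_of_nonneg_left hδ4 hS0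
      _ < ε := h9
  calc (∫ t in Ici (1:ℝ), |((m t) ^ 2)⁻¹ - ((f t) ^ 2)⁻¹|)
      = (∫ t in Ico (1:ℝ) b, |((m t) ^ 2)⁻¹ - ((f t) ^ 2)⁻¹|) +
        (∫ t in Ici b, |((m t) ^ 2)⁻¹ - ((f t) ^ 2)⁻¹|) := hsplit
    _ ≤ C₃ * δ * (b - 1) + 10 * C₂ * δ * Htot := by linarith
    _ = S * δ := by rw [hSdef]; ring
    _ < ε := hfinal
end

section
/- Let m be the solution of m'' + K m = 0 on [0,∞) with m(0) = 0, m'(0) = 1, where K is continuous, K(t) ≤ 0 on [0,∞), and ∫_0^∞ t·K(t) dt > −∞. Then the surface of revolution M* = (ℝ², dt² + m(t)²dθ²) admits a finite total curvature; equivalently, ∫_0^∞ |K(t)| m(t) dt < ∞. -/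
open MeasureTheory Set

theorem stmt9 (K m : ℝ → ℝ)
    (hKc : Continuous K) (hKneg : ∀ t ≥ (0:ℝ), K t ≤ 0)
    (hm : ContDiff ℝ 2 m)
    (hmode : ∀ t ≥ (0:ℝ), deriv (deriv m) t + K t * m t = 0)
    (hm0 : m 0 = 0) (hm0' : deriv m 0 = 1)
    (hKint : IntegrableOn (fun t => t * |K t|) (Ici (0:ℝ))) :
    IntegrableOn (fun t => |K t| * m t) (Ici (0:ℝ)) := by
  -- regularity
  have h2 : ContDiff ℝ ((1:WithTop ℕ∞) + 1) m := by norm_num; exact hm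
  have h1 := (contDiff_succ_iff_deriv.mp h2).2.2
  have hdm : Differentiable ℝ m := h2.differentiable (by norm_num)
  have hdm' : Differentiable ℝ (deriv m) := (contDiff_one_iff_deriv.mp h1).1
  -- the ODE in the form m'' = (-K) m
  have hode : ∀ t ≥ (0:ℝ), deriv (deriv m) t = (-K t) * m t := by
    intro t ht
    have := hmode t ht
    linarith [hmode t ht]
  -- positivity of m near 0
  have hslope : ∀ᶠ t in nhdsWithin (0:ℝ) (Ioi 0), 0 < m t := by
    have hd : HasDerivAt m 1 0 := by
      simpa [hm0'] using (hdm 0).hasDerivAt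
    have := hasDerivAt_iff_tendsto_slope.mp hd
    have h' : Filter.Tendsto (slope m 0) (nhdsWithin 0 (Ioi 0)) (nhds 1) :=
      this.mono_left (nhdsWithin_mono _ (fun x hx => ne_of_gt hx))
    have hev : ∀ᶠ t in nhdsWithin (0:ℝ) (Ioi 0), (0:ℝ) < slope m 0 t :=
      h'.eventually (eventually_gt_nhds one_pos)
    filter_upwards [hev, self_mem_nhdsWithin] with t h1t h2t
    have hsl : slope m 0 t = t⁻¹ * m t := by simp [slope, hm0]
    rw [hsl] at h1t
    have ht : (0:ℝ) < t := h2t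
    have key : m t = t * (t⁻¹ * m t) := by field_simp
    rw [key]
    exact mul_pos ht h1t
  obtain ⟨u, hu, huIoc⟩ := mem_nhdsGT_iff_exists_Ioc_subset.mp hslope
  have hu0 : (0:ℝ) < u := hu
  -- m is nonnegative on [0,∞)
  have hm_nonneg : ∀ t ≥ (0:ℝ), 0 ≤ m t := by
    by_contra hcon
    push_neg at hcon
    obtain ⟨t0, ht0, hmt0⟩ := hcon
    set A : Set ℝ := {t | 0 ≤ t ∧ m t < 0} with hA
    have hAne : A.Nonempty := ⟨t0, ht0, hmt0⟩
    have hAbdd : BddBelow A := ⟨0, fun a ha => ha.1⟩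
    set τ := sInf A with hτ
    have hτlb : ∀ a ∈ A, u ≤ a := by
      intro a ha
      by_contra hau
      push_neg at hau
      have ha0 : (0:ℝ) < a := by
        rcases lt_or_eq_of_le ha.1 with h | h
        · exact h
        · exfalso
          rw [← h] at ha
          have h2' : m 0 < 0 := ha.2
          rw [hm0] at h2'
          exact absurd h2' (lt_irrefl 0)
      have : 0 < m a := huIoc ⟨ha0, hau.le⟩
      linarith [ha.2]
    have hτu : u ≤ τ := le_csInf hAne hτlb
    have hτ0 : (0:ℝ) < τ := lt_of_lt_of_le hu0 hτu
    -- m τ ≤ 0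
    have hmτ : m τ ≤ 0 := by
      by_contra hpos
      push_neg at hpos
      have : ∀ᶠ t in nhds τ, 0 < m t :=
        hm.continuous.continuousAt.eventually (eventually_gt_nhds hpos)
      obtain ⟨ε, hε, hball⟩ := Metric.eventually_nhds_iff.mp this
      obtain ⟨a, haA, halt⟩ := (csInf_lt_iff hAbdd hAne).mp
        (show sInf A < τ + ε by linarith)
      have haτ : τ ≤ a := csInf_le hAbdd haA
      have : 0 < m a := hball (by rw [Real.dist_eq]; rw [abs_lt]; constructor <;> linarith)
      linarith [haA.2]
    -- m ≥ 0 on [0, τ)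
    have hmpos : ∀ s, 0 ≤ s → s < τ → 0 ≤ m s := by
      intro s hs hsτ
      by_contra hneg
      push_neg at hneg
      exact absurd (csInf_le hAbdd ⟨hs, hneg⟩) (not_le.mpr hsτ)
    -- deriv m is monotone on [0, τ]
    have hmono : MonotoneOn (deriv m) (Icc 0 τ) := by
      apply monotoneOn_of_deriv_nonneg (convex_Icc 0 τ) hdm'.continuous.continuousOn
        hdm'.differentiableOn
      intro x hx
      rw [interior_Icc] at hx
      rw [hode x hx.1.le]
      exact mul_nonneg (by linarith [hKneg x hx.1.le]) (hmpos x hx.1.le hx.2)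
    have hd1 : ∀ x ∈ Icc (0:ℝ) τ, (1:ℝ) ≤ deriv m x := by
      intro x hx
      calc (1:ℝ) = deriv m 0 := hm0'.symm
        _ ≤ deriv m x := hmono ⟨le_refl 0, hτ0.le⟩ hx hx.1
    -- hence m τ ≥ τ
    have hgm : MonotoneOn (fun t => m t - t) (Icc 0 τ) := by
      apply monotoneOn_of_deriv_nonneg (f := fun t => m t - t) (convex_Icc 0 τ)
        (hdm.continuous.sub continuous_id).continuousOn
        ((hdm.sub differentiable_id).differentiableOn)
      intro x hx
      rw [interior_Icc] at hx
      have : deriv (fun t => m t - t) x = deriv m x - 1 := by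
        rw [deriv_fun_sub (hdm x) differentiableAt_fun_id]
        simp
      rw [this]
      linarith [hd1 x ⟨hx.1.le, hx.2.le⟩]
    have hfin : m 0 - 0 ≤ m τ - τ := hgm ⟨le_refl 0, hτ0.le⟩ ⟨hτ0.le, le_refl τ⟩ hτ0.le
    rw [hm0] at hfin
    linarith
  -- deriv m monotone on [0,∞), ≥ 1
  have hmono : MonotoneOn (deriv m) (Ici 0) := by
    apply monotoneOn_of_deriv_nonneg (convex_Ici 0) hdm'.continuous.continuousOn
      hdm'.differentiableOn
    intro x hx
    rw [interior_Ici] at hx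
    rw [hode x hx.le]
    exact mul_nonneg (by linarith [hKneg x hx.le]) (hm_nonneg x hx.le)
  have hd1 : ∀ x ≥ (0:ℝ), (1:ℝ) ≤ deriv m x := by
    intro x hx
    calc (1:ℝ) = deriv m 0 := hm0'.symm
      _ ≤ deriv m x := hmono (le_refl (0:ℝ)) hx hx
  -- m t ≤ t * deriv m t on [0,∞)
  have hmle : ∀ t ≥ (0:ℝ), m t ≤ t * deriv m t := by
    intro t ht
    have hmonou : MonotoneOn (fun t => t * deriv m t - m t) (Ici 0) := by
      apply monotoneOn_of_deriv_nonneg (f := fun t => t * deriv m t - m t) (convex_Ici 0)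
        ((continuous_id.mul hdm'.continuous).sub hdm.continuous).continuousOn
        ((differentiable_id.mul hdm').sub hdm).differentiableOn
      intro x hx
      rw [interior_Ici] at hx
      have hu : HasDerivAt (fun t => t * deriv m t - m t)
          (1 * deriv m x + x * deriv (deriv m) x - deriv m x) x :=
        ((hasDerivAt_id x).mul (hdm' x).hasDerivAt).sub (hdm x).hasDerivAt
      rw [hu.deriv]
      have : 1 * deriv m x + x * deriv (deriv m) x - deriv m x = x * deriv (deriv m) x := by ring
      rw [this, hode x hx.le]
      exact mul_nonneg hx.le (mul_nonneg (by linarith [hKneg x hx.le]) (hm_nonneg x hx.le))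
    have hfin : 0 * deriv m 0 - m 0 ≤ t * deriv m t - m t := hmonou (le_refl (0:ℝ)) ht ht
    rw [hm0] at hfin
    linarith
  -- the Gronwall bound
  set C := ∫ x in Ici (0:ℝ), x * |K x| with hC
  have hKabs : Continuous (fun s => s * |K s|) := continuous_id.mul hKc.abs
  set G := fun t => ∫ s in (0:ℝ)..t, s * |K s| with hG
  have hGd : ∀ x, HasDerivAt G (x * |K x|) x := fun x =>
    (hKabs.integral_hasStrictDerivAt 0 x).hasDerivAt
  have hlog : ∀ t ≥ (0:ℝ), Real.log (deriv m t) ≤ G t := by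
    intro t ht
    have hmono2 : MonotoneOn (fun t => G t - Real.log (deriv m t)) (Ici 0) := by
      apply monotoneOn_of_deriv_nonneg (convex_Ici 0)
      · apply ContinuousOn.sub
        · exact fun x _ => (hGd x).continuousAt.continuousWithinAt
        · intro x hx
          exact ((Real.continuousAt_log (by have := hd1 x hx; linarith)).comp
            hdm'.continuous.continuousAt).continuousWithinAt
      · intro x hx
        rw [interior_Ici] at hx
        exact ((hGd x).sub (((Real.hasDerivAt_log
          (by have := hd1 x hx.le; linarith)).comp x (hdm' x).hasDerivAt))).differentiableAt
          |>.differentiableWithinAt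
      · intro x hx
        rw [interior_Ici] at hx
        have hne : deriv m x ≠ 0 := by have := hd1 x hx.le; linarith
        have hder : HasDerivAt (fun t => G t - Real.log (deriv m t))
            (x * |K x| - (deriv m x)⁻¹ * deriv (deriv m) x) x :=
          (hGd x).sub ((Real.hasDerivAt_log hne).comp x (hdm' x).hasDerivAt)
        rw [hder.deriv]
        have h1 : deriv (deriv m) x = |K x| * m x := by
          rw [hode x hx.le, abs_of_nonpos (hKneg x hx.le)]
        rw [h1]
        have h2 : (deriv m x)⁻¹ * (|K x| * m x) ≤ x * |K x| := by
          have hb : |K x| * m x ≤ |K x| * (x * deriv m x) :=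
            mul_le_mul_of_nonneg_left (hmle x hx.le) (abs_nonneg _)
          have hpos : (0:ℝ) < deriv m x := by have := hd1 x hx.le; linarith
          calc (deriv m x)⁻¹ * (|K x| * m x)
              ≤ (deriv m x)⁻¹ * (|K x| * (x * deriv m x)) :=
                mul_le_mul_of_nonneg_left hb (inv_nonneg.mpr hpos.le)
            _ = x * |K x| := by field_simp
        linarith
    have h00 : G 0 - Real.log (deriv m 0) = 0 := by
      simp [hG, intervalIntegral.integral_same, hm0']
    have hfin : G 0 - Real.log (deriv m 0) ≤ G t - Real.log (deriv m t) :=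
      hmono2 (le_refl (0:ℝ)) ht ht
    rw [h00] at hfin
    linarith
  -- G t ≤ C for t ≥ 0
  have hGC : ∀ t ≥ (0:ℝ), G t ≤ C := by
    intro t ht
    have : G t = ∫ x in Ioc (0:ℝ) t, x * |K x| := intervalIntegral.integral_of_le ht
    rw [this, hC]
    apply setIntegral_mono_set hKint
    · exact (ae_restrict_iff' measurableSet_Ici).2 (Filter.Eventually.of_forall
        (fun x hx => mul_nonneg hx (abs_nonneg _)))
    · exact Filter.Eventually.of_forall (fun x hx => le_of_lt hx.1)
  -- deriv m t ≤ exp C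
  have hmd_le : ∀ t ≥ (0:ℝ), deriv m t ≤ Real.exp C := by
    intro t ht
    have hpos : (0:ℝ) < deriv m t := by have := hd1 t ht; linarith
    rw [← Real.exp_log hpos]
    exact Real.exp_le_exp.mpr (le_trans (hlog t ht) (hGC t ht))
  -- conclude by comparison
  have hgint : IntegrableOn (fun t => Real.exp C * (t * |K t|)) (Ici 0) := hKint.const_mul _
  apply hgint.mono'
  · exact ((hKc.abs.mul hm.continuous)).aestronglyMeasurable.restrict
  · rw [ae_restrict_iff' measurableSet_Ici]
    apply Filter.Eventually.of_forall
    intro t ht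
    have h1 : 0 ≤ |K t| * m t := mul_nonneg (abs_nonneg _) (hm_nonneg t ht)
    rw [Real.norm_eq_abs, abs_of_nonneg h1]
    calc |K t| * m t ≤ |K t| * (t * Real.exp C) := by
          apply mul_le_mul_of_nonneg_left _ (abs_nonneg _)
          calc m t ≤ t * deriv m t := hmle t ht
            _ ≤ t * Real.exp C := mul_le_mul_of_nonneg_left (hmd_le t ht) ht
      _ = Real.exp C * (t * |K t|) := by ring
end

section
/- Let f solve f'' + G f = 0 on [0,∞) with f(0) = 0, f'(0) = 1 and f > 0 on (0,∞), such that the surface (ℝ², dt² + f²dθ²) has finite total curvature c < 2π. Then lim_{t→∞} f(t)/t = lim_{t→∞} f'(t) = (2π − c)/(2π) > 0, and in particular there exists α > 0 with f(t)/t > 1/α on (0,∞), and ∫_1^∞ f(t)^(−2) dt < ∞. -/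
open MeasureTheory Set Filter Real

theorem stmt10 (G f : ℝ → ℝ) (c : ℝ)
    (hGc : Continuous G) (hf : ContDiff ℝ 2 f)
    (hfode : ∀ t ≥ (0:ℝ), deriv (deriv f) t + G t * f t = 0)
    (hf0 : f 0 = 0) (hf0' : deriv f 0 = 1)
    (hfpos : ∀ t > (0:ℝ), 0 < f t)
    (hint : IntegrableOn (fun t => |G t| * f t) (Ici (0:ℝ)))
    (hc : c = 2 * π * ∫ t in Ici (0:ℝ), G t * f t)
    (hc2 : c < 2 * π) :
    Tendsto (fun t => f t / t) atTop (nhds ((2 * π - c) / (2 * π))) ∧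
    Tendsto (deriv f) atTop (nhds ((2 * π - c) / (2 * π))) ∧
    0 < (2 * π - c) / (2 * π) ∧
    (∃ α > (0:ℝ), ∀ t > (0:ℝ), f t / t > 1 / α) ∧
    IntegrableOn (fun t => ((f t) ^ 2)⁻¹) (Ici (1:ℝ)) := by
  have pi_pos := Real.pi_pos
  set L : ℝ := (2 * π - c) / (2 * π) with hL
  have hLpos : 0 < L := div_pos (by linarith) (by linarith)
  -- basic regularity
  have hf1 : Differentiable ℝ f := hf.differentiable (by norm_num)
  have hfc : Continuous f := hf1.continuous
  have hf'diff : Differentiable ℝ (deriv f) := by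
    have h2 : ContDiff ℝ (1 + 1) f := by norm_num; exact hf
    exact (contDiff_succ_iff_deriv.mp h2).2.2.differentiable (by norm_num)
  -- f nonneg on Ici 0
  have hfnn : ∀ t ∈ Ici (0:ℝ), 0 ≤ f t := by
    intro t ht
    rcases eq_or_lt_of_le (mem_Ici.mp ht) with h | h
    · simp [← h, hf0]
    · exact (hfpos t h).le
  -- integrability of G*f
  have hGfint : IntegrableOn (fun t => G t * f t) (Ici (0:ℝ)) := by
    refine hint.mono' ((hGc.mul hfc).aestronglyMeasurable.restrict) ?_
    filter_upwards [ae_restrict_mem measurableSet_Ici] with t ht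
    rw [Real.norm_eq_abs, abs_mul, abs_of_nonneg (hfnn t ht)]
  -- formula for deriv f
  have hderiv : ∀ t ≥ (0:ℝ), deriv f t = 1 - ∫ s in (0:ℝ)..t, G s * f s := by
    intro t ht
    have key : ∫ s in (0:ℝ)..t, -(G s * f s) = deriv f t - deriv f 0 := by
      apply intervalIntegral.integral_eq_sub_of_hasDerivAt
      · intro x hx
        rw [uIcc_of_le ht] at hx
        have h1 : HasDerivAt (deriv f) (deriv (deriv f) x) x := (hf'diff x).hasDerivAt
        have h2 : deriv (deriv f) x = -(G x * f x) := by
          have := hfode x hx.1; linarith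
        rwa [h2] at h1
      · exact ((hGc.mul hfc).neg).intervalIntegrable _ _
    rw [intervalIntegral.integral_neg] at key
    rw [hf0'] at key
    linarith
  -- tendsto of deriv f
  have hIcieq : (∫ t in Ici (0:ℝ), G t * f t) = ∫ t in Ioi (0:ℝ), G t * f t :=
    integral_Ici_eq_integral_Ioi
  have hLeq : L = 1 - ∫ t in Ioi (0:ℝ), G t * f t := by
    rw [hL, hc, hIcieq]; field_simp
  have htendD : Tendsto (deriv f) atTop (nhds L) := by
    have h1 : Tendsto (fun t => ∫ s in (0:ℝ)..t, G s * f s) atTop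
        (nhds (∫ t in Ioi (0:ℝ), G t * f t)) :=
      intervalIntegral_tendsto_integral_Ioi 0 (hGfint.mono_set Ioi_subset_Ici_self) tendsto_id
    have h2 : Tendsto (fun t => 1 - ∫ s in (0:ℝ)..t, G s * f s) atTop (nhds L) := by
      rw [hLeq]; exact (tendsto_const_nhds.sub h1)
    refine h2.congr' ?_
    filter_upwards [eventually_ge_atTop (0:ℝ)] with t ht
    exact (hderiv t ht).symm
  -- tendsto of f t / t
  have htendQ : Tendsto (fun t => f t / t) atTop (nhds L) := by
    rw [Metric.tendsto_atTop]
    intro ε hε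
    rw [Metric.tendsto_atTop] at htendD
    obtain ⟨T₁, hT₁⟩ := htendD (ε/2) (by linarith)
    set T : ℝ := max T₁ 0 with hTdef
    have hT : ∀ n ≥ T, dist (deriv f n) L < ε/2 :=
      fun n hn => hT₁ n (le_trans (le_max_left _ _) hn)
    have hT0 : (0:ℝ) ≤ T := le_max_right _ _
    set C : ℝ := |f T - L * T| with hC
    refine ⟨max (max T 1) (2 * C / ε + 1), fun t ht => ?_⟩
    have htT : T ≤ t := le_trans (le_trans (le_max_left _ _) (le_max_left _ _)) ht
    have ht1 : (1:ℝ) ≤ t := le_trans (le_trans (le_max_right _ _) (le_max_left _ _)) ht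
    have ht0 : 0 < t := by linarith
    have htC : 2 * C / ε + 1 ≤ t := le_trans (le_max_right _ _) ht
    -- mean value bound on [T, t] for g = f - L * id
    have key : |(f t - L * t) - (f T - L * T)| ≤ ε/2 * |t - T| := by
      have hconv : Convex ℝ (Icc T t) := convex_Icc _ _
      have := hconv.norm_image_sub_le_of_norm_hasDerivWithin_le
        (f := fun x => f x - L * x) (f' := fun x => deriv f x - L) (C := ε/2)
        (fun x hx => (((hf1 x).hasDerivAt.sub ((hasDerivAt_id x).const_mul L)).hasDerivWithinAt).congr_deriv (by ring))
        (fun x hx => by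
          have := hT x hx.1
          rw [Real.dist_eq] at this
          rw [Real.norm_eq_abs]; linarith [abs_nonneg (deriv f x - L)])
        (left_mem_Icc.mpr htT) (right_mem_Icc.mpr htT)
      simpa [Real.norm_eq_abs] using this
    have habs : |f t - L * t| ≤ C + ε/2 * (t - T) := by
      have h1 := abs_sub_abs_le_abs_sub (f t - L * t) (f T - L * T)
      rw [abs_of_nonneg (by linarith : (0:ℝ) ≤ t - T)] at key
      calc |f t - L * t| ≤ |f T - L * T| + |(f t - L * t) - (f T - L * T)| := by
            have := abs_sub (f t - L * t) (f T - L * T); nlinarith [abs_add_le (f T - L * T) ((f t - L * t) - (f T - L * T))]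
        _ ≤ C + ε/2 * (t - T) := by rw [hC]; linarith
    rw [Real.dist_eq]
    have : f t / t - L = (f t - L * t) / t := by field_simp
    rw [this, abs_div, abs_of_pos ht0]
    rw [div_lt_iff₀ ht0]
    have hCt : C < ε/2 * t := by
      have hC0 : 0 ≤ C := abs_nonneg _
      have h' : 2 * C / ε ≤ t - 1 := by linarith
      have h'' : 2 * C ≤ (t - 1) * ε := (div_le_iff₀ hε).mp h'
      nlinarith
    have h3 : ε/2 * (t - T) ≤ ε/2 * t := by nlinarith
    have h4 : ε/2 * t + ε/2 * t = ε * t := by ring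
    linarith
  -- uniform lower bound for f t / t
  have hlow : ∃ m > (0:ℝ), ∀ t > (0:ℝ), m ≤ f t / t := by
    -- near 0
    have hd0 : HasDerivAt f 1 0 := by
      have := (hf1 0).hasDerivAt; rwa [hf0'] at this
    have hsl : Tendsto (fun t => f t / t) (nhdsWithin 0 (Ioi 0)) (nhds 1) := by
      have := hd0.tendsto_slope_zero_right
      simpa [slope_fun_def, hf0, div_eq_inv_mul] using this
    have h0 : ∀ᶠ t in nhdsWithin 0 (Ioi 0), (1:ℝ)/2 ≤ f t / t :=
      hsl.eventually (eventually_ge_nhds (by norm_num))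
    rw [eventually_nhdsWithin_iff, Metric.eventually_nhds_iff] at h0
    obtain ⟨δ, hδ0, hδ⟩ := h0
    -- near ∞
    have hinf : ∀ᶠ t in atTop, L/2 ≤ f t / t :=
      htendQ.eventually (eventually_ge_nhds (by linarith))
    obtain ⟨M, hM⟩ := hinf.exists_forall_of_atTop
    set M' : ℝ := max M (δ/2) with hM'
    have hδM : δ/2 ≤ M' := le_max_right _ _
    -- compact part
    have hcomp : IsCompact (Icc (δ/2) M') := isCompact_Icc
    have hne : (Icc (δ/2) M').Nonempty := ⟨δ/2, le_refl _, hδM⟩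
    have hcont : ContinuousOn (fun t => f t / t) (Icc (δ/2) M') := by
      apply ContinuousOn.div hfc.continuousOn continuousOn_id
      intro x hx; have : 0 < x := lt_of_lt_of_le (by linarith) hx.1
      exact ne_of_gt this
    obtain ⟨x0, hx0mem, hx0min⟩ := hcomp.exists_isMinOn hne hcont
    have hx0 : ∀ y ∈ Icc (δ/2) M', f x0 / x0 ≤ f y / y := fun y hy => hx0min hy
    have hx0pos : 0 < f x0 / x0 := by
      have hx0' : 0 < x0 := lt_of_lt_of_le (by linarith) hx0mem.1
      exact div_pos (hfpos x0 hx0') hx0'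
    refine ⟨min (min (1/2) (L/2)) (f x0 / x0), by positivity, fun t ht => ?_⟩
    rcases lt_or_ge t (δ/2) with h | h
    · have : dist t 0 < δ := by
        rw [Real.dist_eq, sub_zero, abs_of_pos ht]; linarith
      have := hδ this ht
      exact le_trans (le_trans (min_le_left _ _) (min_le_left _ _)) this
    rcases le_or_gt t M' with h2 | h2
    · exact le_trans (min_le_right _ _) (hx0 t ⟨h, h2⟩)
    · have : M ≤ t := le_trans (le_max_left _ _) h2.le
      exact le_trans (le_trans (min_le_left _ _) (min_le_right _ _)) (hM t this)
  obtain ⟨m, hm0, hm⟩ := hlow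
  refine ⟨htendQ, htendD, hLpos, ⟨2/m, by positivity, fun t ht => ?_⟩, ?_⟩
  · have := hm t ht
    rw [gt_iff_lt]
    calc 1 / (2/m) = m/2 := by field_simp
      _ < m := by linarith
      _ ≤ f t / t := this
  · -- integrability of (f t^2)⁻¹ on Ici 1
    have hbound : ∀ t ∈ Ici (1:ℝ), ((f t)^2)⁻¹ ≤ (m^2)⁻¹ * (t^2)⁻¹ := by
      intro t ht
      have ht0 : (0:ℝ) < t := lt_of_lt_of_le one_pos ht
      have h1 : m * t ≤ f t := by
        have := hm t ht0
        rw [le_div_iff₀ ht0] at this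
        linarith
      have hmt : 0 < m * t := by positivity
      have h2 : (m*t)^2 ≤ (f t)^2 := by nlinarith
      rw [← mul_inv]
      have : (m^2 * t^2) = (m*t)^2 := by ring
      rw [this]
      exact inv_anti₀ (by positivity) h2
    have hint2 : IntegrableOn (fun t => (m^2)⁻¹ * (t^2)⁻¹) (Ici (1:ℝ)) := by
      rw [integrableOn_Ici_iff_integrableOn_Ioi]
      apply Integrable.const_mul
      have := integrableOn_Ioi_rpow_of_lt (a := (-2:ℝ)) (by norm_num) (c := (1:ℝ)) one_pos
      refine this.congr_fun (fun x hx => ?_) measurableSet_Ioi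
      have hx0 : (0:ℝ) < x := lt_trans one_pos hx
      beta_reduce
      rw [Real.rpow_neg hx0.le, ← Real.rpow_natCast x 2]
      norm_num
    refine hint2.mono' ?_ ?_
    · exact ((hfc.pow 2).measurable.inv.aestronglyMeasurable.restrict)
    · filter_upwards [ae_restrict_mem measurableSet_Ici] with t ht
      rw [Real.norm_eq_abs, abs_of_nonneg (by positivity)]
      exact hbound t ht
end

section
/- (Model Lemma II) Let f solve f'' + G f = 0 with f(0) = 0, f'(0) = 1, f > 0 on (0,∞), and suppose the model surface (ℝ², dt² + f²dθ²) has finite total curvature c < 2π (i.e. ∫_0^∞ |G| f dt < ∞ and 2π∫_0^∞ G f dt = c < 2π). Let G₋ := min{G, 0}. Then ∫_0^∞ t·G₋(t) dt > −∞, and consequently the solution m of m'' + G₋ m = 0 with m(0) = 0, m'(0) = 1 defines a model surface of finite total curvature. -/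
open MeasureTheory Set Real Filter Topology

lemma ftc_ode (h p : ℝ → ℝ) (hh : ContDiff ℝ 2 h)
    (ode : ∀ t ≥ (0:ℝ), deriv (deriv h) t + p t * h t = 0) :
    ∀ t ≥ (0:ℝ), deriv h t = deriv h 0 - ∫ s in (0:ℝ)..t, p s * h s := by
  have hd1 : ContDiff ℝ 1 (deriv h) := by
    have := (contDiff_succ_iff_deriv (n := 1)).mp (by exact_mod_cast hh)
    exact this.2.2
  have hcont2 : Continuous (deriv (deriv h)) := hd1.continuous_deriv le_rfl
  intro t ht
  have key : ∫ s in (0:ℝ)..t, deriv (deriv h) s = deriv h t - deriv h 0 :=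
    intervalIntegral.integral_deriv_eq_sub (fun x _ => (hd1.differentiable one_ne_zero).differentiableAt)
      (hcont2.intervalIntegrable 0 t)
  have congr1 : ∫ s in (0:ℝ)..t, deriv (deriv h) s = ∫ s in (0:ℝ)..t, -(p s * h s) := by
    apply intervalIntegral.integral_congr
    intro s hs
    rw [uIcc_of_le ht] at hs
    have := ode s hs.1
    simp only []
    linarith
  rw [congr1, intervalIntegral.integral_neg] at key
  linarith

lemma near_zero (f : ℝ → ℝ) (hdiff : DifferentiableAt ℝ f 0) (hf0 : f 0 = 0) (hf0' : deriv f 0 = 1) :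
    ∃ r > (0:ℝ), ∀ t ∈ Ioo (0:ℝ) r, t / 2 ≤ f t := by
  have hd : HasDerivAt f 1 0 := by rw [← hf0']; exact hdiff.hasDerivAt
  have hs := hasDerivAt_iff_tendsto_slope.mp hd
  have hs' : Tendsto (slope f 0) (𝓝[>] 0) (𝓝 1) :=
    hs.mono_left (nhdsWithin_mono _ (fun x hx => ne_of_gt hx))
  have hev : ∀ᶠ t in 𝓝[>] (0:ℝ), (1/2 : ℝ) < slope f 0 t :=
    hs'.eventually (eventually_gt_nhds (by norm_num))
  rw [eventually_nhdsWithin_iff] at hev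
  obtain ⟨r, hr, hrsub⟩ := Metric.eventually_nhds_iff_ball.mp hev
  refine ⟨r, hr, fun t ht => ?_⟩
  have h1 : (1/2:ℝ) < slope f 0 t := by
    apply hrsub t _ ht.1
    rw [Metric.mem_ball, Real.dist_eq, sub_zero, abs_of_pos ht.1]
    exact ht.2
  rw [slope_def_field, hf0, sub_zero, sub_zero] at h1
  have ht0 : (0:ℝ) < t := ht.1
  rw [div_lt_div_iff₀ (by norm_num) ht0] at h1
  linarith

lemma lin_lower (G f : ℝ → ℝ)
    (hGc : Continuous G) (hf : ContDiff ℝ 2 f)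
    (hfode : ∀ t ≥ (0:ℝ), deriv (deriv f) t + G t * f t = 0)
    (hf0 : f 0 = 0) (hf0' : deriv f 0 = 1)
    (hfpos : ∀ t > (0:ℝ), 0 < f t)
    (hint : IntegrableOn (fun t => |G t| * f t) (Ici (0:ℝ)))
    (hI : (∫ t in Ici (0:ℝ), G t * f t) < 1) :
    ∃ α > (0:ℝ), ∀ t ≥ (0:ℝ), α * t ≤ f t := by
  set I : ℝ := ∫ t in Ici (0:ℝ), G t * f t with hIdef
  set δ : ℝ := 1 - I with hδdef
  have hδ : 0 < δ := by simp [hδdef]; linarith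
  -- integrability of G f on Ici 0
  have hintGf : IntegrableOn (fun t => G t * f t) (Ici (0:ℝ)) := by
    apply hint.mono' ((hGc.mul (hf.continuous)).aestronglyMeasurable.restrict)
    filter_upwards [ae_restrict_mem measurableSet_Ici] with t ht
    have hft : 0 ≤ f t := by
      rcases eq_or_lt_of_le (mem_Ici.mp ht) with h | h
      · rw [← h, hf0]
      · exact (hfpos t h).le
    rw [Real.norm_eq_abs, Pi.mul_apply, abs_mul, abs_of_nonneg hft]
  -- deriv f tends to δ
  have hftc := ftc_ode f G hf hfode
  have htend : Tendsto (fun t => ∫ s in (0:ℝ)..t, G s * f s) atTop (𝓝 I) := by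
    rw [hIdef, MeasureTheory.integral_Ici_eq_integral_Ioi]
    exact MeasureTheory.intervalIntegral_tendsto_integral_Ioi 0 (hintGf.mono_set Ioi_subset_Ici_self) tendsto_id
  have htendf' : Tendsto (deriv f) atTop (𝓝 δ) := by
    have : Tendsto (fun t => 1 - ∫ s in (0:ℝ)..t, G s * f s) atTop (𝓝 (1 - I)) :=
      (tendsto_const_nhds.sub htend)
    apply this.congr'
    filter_upwards [eventually_ge_atTop (0:ℝ)] with t ht
    rw [hftc t ht, hf0']
  -- eventually deriv f ≥ δ/2
  have hev : ∀ᶠ t in atTop, δ/2 ≤ deriv f t :=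
    htendf'.eventually (eventually_ge_nhds (by linarith))
  obtain ⟨T₀, hT₀⟩ := hev.exists_forall_of_atTop
  set T : ℝ := max T₀ 1 with hTdef
  have hT1 : (1:ℝ) ≤ T := le_max_right _ _
  have hTpos : (0:ℝ) < T := by linarith
  have hT : ∀ t ≥ T, δ/2 ≤ deriv f t := fun t ht => hT₀ t (le_trans (le_max_left _ _) ht)
  -- on [T, ∞): f t ≥ f T + δ/2 (t - T)
  have hfdiff : Differentiable ℝ f := hf.differentiable (by norm_num)
  have hmono : MonotoneOn (fun t => f t - δ/2 * t) (Ici T) := by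
    apply monotoneOn_of_deriv_nonneg (convex_Ici T)
      ((hf.continuous.sub (continuous_const.mul continuous_id)).continuousOn)
      (fun t ht => DifferentiableAt.differentiableWithinAt (by fun_prop))
    intro t ht
    rw [interior_Ici] at ht
    have hd2 : HasDerivAt (fun t => f t - δ/2 * t) (deriv f t - δ/2) t := by
      have := (hfdiff t).hasDerivAt.sub ((hasDerivAt_id' t).const_mul (δ/2))
      rwa [mul_one] at this
    rw [show (f - (fun x => δ / 2) * id) = (fun t => f t - δ/2 * t) from rfl, hd2.deriv]
    have := hT t ht.le
    linarith
  -- near 0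
  obtain ⟨r, hr, hnear⟩ := near_zero f (hfdiff 0) hf0 hf0'
  set r' : ℝ := min (r/2) 1 with hr'def
  have hr' : 0 < r' := by positivity
  have hr'le : r' ≤ 1 := min_le_right _ _
  have hr'lt : r' < r := lt_of_le_of_lt (min_le_left _ _) (by linarith)
  -- min on [r', 2T]
  have hr'2T : r' ≤ 2 * T := by linarith
  obtain ⟨x₀, hx₀mem, hx₀min⟩ := (isCompact_Icc (a := r') (b := 2*T)).exists_isMinOn
    (nonempty_Icc.mpr hr'2T) (hf.continuous.continuousOn)
  have hm : 0 < f x₀ := hfpos x₀ (lt_of_lt_of_le hr' hx₀mem.1)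
  set β : ℝ := min (1/2) (f x₀ / (2*T)) with hβdef
  have hβ : 0 < β := lt_min (by norm_num) (by positivity)
  set α : ℝ := min β (δ/4) with hαdef
  have hα : 0 < α := lt_min hβ (by linarith)
  refine ⟨α, hα, fun t ht => ?_⟩
  rcases eq_or_lt_of_le ht with h0 | ht0
  · simp [← h0, hf0]
  rcases lt_or_ge t r' with hcase | hcase
  · -- t ∈ (0, r'): f t ≥ t/2 ≥ α t
    have := hnear t ⟨ht0, lt_trans hcase hr'lt⟩
    have hαle : α ≤ 1/2 := le_trans (min_le_left _ _) (min_le_left _ _)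
    nlinarith
  rcases le_or_gt t (2*T) with hcase2 | hcase2
  · -- t ∈ [r', 2T]: f t ≥ f x₀ ≥ (f x₀/(2T)) t
    have hle := hx₀min ⟨hcase, hcase2⟩
    have hαle : α ≤ f x₀ / (2*T) := le_trans (min_le_left _ _) (min_le_right _ _)
    have h2T : (0:ℝ) < 2*T := by linarith
    have : α * t ≤ (f x₀ / (2*T)) * (2*T) :=
      mul_le_mul hαle hcase2 ht (by positivity)
    rw [div_mul_cancel₀ _ (ne_of_gt h2T)] at this
    have hle' : f x₀ ≤ f t := hle
    linarith
  · -- t > 2T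
    have h1 := hmono (self_mem_Ici) (mem_Ici.mpr (by linarith : T ≤ t)) (by linarith)
    have h2 : 0 < f T := hfpos T hTpos
    have hαle : α ≤ δ/4 := min_le_right _ _
    simp only [] at h1
    nlinarith
lemma mprime_ge_one (q m : ℝ → ℝ) (hq : Continuous q) (hqle : ∀ t, q t ≤ 0)
    (hm : ContDiff ℝ 2 m) (ode : ∀ t ≥ (0:ℝ), deriv (deriv m) t + q t * m t = 0)
    (hm0 : m 0 = 0) (hm0' : deriv m 0 = 1) : ∀ b ≥ (0:ℝ), 1 ≤ deriv m b := by
  have hd1 : ContDiff ℝ 1 (deriv m) := by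
    have := (contDiff_succ_iff_deriv (n := 1)).mp (by exact_mod_cast hm)
    exact this.2.2
  have hm'c : Continuous (deriv m) := hd1.continuous
  have hm'diff : Differentiable ℝ (deriv m) := hd1.differentiable one_ne_zero
  have hmdiff : Differentiable ℝ m := hm.differentiable (by norm_num)
  intro b hb
  set S : Set ℝ := {t ∈ Icc 0 b | ∀ s ∈ Icc 0 t, 1 ≤ deriv m s} with hSdef
  have h0S : 0 ∈ S := by
    refine ⟨⟨le_rfl, hb⟩, fun s hs => ?_⟩
    have : s = 0 := le_antisymm hs.2 hs.1
    rw [this, hm0']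
  have hbdd : BddAbove S := ⟨b, fun x hx => hx.1.2⟩
  have hne : S.Nonempty := ⟨0, h0S⟩
  set t₁ : ℝ := sSup S with ht₁def
  have ht₁0 : 0 ≤ t₁ := le_csSup hbdd h0S
  have ht₁b : t₁ ≤ b := csSup_le hne (fun x hx => hx.1.2)
  have hS : ∀ s, 0 ≤ s → s < t₁ → 1 ≤ deriv m s := by
    intro s hs0 hst
    obtain ⟨u, huS, hsu⟩ := exists_lt_of_lt_csSup hne hst
    exact huS.2 s ⟨hs0, hsu.le⟩
  have h1 : 1 ≤ deriv m t₁ := by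
    rcases eq_or_lt_of_le ht₁0 with h | h
    · rw [← h, hm0']
    · have hnb : (𝓝[<] t₁).NeBot := nhdsLT_neBot t₁
      apply ge_of_tendsto (hm'c.continuousAt.continuousWithinAt.tendsto (s := Iio t₁))
      filter_upwards [Ioo_mem_nhdsLT_of_mem (⟨h, le_rfl⟩ : t₁ ∈ Ioc 0 t₁)] with s hs
      exact hS s hs.1.le hs.2
  have ht₁S : t₁ ∈ S := by
    refine ⟨⟨ht₁0, ht₁b⟩, fun s hs => ?_⟩
    rcases eq_or_lt_of_le hs.2 with h | h
    · rw [h]; exact h1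
    · exact hS s hs.1 h
  -- now show t₁ = b
  rcases eq_or_lt_of_le ht₁b with heq | hlt
  · exact ht₁S.2 b ⟨hb, heq.ge⟩
  · exfalso
    -- continuity gives ε
    have hcont : ContinuousAt (deriv m) t₁ := hm'c.continuousAt
    have hev : ∀ᶠ s in 𝓝 t₁, (1/2:ℝ) < deriv m s :=
      continuousAt_const.eventually_lt hcont (by linarith)
    obtain ⟨ε', hε', hball⟩ := Metric.eventually_nhds_iff_ball.mp hev
    set ε : ℝ := min (ε'/2) (b - t₁) with hεdef
    have hε : 0 < ε := lt_min (by linarith) (by linarith)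
    set t₂ : ℝ := t₁ + ε with ht₂def
    have ht₂b : t₂ ≤ b := by
      have : ε ≤ b - t₁ := min_le_right _ _
      simp [ht₂def]; linarith
    have ht₂1 : t₁ < t₂ := by simp [ht₂def]; linarith
    -- deriv m ≥ 0 on [0, t₂]
    have hm'nonneg : ∀ s ∈ Icc (0:ℝ) t₂, 0 ≤ deriv m s := by
      intro s hs
      rcases le_or_gt s t₁ with h | h
      · linarith [ht₁S.2 s ⟨hs.1, h⟩]
      · have : (1/2:ℝ) < deriv m s := by
          apply hball
          rw [Metric.mem_ball, Real.dist_eq, abs_lt]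
          constructor
          · linarith
          · have h1 : s ≤ t₁ + ε := hs.2
            have h2 : ε ≤ ε'/2 := min_le_left _ _
            linarith
        linarith
    -- m monotone on [0,t₂] hence m ≥ 0 there
    have hmmono : MonotoneOn m (Icc 0 t₂) :=
      monotoneOn_of_deriv_nonneg (convex_Icc _ _) hm.continuous.continuousOn
        (fun s hs => (hmdiff s).differentiableWithinAt)
        (fun s hs => hm'nonneg s (interior_subset hs))
    have hmnonneg : ∀ s ∈ Icc (0:ℝ) t₂, 0 ≤ m s := by
      intro s hs
      have := hmmono ⟨le_rfl, by linarith [hs.1, hs.2]⟩ hs hs.1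
      rwa [hm0] at this
    -- deriv m monotone on [0, t₂]
    have hm'mono : MonotoneOn (deriv m) (Icc 0 t₂) := by
      apply monotoneOn_of_deriv_nonneg (convex_Icc _ _) hm'c.continuousOn
        (fun s hs => (hm'diff s).differentiableWithinAt)
      intro s hs
      rw [interior_Icc] at hs
      have hode := ode s hs.1.le
      have hq := hqle s
      have hmn := hmnonneg s ⟨hs.1.le, hs.2.le⟩
      nlinarith
    have ht₂S : t₂ ∈ S := by
      refine ⟨⟨by linarith, ht₂b⟩, fun s hs => ?_⟩
      have := hm'mono ⟨le_rfl, by linarith [hs.1, hs.2]⟩ hs hs.1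
      rwa [hm0'] at this
    have : t₂ ≤ t₁ := le_csSup hbdd ht₂S
    linarith
lemma gronwall_bound (q m : ℝ → ℝ) (hq : Continuous q) (hqle : ∀ t, q t ≤ 0)
    (hm : ContDiff ℝ 2 m) (ode : ∀ t ≥ (0:ℝ), deriv (deriv m) t + q t * m t = 0)
    (hm0 : m 0 = 0) (hm0' : deriv m 0 = 1)
    (hintg : IntegrableOn (fun t => t * -q t) (Ici (0:ℝ))) :
    ∀ t ≥ (0:ℝ), m t ≤ t * Real.exp (∫ s in Ici (0:ℝ), s * -q s) := by
  have hd1 : ContDiff ℝ 1 (deriv m) := by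
    have := (contDiff_succ_iff_deriv (n := 1)).mp (by exact_mod_cast hm)
    exact this.2.2
  have hm'c : Continuous (deriv m) := hd1.continuous
  have hm''c : Continuous (deriv (deriv m)) := hd1.continuous_deriv le_rfl
  have hm'diff : Differentiable ℝ (deriv m) := hd1.differentiable one_ne_zero
  have hmdiff : Differentiable ℝ m := hm.differentiable (by norm_num)
  have hge := mprime_ge_one q m hq hqle hm ode hm0 hm0'
  set C : ℝ := ∫ s in Ici (0:ℝ), s * -q s with hCdef
  -- m t ≥ t ≥ 0
  have hmt : ∀ t ≥ (0:ℝ), t ≤ m t := by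
    intro t ht
    have hmono : MonotoneOn (fun s => m s - s) (Ici (0:ℝ)) := by
      apply monotoneOn_of_deriv_nonneg (f := fun s => m s - s) (convex_Ici _)
        ((hm.continuous.sub continuous_id).continuousOn)
        (fun s _ => DifferentiableAt.differentiableWithinAt (by fun_prop))
      intro s hs
      have hds : HasDerivAt (fun s => m s - s) (deriv m s - 1) s :=
        (hmdiff s).hasDerivAt.sub (hasDerivAt_id s)
      rw [hds.deriv]
      rw [interior_Ici] at hs
      linarith [hge s hs.le]
    have := hmono self_mem_Ici (mem_Ici.mpr ht) ht
    simp only [hm0] at this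
    linarith
  -- m t ≤ t * deriv m t
  have hkey : ∀ t ≥ (0:ℝ), m t ≤ t * deriv m t := by
    intro t ht
    have hmono : MonotoneOn (fun s => s * deriv m s - m s) (Ici (0:ℝ)) := by
      apply monotoneOn_of_deriv_nonneg (f := fun s => s * deriv m s - m s) (convex_Ici _)
        (((continuous_id.mul hm'c).sub hm.continuous).continuousOn)
        (fun s _ => DifferentiableAt.differentiableWithinAt
          ((differentiableAt_id.mul (hm'diff s)).sub (hmdiff s)))
      intro s hs
      rw [interior_Ici] at hs
      have hds : HasDerivAt (fun s => s * deriv m s - m s)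
          (1 * deriv m s + s * deriv (deriv m) s - deriv m s) s :=
        ((hasDerivAt_id s).mul (hm'diff s).hasDerivAt).sub (hmdiff s).hasDerivAt
      rw [hds.deriv]
      have hode := ode s hs.le
      have hqs := hqle s
      have hms : 0 ≤ m s := le_trans hs.le (hmt s hs.le)
      have hspos : (0:ℝ) < s := hs
      have h1 : deriv (deriv m) s = -q s * m s := by linarith
      have h2 : 0 ≤ s * deriv (deriv m) s := by
        rw [h1]; exact mul_nonneg hspos.le (by nlinarith)
      linarith
    have h := hmono self_mem_Ici (mem_Ici.mpr ht) ht
    have h' : 0 * deriv m 0 - m 0 ≤ t * deriv m t - m t := h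
    rw [hm0] at h'
    linarith
  -- the integral A
  set g : ℝ → ℝ := fun s => s * -q s with hgdef
  have hgc : Continuous g := by fun_prop
  set A : ℝ → ℝ := fun t => ∫ s in (0:ℝ)..t, g s with hAdef
  have hA : ∀ t, HasDerivAt A (g t) t := fun t => (hgc.integral_hasStrictDerivAt 0 t).hasDerivAt
  -- w = m' * exp(-A) antitone
  have hw : ∀ t ≥ (0:ℝ), deriv m t * Real.exp (-(A t)) ≤ 1 := by
    intro t ht
    have hmono : AntitoneOn (fun s => deriv m s * Real.exp (-(A s))) (Ici (0:ℝ)) := by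
      apply antitoneOn_of_deriv_nonpos (convex_Ici _)
      · apply Continuous.continuousOn
        have hAc : Continuous A := continuous_iff_continuousAt.mpr (fun t => (hA t).continuousAt)
        exact hm'c.mul ((continuous_neg.comp hAc).rexp)
      · intro s _
        exact (((hm'diff s).mul (((hA s).neg.exp).differentiableAt))).differentiableWithinAt
      · intro s hs
        rw [interior_Ici] at hs
        have hds : HasDerivAt (fun s => deriv m s * Real.exp (-(A s)))
            (deriv (deriv m) s * Real.exp (-(A s)) + deriv m s * (Real.exp (-(A s)) * -(g s))) s :=
          (hm'diff s).hasDerivAt.mul ((hA s).neg.exp)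
        rw [hds.deriv]
        have hode := ode s hs.le
        have hqs := hqle s
        have hk := hkey s hs.le
        have hg0 : 0 ≤ -q s := by linarith
        have hexp : 0 < Real.exp (-(A s)) := Real.exp_pos _
        -- deriv(deriv m) s = -q s * m s ≤ -q s * (s * deriv m s) = g s * deriv m s
        have h2 : deriv (deriv m) s ≤ g s * deriv m s := by
          have : deriv (deriv m) s = -q s * m s := by linarith
          rw [this, hgdef]
          calc -q s * m s ≤ -q s * (s * deriv m s) := by
                apply mul_le_mul_of_nonneg_left hk hg0
            _ = s * -q s * deriv m s := by ring
        nlinarith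
    have h := hmono self_mem_Ici (mem_Ici.mpr ht) ht
    have h' : deriv m t * Real.exp (-(A t)) ≤ deriv m 0 * Real.exp (-(A 0)) := h
    have hA0 : A 0 = 0 := intervalIntegral.integral_same
    rw [hA0, hm0'] at h'
    simpa using h'
  -- A t ≤ C
  have hAC : ∀ t ≥ (0:ℝ), A t ≤ C := by
    intro t ht
    have h1 : A t = ∫ s in Ioc (0:ℝ) t, g s := intervalIntegral.integral_of_le ht
    have h2 : C = ∫ s in Ioi (0:ℝ), g s := MeasureTheory.integral_Ici_eq_integral_Ioi
    rw [h1, h2]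
    apply setIntegral_mono_set (hintg.mono_set Ioi_subset_Ici_self)
    · filter_upwards [ae_restrict_mem measurableSet_Ioi] with s hs
      have h1 : (0:ℝ) < s := hs
      have h2 := hqle s
      show (0:ℝ) ≤ g s
      simp only [hgdef]
      nlinarith
    · exact HasSubset.Subset.eventuallyLE Ioc_subset_Ioi_self
  -- combine
  intro t ht
  calc m t ≤ t * deriv m t := hkey t ht
    _ ≤ t * Real.exp (A t) := by
        apply mul_le_mul_of_nonneg_left _ ht
        have := hw t ht
        rw [Real.exp_neg, ← div_eq_mul_inv, div_le_one (Real.exp_pos _)] at this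
        exact this
    _ ≤ t * Real.exp C := by
        apply mul_le_mul_of_nonneg_left (Real.exp_le_exp.mpr (hAC t ht)) ht

theorem stmt11 (G f : ℝ → ℝ) (c : ℝ)
    (hGc : Continuous G) (hf : ContDiff ℝ 2 f)
    (hfode : ∀ t ≥ (0:ℝ), deriv (deriv f) t + G t * f t = 0)
    (hf0 : f 0 = 0) (hf0' : deriv f 0 = 1)
    (hfpos : ∀ t > (0:ℝ), 0 < f t)
    (hint : IntegrableOn (fun t => |G t| * f t) (Ici (0:ℝ)))
    (hc : c = 2 * π * ∫ t in Ici (0:ℝ), G t * f t)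
    (hc2 : c < 2 * π) :
    IntegrableOn (fun t => t * min (G t) 0) (Ici (0:ℝ)) ∧
    ∀ m : ℝ → ℝ, ContDiff ℝ 2 m →
      (∀ t ≥ (0:ℝ), deriv (deriv m) t + min (G t) 0 * m t = 0) →
      m 0 = 0 → deriv m 0 = 1 →
      IntegrableOn (fun t => |min (G t) 0| * m t) (Ici (0:ℝ)) := by
  have hI : (∫ t in Ici (0:ℝ), G t * f t) < 1 := by
    nlinarith [pi_pos, hc, hc2]
  obtain ⟨α, hα, hαle⟩ := lin_lower G f hGc hf hfode hf0 hf0' hfpos hint hI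
  have part1 : IntegrableOn (fun t => t * min (G t) 0) (Ici (0:ℝ)) := by
    apply Integrable.mono' (hint.const_mul (1/α))
      ((continuous_id.mul (hGc.min continuous_const)).aestronglyMeasurable.restrict)
    filter_upwards [ae_restrict_mem measurableSet_Ici] with t ht
    have ht0 : (0:ℝ) ≤ t := ht
    have hft : α * t ≤ f t := hαle t ht0
    have hft0 : 0 ≤ f t := le_trans (by positivity) hft
    have habs : |min (G t) 0| ≤ |G t| := by
      rcases le_or_gt (G t) 0 with h | h
      · rw [min_eq_left h]
      · rw [min_eq_right h.le]; simp [abs_nonneg]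
    have htle : t ≤ (1/α) * f t := by
      rw [div_mul_eq_mul_div, le_div_iff₀ hα, one_mul]
      linarith [hft]
    calc ‖t * min (G t) 0‖ = t * |min (G t) 0| := by
          rw [Real.norm_eq_abs, abs_mul, abs_of_nonneg ht0]
      _ ≤ ((1/α) * f t) * |G t| := by
          apply mul_le_mul htle habs (abs_nonneg _) (by positivity)
      _ = (1/α) * (|G t| * f t) := by ring
  refine ⟨part1, fun m hm hmode hm0 hm0' => ?_⟩
  set q : ℝ → ℝ := fun t => min (G t) 0 with hqdef
  have hq : Continuous q := hGc.min continuous_const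
  have hqle : ∀ t, q t ≤ 0 := fun t => min_le_right _ _
  have hintg : IntegrableOn (fun t => t * -q t) (Ici (0:ℝ)) := by
    have heq : (fun t => t * -q t) = fun t => -(t * min (G t) 0) := by
      funext t; ring
    rw [heq]
    exact part1.neg
  have hge := mprime_ge_one q m hq hqle hm hmode hm0 hm0'
  have hbound := gronwall_bound q m hq hqle hm hmode hm0 hm0' hintg
  set C : ℝ := ∫ s in Ici (0:ℝ), s * -q s with hCdef
  -- m nonneg on Ici 0
  have hmdiff : Differentiable ℝ m := hm.differentiable (by norm_num)
  have hmnonneg : ∀ t ≥ (0:ℝ), 0 ≤ m t := by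
    intro t ht
    have hmono : MonotoneOn m (Ici (0:ℝ)) := by
      apply monotoneOn_of_deriv_nonneg (convex_Ici _) hm.continuous.continuousOn
        (fun s _ => (hmdiff s).differentiableWithinAt)
      intro s hs
      rw [interior_Ici] at hs
      linarith [hge s hs.le]
    have := hmono self_mem_Ici (mem_Ici.mpr ht) ht
    rwa [hm0] at this
  -- final domination
  apply Integrable.mono' ((hintg.const_mul (Real.exp C)))
    (((hq.abs).mul hm.continuous).aestronglyMeasurable.restrict)
  filter_upwards [ae_restrict_mem measurableSet_Ici] with t ht
  have ht0 : (0:ℝ) ≤ t := ht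
  have hmn := hmnonneg t ht0
  have hmb := hbound t ht0
  have hqt := hqle t
  have habs : |q t| = -q t := abs_of_nonpos hqt
  calc ‖|q t| * m t‖ = |q t| * m t := by
        rw [Real.norm_eq_abs, abs_mul, abs_abs, abs_of_nonneg hmn]
    _ ≤ |q t| * (t * Real.exp C) := mul_le_mul_of_nonneg_left hmb (abs_nonneg _)
    _ = Real.exp C * (t * -q t) := by rw [habs]; ring
end
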